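/- arXiv:1702.07297 — 6 statements merged into one kernel-verified Lean document; each statement's English description precedes it below -/
import Mathlib

section
/- Consider any (K,N,Q,T)-scheme. For integers s ≥ 1 and d ≥ 1, let a_{s,d} denote the number of pairs (q,n) ∈ Fin Q × Fin N such that exactly s servers map file n (i.e., |{k : n ∈ M k}| = s) and exactly d servers need the intermediate value (q,n) (i.e., |{k : q ∈ W k and n ∉ M k}| = d). Then the total number of communicated bits satisfies ∑_{k=1}^{K} ℓ k ≥ T · ∑_{s=1}^{K} ∑_{d=1}^{K−s} a_{s,d} · d/(s+d−1); equivalently, the communication load satisfies L ≥ (1/(Q·N)) · ∑_{s=1}^{K} ∑_{d=1}^{K−s} a_{s,d} · d/(s+d−1). -/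
/-- A (K,N,Q,T)-scheme: K servers, N input files, Q output functions,
T-bit intermediate values.  `M k` is the set of files mapped by server `k`,
`W k` the set of functions reduced by server `k`, `len k` the length (in bits)
of server `k`'s message; `enc` produces the message of each server from its
locally computed intermediate values, and `dec` recovers, for each server `k`
and each `q ∈ W k`, the full row of intermediate values of function `q`
from all messages and the local values, correctly for every realization `v`. -/
structure Scheme (K N Q T : ℕ) where
  M : Fin K → Finset (Fin N)
  W : Fin K → Finset (Fin Q)
  cover : ∀ n : Fin N, ∃ k : Fin K, n ∈ M k
  len : Fin K → ℕ
  enc : (k : Fin K) → (Fin Q → {n : Fin N // n ∈ M k} → (Fin T → Bool)) →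
    (Fin (len k) → Bool)
  dec : (k : Fin K) → (q : Fin Q) → q ∈ W k →
    ((j : Fin K) → (Fin (len j) → Bool)) →
    (Fin Q → {n : Fin N // n ∈ M k} → (Fin T → Bool)) →
    (Fin N → Fin T → Bool)
  correct : ∀ (v : Fin Q × Fin N → Fin T → Bool) (k : Fin K) (q : Fin Q) (hq : q ∈ W k),
    dec k q hq (fun j => enc j (fun q' n => v (q', n.1))) (fun q' n => v (q', n.1)) =
      fun n => v (q, n)

/-- Peak computation load `p = (max_k |M k|)/N`. -/
noncomputable def peakLoad {K N Q T : ℕ} (S : Scheme K N Q T) : ℝ :=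
  ((Finset.univ.sup (fun k : Fin K => (S.M k).card) : ℕ) : ℝ) / N

/-- Communication load `L = (∑_k ℓ k)/(Q·N·T)`. -/
noncomputable def commLoad {K N Q T : ℕ} (S : Scheme K N Q T) : ℝ :=
  (∑ k : Fin K, (S.len k : ℝ)) / ((Q : ℝ) * N * T)

/-- Singleton Reduce assignment: the `W k` are pairwise disjoint, cover `Fin Q`,
and each server reduces at most one function. -/
def SingletonReduce {K N Q T : ℕ} (S : Scheme K N Q T) : Prop :=
  (∀ j k : Fin K, j ≠ k → Disjoint (S.W j) (S.W k)) ∧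
  (∀ q : Fin Q, ∃ k : Fin K, q ∈ S.W k) ∧
  (∀ k : Fin K, (S.W k).card ≤ 1)

set_option linter.unusedSectionVars false

namespace CDCAux
open Finset

variable {Ω : Type} [Fintype Ω] [Nonempty Ω]

open scoped Classical in
noncomputable def fib {α : Type} (Y : Ω → α) (ω : Ω) : ℕ :=
  (Finset.univ.filter (fun ω' => Y ω' = Y ω)).card

noncomputable def ent {α : Type} (Y : Ω → α) : ℝ :=
  (∑ ω : Ω, Real.log ((Fintype.card Ω : ℝ) / (fib Y ω : ℝ))) / (Fintype.card Ω : ℝ)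

/-- pairing combinator -/
def p2 {α β : Type} (Y : Ω → α) (Z : Ω → β) : Ω → α × β := fun ω => (Y ω, Z ω)

lemma fib_pos {α} (Y : Ω → α) (ω : Ω) : 0 < fib Y ω := by
  classical
  exact Finset.card_pos.mpr ⟨ω, Finset.mem_filter.mpr ⟨Finset.mem_univ _, rfl⟩⟩

lemma fib_le_card {α} (Y : Ω → α) (ω : Ω) : fib Y ω ≤ Fintype.card Ω := by
  classical
  unfold fib
  simpa [Finset.card_univ] using Finset.card_filter_le (Finset.univ : Finset Ω)
    (fun ω' => Y ω' = Y ω)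

lemma card_Ω_pos : 0 < (Fintype.card Ω : ℝ) := by
  exact_mod_cast Fintype.card_pos

lemma fib_congr {α β} {Y : Ω → α} {Z : Ω → β}
    (h : ∀ ω₁ ω₂ : Ω, Y ω₁ = Y ω₂ ↔ Z ω₁ = Z ω₂) (ω : Ω) : fib Y ω = fib Z ω := by
  classical
  unfold fib
  congr 1
  apply Finset.filter_congr
  intro ω' _
  exact h ω' ω

lemma ent_congr {α β} {Y : Ω → α} {Z : Ω → β}
    (h : ∀ ω₁ ω₂ : Ω, Y ω₁ = Y ω₂ ↔ Z ω₁ = Z ω₂) : ent Y = ent Z := by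
  unfold ent
  congr 1
  apply Finset.sum_congr rfl
  intro ω _
  rw [fib_congr h]

lemma ent_nonneg {α} (Y : Ω → α) : 0 ≤ ent Y := by
  apply div_nonneg _ (le_of_lt card_Ω_pos)
  apply Finset.sum_nonneg
  intro ω _
  apply Real.log_nonneg
  rw [le_div_iff₀ (by exact_mod_cast fib_pos Y ω)]
  simpa using (by exact_mod_cast fib_le_card Y ω : (fib Y ω : ℝ) ≤ Fintype.card Ω)

/-- If `Y` is a function of `Z`, then `ent Y ≤ ent Z`. -/
lemma ent_mono {α β} {Y : Ω → α} {Z : Ω → β}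
    (h : ∀ ω₁ ω₂ : Ω, Z ω₁ = Z ω₂ → Y ω₁ = Y ω₂) : ent Y ≤ ent Z := by
  classical
  have hfib : ∀ ω : Ω, fib Z ω ≤ fib Y ω := by
    intro ω
    unfold fib
    apply Finset.card_le_card
    intro ω' hω'
    simp only [Finset.mem_filter, Finset.mem_univ, true_and] at hω' ⊢
    exact h _ _ hω'
  unfold ent
  refine div_le_div_of_nonneg_right ?_ card_Ω_pos.le
  apply Finset.sum_le_sum
  intro ω _
  have h1 : (0:ℝ) < fib Y ω := by exact_mod_cast fib_pos Y ω
  have h2 : (0:ℝ) < fib Z ω := by exact_mod_cast fib_pos Z ω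
  apply Real.log_le_log (by positivity)
  apply div_le_div_of_nonneg_left card_Ω_pos.le h2
  exact_mod_cast hfib ω


lemma sum_inv_fib_le {α : Type} [Fintype α] (Y : Ω → α) :
    ∑ ω : Ω, ((fib Y ω : ℝ))⁻¹ ≤ (Fintype.card α : ℝ) := by
  classical
  have key : ∑ y ∈ Finset.univ.image Y, ∑ ω ∈ Finset.univ.filter (fun ω => Y ω = y),
      ((fib Y ω : ℝ))⁻¹ = ∑ ω : Ω, ((fib Y ω : ℝ))⁻¹ := by
    apply Finset.sum_fiberwise_of_maps_to
    intro ω _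
    exact Finset.mem_image_of_mem Y (Finset.mem_univ ω)
  rw [← key]
  have h1 : ∀ y ∈ Finset.univ.image Y, ∑ ω ∈ Finset.univ.filter (fun ω => Y ω = y),
      ((fib Y ω : ℝ))⁻¹ = 1 := by
    intro y hy
    obtain ⟨ω₀, -, rfl⟩ := Finset.mem_image.mp hy
    have hfib : ∀ ω ∈ Finset.univ.filter (fun ω => Y ω = Y ω₀), fib Y ω = fib Y ω₀ := by
      intro ω hω
      have hYω : Y ω = Y ω₀ := (Finset.mem_filter.mp hω).2
      unfold fib
      congr 1
      apply Finset.filter_congr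
      intro ω' _
      rw [hYω]
    rw [Finset.sum_congr rfl (fun ω hω => by rw [hfib ω hω])]
    rw [Finset.sum_const]
    have : (Finset.univ.filter (fun ω => Y ω = Y ω₀)).card = fib Y ω₀ := rfl
    rw [this, nsmul_eq_mul, mul_inv_cancel₀]
    exact_mod_cast (fib_pos Y ω₀).ne'
  rw [Finset.sum_congr rfl h1, Finset.sum_const, nsmul_eq_mul, mul_one]
  exact_mod_cast Finset.card_le_univ (Finset.univ.image Y) |>.trans (le_of_eq (Finset.card_univ))

lemma ent_le_log {α : Type} [Fintype α] (Y : Ω → α) :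
    ent Y ≤ Real.log (Fintype.card α) := by
  classical
  have hα : 0 < (Fintype.card α : ℝ) := by
    have : Nonempty α := ⟨Y (Classical.arbitrary Ω)⟩
    exact_mod_cast Fintype.card_pos
  have hn : 0 < (Fintype.card Ω : ℝ) := card_Ω_pos
  rw [ent, div_le_iff₀ hn]
  have key : ∀ ω : Ω, Real.log ((Fintype.card Ω : ℝ) / (fib Y ω : ℝ))
      ≤ Real.log (Fintype.card α) + ((Fintype.card Ω : ℝ) / (Fintype.card α : ℝ) * ((fib Y ω : ℝ))⁻¹ - 1) := by
    intro ω
    have h2 : (0:ℝ) < fib Y ω := by exact_mod_cast fib_pos Y ω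
    have hx : (0:ℝ) < (Fintype.card Ω : ℝ) / ((fib Y ω : ℝ) * (Fintype.card α : ℝ)) := by positivity
    have := Real.log_le_sub_one_of_pos hx
    have heq : Real.log ((Fintype.card Ω : ℝ) / ((fib Y ω : ℝ) * (Fintype.card α : ℝ)))
        = Real.log ((Fintype.card Ω : ℝ) / (fib Y ω : ℝ)) - Real.log (Fintype.card α) := by
      rw [Real.log_div (by positivity) (by positivity), Real.log_mul (by positivity) (by positivity),
        Real.log_div (by positivity) (by positivity)]
      ring
    rw [heq] at this
    have harith : (Fintype.card Ω : ℝ) / ((fib Y ω : ℝ) * (Fintype.card α : ℝ))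
        = (Fintype.card Ω : ℝ) / (Fintype.card α : ℝ) * ((fib Y ω : ℝ))⁻¹ := by
      field_simp
    rw [harith] at this
    linarith
  calc ∑ ω : Ω, Real.log ((Fintype.card Ω : ℝ) / (fib Y ω : ℝ))
      ≤ ∑ ω : Ω, (Real.log (Fintype.card α) + ((Fintype.card Ω : ℝ) / (Fintype.card α : ℝ) * ((fib Y ω : ℝ))⁻¹ - 1)) :=
        Finset.sum_le_sum (fun ω _ => key ω)
    _ = (Fintype.card Ω : ℝ) * Real.log (Fintype.card α)
        + ((Fintype.card Ω : ℝ) / (Fintype.card α : ℝ) * (∑ ω : Ω, ((fib Y ω : ℝ))⁻¹) - (Fintype.card Ω : ℝ)) := by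
        rw [Finset.sum_add_distrib, Finset.sum_const, Finset.sum_sub_distrib, Finset.sum_const,
          ← Finset.mul_sum]
        simp only [Finset.card_univ, nsmul_eq_mul, mul_one]
        try ring
    _ ≤ (Fintype.card Ω : ℝ) * Real.log (Fintype.card α) := by
        have := sum_inv_fib_le Y
        have h3 : (Fintype.card Ω : ℝ) / (Fintype.card α : ℝ) * (∑ ω : Ω, ((fib Y ω : ℝ))⁻¹)
            ≤ (Fintype.card Ω : ℝ) / (Fintype.card α : ℝ) * (Fintype.card α : ℝ) := by
          apply mul_le_mul_of_nonneg_left this (by positivity)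
        rw [div_mul_cancel₀] at h3
        · linarith
        · exact hα.ne'
    _ = Real.log (Fintype.card α) * (Fintype.card Ω : ℝ) := by ring


lemma fib_eq_of_val {α} (Y : Ω → α) {ω ω' : Ω} (h : Y ω = Y ω') : fib Y ω = fib Y ω' := by
  classical
  unfold fib
  congr 1
  apply Finset.filter_congr
  intro ω'' _
  rw [h]

open scoped Classical in
lemma fib_eq_card_filter {α} (Y : Ω → α) (ω : Ω) (p : Ω → Prop) [inst : DecidablePred p]
    (h : ∀ ω', Y ω' = Y ω ↔ p ω') : fib Y ω = (Finset.univ.filter p).card := by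
  unfold fib
  exact congrArg Finset.card (Finset.ext (fun ω' => by simp [h ω']))

open scoped Classical in
lemma fib_eq_sum_ite {α} (Y : Ω → α) (ω : Ω) :
    (fib Y ω : ℝ) = ∑ ω₁ : Ω, if Y ω₁ = Y ω then (1:ℝ) else 0 := by
  rw [Finset.sum_boole]
  norm_num [fib]

open scoped Classical in
lemma main_count {α β γ : Type} (Y : Ω → α) (W : Ω → β) (Z : Ω → γ) :
    ∑ ω : Ω, ((fib (p2 Y Z) ω : ℝ) * (fib (p2 W Z) ω : ℝ))
      / ((fib (p2 Y (p2 W Z)) ω : ℝ) * (fib Z ω : ℝ)) ≤ (Fintype.card Ω : ℝ) := by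
  have expand : ∀ ω : Ω, ((fib (p2 Y Z) ω : ℝ) * (fib (p2 W Z) ω : ℝ))
      / ((fib (p2 Y (p2 W Z)) ω : ℝ) * (fib Z ω : ℝ))
      = ∑ ω₁ : Ω, ∑ ω₂ : Ω,
        (if (Y ω₁ = Y ω ∧ Z ω₁ = Z ω) ∧ (W ω₂ = W ω ∧ Z ω₂ = Z ω) then
          ((fib (p2 Y (p2 W Z)) ω : ℝ) * (fib Z ω : ℝ))⁻¹ else 0) := by
    intro ω
    have ha : (fib (p2 Y Z) ω : ℝ) = ∑ ω₁ : Ω, if Y ω₁ = Y ω ∧ Z ω₁ = Z ω then (1:ℝ) else 0 := by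
      rw [fib_eq_sum_ite (p2 Y Z) ω]
      apply Finset.sum_congr rfl
      intro ω₁ _
      simp [p2, Prod.ext_iff]
    have hb : (fib (p2 W Z) ω : ℝ) = ∑ ω₂ : Ω, if W ω₂ = W ω ∧ Z ω₂ = Z ω then (1:ℝ) else 0 := by
      rw [fib_eq_sum_ite (p2 W Z) ω]
      apply Finset.sum_congr rfl
      intro ω₂ _
      simp [p2, Prod.ext_iff]
    rw [div_eq_mul_inv, ha, hb, Finset.sum_mul_sum]
    rw [Finset.sum_mul]
    apply Finset.sum_congr rfl
    intro ω₁ _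
    rw [Finset.sum_mul]
    apply Finset.sum_congr rfl
    intro ω₂ _
    by_cases h1 : Y ω₁ = Y ω ∧ Z ω₁ = Z ω <;> by_cases h2 : W ω₂ = W ω ∧ Z ω₂ = Z ω <;>
      simp [h1, h2]
  rw [Finset.sum_congr rfl (fun ω _ => expand ω)]
  rw [Finset.sum_comm]
  have swap2 : ∀ ω₁ : Ω, ∑ ω : Ω, ∑ ω₂ : Ω,
      (if (Y ω₁ = Y ω ∧ Z ω₁ = Z ω) ∧ (W ω₂ = W ω ∧ Z ω₂ = Z ω) then
        ((fib (p2 Y (p2 W Z)) ω : ℝ) * (fib Z ω : ℝ))⁻¹ else 0)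
      = ∑ ω₂ : Ω, ∑ ω : Ω,
      (if (Y ω₁ = Y ω ∧ Z ω₁ = Z ω) ∧ (W ω₂ = W ω ∧ Z ω₂ = Z ω) then
        ((fib (p2 Y (p2 W Z)) ω : ℝ) * (fib Z ω : ℝ))⁻¹ else 0) := fun ω₁ => Finset.sum_comm
  rw [Finset.sum_congr rfl (fun ω₁ _ => swap2 ω₁)]
  have inner : ∀ ω₁ ω₂ : Ω, ∑ ω : Ω,
      (if (Y ω₁ = Y ω ∧ Z ω₁ = Z ω) ∧ (W ω₂ = W ω ∧ Z ω₂ = Z ω) then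
        ((fib (p2 Y (p2 W Z)) ω : ℝ) * (fib Z ω : ℝ))⁻¹ else 0)
      ≤ if Z ω₂ = Z ω₁ then ((fib Z ω₁ : ℝ))⁻¹ else 0 := by
    intro ω₁ ω₂
    by_cases hz : Z ω₂ = Z ω₁
    · rw [if_pos hz]
      set B := Finset.univ.filter
        (fun ω => (Y ω₁ = Y ω ∧ Z ω₁ = Z ω) ∧ (W ω₂ = W ω ∧ Z ω₂ = Z ω)) with hB
      rw [← Finset.sum_filter]
      have hval : ∀ ω ∈ B, ((fib (p2 Y (p2 W Z)) ω : ℝ) * (fib Z ω : ℝ))⁻¹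
          = ((B.card : ℝ) * (fib Z ω₁ : ℝ))⁻¹ := by
        intro ω hω
        rw [hB, Finset.mem_filter] at hω
        obtain ⟨-, ⟨hY, hZ⟩, hW, -⟩ := hω
        have hd : fib Z ω = fib Z ω₁ := fib_eq_of_val Z (by rw [← hZ])
        have hc : fib (p2 Y (p2 W Z)) ω = B.card := by
          rw [hB]
          apply fib_eq_card_filter
          intro ω'
          simp only [p2, Prod.ext_iff, hB]
          constructor
          · rintro ⟨e1, e2, e3⟩
            exact ⟨⟨hY.trans e1.symm |>.symm ▸ (hY.trans e1.symm).symm, by rw [e3, ← hZ]⟩,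
              ⟨by rw [e2, ← hW], by rw [e3, ← hZ, ← hz]⟩⟩
          · rintro ⟨⟨e1, e2⟩, e3, -⟩
            exact ⟨by rw [← e1, hY], by rw [← e3, hW], by rw [← e2, hZ]⟩
        rw [hc, hd]
      rw [Finset.sum_congr rfl hval, Finset.sum_const, nsmul_eq_mul]
      rcases Nat.eq_zero_or_pos B.card with h0 | hpos
      · have hfz0 : (0:ℝ) ≤ ((fib Z ω₁ : ℝ))⁻¹ := by positivity
        rw [h0]
        simpa using hfz0
      · have hBc : (0:ℝ) < B.card := by exact_mod_cast hpos
        have hfz : (0:ℝ) < fib Z ω₁ := by exact_mod_cast fib_pos Z ω₁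
        rw [mul_inv, ← mul_assoc, mul_inv_cancel₀ hBc.ne']
        simp
    · rw [if_neg hz]
      apply le_of_eq
      apply Finset.sum_eq_zero
      intro ω _
      rw [if_neg]
      rintro ⟨⟨-, hZ1⟩, -, hZ2⟩
      exact hz (hZ2.trans hZ1.symm)
  calc ∑ ω₁ : Ω, ∑ ω₂ : Ω, ∑ ω : Ω,
      (if (Y ω₁ = Y ω ∧ Z ω₁ = Z ω) ∧ (W ω₂ = W ω ∧ Z ω₂ = Z ω) then
        ((fib (p2 Y (p2 W Z)) ω : ℝ) * (fib Z ω : ℝ))⁻¹ else 0)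
      ≤ ∑ ω₁ : Ω, ∑ ω₂ : Ω, (if Z ω₂ = Z ω₁ then ((fib Z ω₁ : ℝ))⁻¹ else 0) := by
        apply Finset.sum_le_sum
        intro ω₁ _
        exact Finset.sum_le_sum (fun ω₂ _ => inner ω₁ ω₂)
    _ = ∑ ω₁ : Ω, (1:ℝ) := by
        apply Finset.sum_congr rfl
        intro ω₁ _
        rw [← Finset.sum_filter, Finset.sum_const, nsmul_eq_mul]
        have hcard : (Finset.univ.filter (fun ω₂ => Z ω₂ = Z ω₁)).card = fib Z ω₁ :=
          (fib_eq_card_filter Z ω₁ _ (fun ω' => Iff.rfl)).symm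
        rw [hcard, mul_inv_cancel₀]
        exact_mod_cast (fib_pos Z ω₁).ne'
    _ = (Fintype.card Ω : ℝ) := by simp [Finset.card_univ]


lemma ent_submod {α β γ : Type} (Y : Ω → α) (W : Ω → β) (Z : Ω → γ) :
    ent (p2 Y (p2 W Z)) + ent Z ≤ ent (p2 Y Z) + ent (p2 W Z) := by
  have hn : (0:ℝ) < (Fintype.card Ω : ℝ) := card_Ω_pos
  unfold ent
  rw [← add_div, ← add_div, div_le_div_iff_of_pos_right hn,
    ← Finset.sum_add_distrib, ← Finset.sum_add_distrib]
  set n := (Fintype.card Ω : ℝ) with hn'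
  have pointwise : ∀ ω : Ω,
      1 - ((fib (p2 Y Z) ω : ℝ) * (fib (p2 W Z) ω : ℝ))
        / ((fib (p2 Y (p2 W Z)) ω : ℝ) * (fib Z ω : ℝ))
      ≤ (Real.log (n / (fib (p2 Y Z) ω : ℝ)) + Real.log (n / (fib (p2 W Z) ω : ℝ)))
        - (Real.log (n / (fib (p2 Y (p2 W Z)) ω : ℝ)) + Real.log (n / (fib Z ω : ℝ))) := by
    intro ω
    have pa : (0:ℝ) < (fib (p2 Y Z) ω : ℝ) := by exact_mod_cast fib_pos _ ω
    have pb : (0:ℝ) < (fib (p2 W Z) ω : ℝ) := by exact_mod_cast fib_pos _ ω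
    have pc : (0:ℝ) < (fib (p2 Y (p2 W Z)) ω : ℝ) := by exact_mod_cast fib_pos _ ω
    have pd : (0:ℝ) < (fib Z ω : ℝ) := by exact_mod_cast fib_pos _ ω
    have hrhs : (Real.log (n / (fib (p2 Y Z) ω : ℝ)) + Real.log (n / (fib (p2 W Z) ω : ℝ)))
        - (Real.log (n / (fib (p2 Y (p2 W Z)) ω : ℝ)) + Real.log (n / (fib Z ω : ℝ)))
        = - Real.log (((fib (p2 Y Z) ω : ℝ) * (fib (p2 W Z) ω : ℝ))
            / ((fib (p2 Y (p2 W Z)) ω : ℝ) * (fib Z ω : ℝ))) := by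
      rw [Real.log_div hn.ne' pa.ne', Real.log_div hn.ne' pb.ne', Real.log_div hn.ne' pc.ne',
        Real.log_div hn.ne' pd.ne', Real.log_div (by positivity) (by positivity),
        Real.log_mul pa.ne' pb.ne', Real.log_mul pc.ne' pd.ne']
      ring
    rw [hrhs]
    have hlog := Real.log_le_sub_one_of_pos (show (0:ℝ) <
      ((fib (p2 Y Z) ω : ℝ) * (fib (p2 W Z) ω : ℝ))
        / ((fib (p2 Y (p2 W Z)) ω : ℝ) * (fib Z ω : ℝ)) by positivity)
    linarith
  have hsum := Finset.sum_le_sum (s := (Finset.univ : Finset Ω)) (fun ω _ => pointwise ω)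
  have hmc := main_count Y W Z
  have h1 : ∑ ω : Ω, (1 - ((fib (p2 Y Z) ω : ℝ) * (fib (p2 W Z) ω : ℝ))
      / ((fib (p2 Y (p2 W Z)) ω : ℝ) * (fib Z ω : ℝ)))
      = n - ∑ ω : Ω, ((fib (p2 Y Z) ω : ℝ) * (fib (p2 W Z) ω : ℝ))
      / ((fib (p2 Y (p2 W Z)) ω : ℝ) * (fib Z ω : ℝ)) := by
    rw [Finset.sum_sub_distrib, Finset.sum_const, Finset.card_univ, nsmul_eq_mul, mul_one]
  rw [h1] at hsum
  have h2 : ∑ ω : Ω, ((Real.log (n / (fib (p2 Y Z) ω : ℝ)) + Real.log (n / (fib (p2 W Z) ω : ℝ)))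
      - (Real.log (n / (fib (p2 Y (p2 W Z)) ω : ℝ)) + Real.log (n / (fib Z ω : ℝ))))
      = (∑ ω : Ω, (Real.log (n / (fib (p2 Y Z) ω : ℝ)) + Real.log (n / (fib (p2 W Z) ω : ℝ))))
      - ∑ ω : Ω, (Real.log (n / (fib (p2 Y (p2 W Z)) ω : ℝ)) + Real.log (n / (fib Z ω : ℝ))) := by
    rw [Finset.sum_sub_distrib]
  rw [h2] at hsum
  linarith

/-- Conditioning on more reduces conditional entropy. -/
lemma ent_cond_reduce {α β γ : Type} (Y : Ω → α) (W : Ω → β) (Z : Ω → γ) :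
    ent (p2 Y (p2 W Z)) - ent (p2 W Z) ≤ ent (p2 Y Z) - ent Z := by
  have := ent_submod Y W Z
  linarith


lemma ent_pair_of_mul {α β : Type} (Y : Ω → α) (W : Ω → β) (c : ℕ)
    (hc : ∀ ω : Ω, fib W ω = fib (p2 Y W) ω * c) :
    ent (p2 Y W) = Real.log c + ent W := by
  have hn : (0:ℝ) < (Fintype.card Ω : ℝ) := card_Ω_pos
  have hc0 : c ≠ 0 := by
    intro h
    have h1 := fib_pos W (Classical.arbitrary Ω)
    rw [hc, h, mul_zero] at h1
    exact absurd h1 (lt_irrefl 0)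
  have hcr : (0:ℝ) < c := by exact_mod_cast Nat.pos_of_ne_zero hc0
  have key : ∀ ω : Ω, Real.log ((Fintype.card Ω : ℝ) / (fib (p2 Y W) ω : ℝ))
      = Real.log c + Real.log ((Fintype.card Ω : ℝ) / (fib W ω : ℝ)) := by
    intro ω
    have hp : (0:ℝ) < (fib (p2 Y W) ω : ℝ) := by exact_mod_cast fib_pos _ ω
    rw [hc ω]
    push_cast
    rw [Real.log_div hn.ne' hp.ne', Real.log_div hn.ne' (by positivity),
      Real.log_mul hp.ne' hcr.ne']
    ring
  unfold ent
  rw [Finset.sum_congr rfl (fun ω _ => key ω), Finset.sum_add_distrib, Finset.sum_const,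
    Finset.card_univ, nsmul_eq_mul, add_div, mul_div_assoc]
  rw [div_eq_mul_inv (Real.log c), mul_comm (Real.log c), ← mul_assoc, mul_inv_cancel₀ hn.ne', one_mul]



section App

open Finset

variable {K N Q T : ℕ} (S : Scheme K N Q T)

/-- sample space: all possible realizations of intermediate values -/
abbrev OmT (Q N T : ℕ) : Type := (Fin Q × Fin N) → Fin T → Bool

def msg (k : Fin K) (ω : OmT Q N T) : Fin (S.len k) → Bool :=
  S.enc k (fun q' n => ω (q', n.1))

def Xs (𝒮 : Finset (Fin K)) (ω : OmT Q N T) : ∀ k : Fin K, Option (Fin (S.len k) → Bool) :=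
  fun k => if k ∈ 𝒮 then some (msg S k ω) else none

def VD (D : Finset (Fin Q × Fin N)) (ω : OmT Q N T) : (Fin Q × Fin N) → Fin T → Bool :=
  fun x => if x ∈ D then ω x else fun _ => false

def colsOf (k : Fin K) : Finset (Fin Q × Fin N) :=
  Finset.univ.filter (fun x => x.2 ∈ S.M k)

def cols (𝒮 : Finset (Fin K)) : Finset (Fin Q × Fin N) := 𝒮.biUnion (colsOf S)

def needsOf (k : Fin K) : Finset (Fin Q × Fin N) :=
  Finset.univ.filter (fun x => x.1 ∈ S.W k ∧ x.2 ∉ S.M k)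

def Af (x : Fin Q × Fin N) : Finset (Fin K) := Finset.univ.filter (fun k => x.2 ∈ S.M k)

def Bf (x : Fin Q × Fin N) : Finset (Fin K) :=
  Finset.univ.filter (fun k => x.1 ∈ S.W k ∧ x.2 ∉ S.M k)

noncomputable def cc (s b : ℕ) : ℝ := (b : ℝ) / ((s:ℝ) + (b:ℝ) - 1)

lemma cc_zero (s : ℕ) : cc s 0 = 0 := by simp [cc]

lemma cc_nonneg (s b : ℕ) : 0 ≤ cc s b := by
  rcases b with _ | b
  · simp [cc]
  · apply div_nonneg (by positivity)
    push_cast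
    have : (0:ℝ) ≤ (s:ℝ) := by positivity
    have : (0:ℝ) ≤ (b:ℝ) := by positivity
    linarith

lemma VD_eq_iff {D : Finset (Fin Q × Fin N)} {ω₁ ω₂ : OmT Q N T} :
    VD D ω₁ = VD D ω₂ ↔ ∀ x ∈ D, ω₁ x = ω₂ x := by
  constructor
  · intro h x hx
    have := congrFun h x
    simpa [VD, hx] using this
  · intro h
    funext x
    by_cases hx : x ∈ D
    · simpa [VD, hx] using h x hx
    · simp [VD, hx]

lemma msg_congr {k : Fin K} {ω₁ ω₂ : OmT Q N T}
    (h : ∀ x ∈ colsOf S k, ω₁ x = ω₂ x) : msg S k ω₁ = msg S k ω₂ := by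
  have harg : (fun (q' : Fin Q) (n : {n : Fin N // n ∈ S.M k}) => ω₁ (q', n.1))
      = (fun q' n => ω₂ (q', n.1)) := by
    funext q' n
    exact h (q', n.1) (by simp [colsOf, n.2])
  unfold msg
  rw [harg]

lemma Xs_eq_iff {𝒮 : Finset (Fin K)} {ω₁ ω₂ : OmT Q N T} :
    Xs S 𝒮 ω₁ = Xs S 𝒮 ω₂ ↔ ∀ k ∈ 𝒮, msg S k ω₁ = msg S k ω₂ := by
  constructor
  · intro h k hk
    have := congrFun h k
    simpa [Xs, hk] using this
  · intro h
    funext k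
    by_cases hk : k ∈ 𝒮
    · simpa [Xs, hk] using h k hk
    · simp [Xs, hk]

lemma decode {𝒮' : Finset (Fin K)} {C' : Finset (Fin Q × Fin N)} {k : Fin K}
    (hcols : ∀ j : Fin K, j ∉ 𝒮' → colsOf S j ⊆ C') (hk : colsOf S k ⊆ C')
    {x : Fin Q × Fin N} (hx : x ∈ needsOf S k) (ω₁ ω₂ : OmT Q N T)
    (hX : Xs S 𝒮' ω₁ = Xs S 𝒮' ω₂) (hV : VD C' ω₁ = VD C' ω₂) : ω₁ x = ω₂ x := by
  have hagree : ∀ y ∈ C', ω₁ y = ω₂ y := VD_eq_iff.mp hV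
  have hq : x.1 ∈ S.W k := by
    have := Finset.mem_filter.mp hx
    exact this.2.1
  have hmsgs : (fun j => S.enc j (fun q' n => ω₁ (q', n.1)))
      = (fun j => S.enc j (fun q' n => ω₂ (q', n.1))) := by
    funext j
    by_cases hj : j ∈ 𝒮'
    · exact (Xs_eq_iff S).mp hX j hj
    · exact msg_congr S (fun y hy => hagree y (hcols j hj hy))
  have hloc : (fun (q' : Fin Q) (n : {n : Fin N // n ∈ S.M k}) => ω₁ (q', n.1))
      = (fun q' n => ω₂ (q', n.1)) := by
    funext q' n
    exact hagree (q', n.1) (hk (by simp [colsOf, n.2]))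
  have h1 := S.correct ω₁ k x.1 hq
  have h2 := S.correct ω₂ k x.1 hq
  have e1 : (fun n => ω₁ (x.1, n)) = (fun n => ω₂ (x.1, n)) := by
    rw [← h1, ← h2, hmsgs, hloc]
  have := congrFun e1 x.2
  simpa using this

lemma fib_VD_mul {β : Type} (D : Finset (Fin Q × Fin N)) (Wf : OmT Q N T → β)
    (hW : ∀ ω₁ ω₂ : OmT Q N T, (∀ x, x ∉ D → ω₁ x = ω₂ x) → Wf ω₁ = Wf ω₂)
    (ω : OmT Q N T) :
    fib Wf ω = fib (p2 (VD D) Wf) ω * (2^T)^D.card := by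
  classical
  have hcardPi : Fintype.card (∀ _ : {x : Fin Q × Fin N // x ∈ D}, Fin T → Bool)
      = (2^T)^D.card := by
    rw [Fintype.card_pi]
    rw [Finset.prod_const]
    congr 1
    · congr 1
      rw [Fintype.card_fun]
      simp
    · simp [Fintype.card_coe]
  have hbij : (Finset.univ.filter (fun ω' : OmT Q N T => Wf ω' = Wf ω)).card
      = ((Finset.univ.filter (fun ω' : OmT Q N T => p2 (VD D) Wf ω' = p2 (VD D) Wf ω)) ×ˢ
        (Finset.univ : Finset (∀ _ : {x : Fin Q × Fin N // x ∈ D}, Fin T → Bool))).card := by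
    apply Finset.card_nbij'
      (i := fun ω' => ((fun x => if x ∈ D then ω x else ω' x : OmT Q N T),
        (fun x => ω' x.1 : ∀ _ : {x : Fin Q × Fin N // x ∈ D}, Fin T → Bool)))
      (j := fun pr => (fun x => if h : x ∈ D then pr.2 ⟨x, h⟩ else pr.1 x : OmT Q N T))
    · intro ω' hω'
      rw [Finset.mem_coe, Finset.mem_filter] at hω'
      rw [Finset.mem_coe, Finset.mem_product]
      refine ⟨Finset.mem_filter.mpr ⟨Finset.mem_univ _, ?_⟩, Finset.mem_univ _⟩
      have hVD : VD D (fun x => if x ∈ D then ω x else ω' x) = VD D ω := by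
        rw [VD_eq_iff]
        intro x hx
        simp [hx]
      have hWf : Wf (fun x => if x ∈ D then ω x else ω' x) = Wf ω := by
        rw [show Wf ω = Wf ω' from hω'.2.symm]
        apply hW
        intro x hx
        simp [hx]
      simp [p2, hVD, hWf]
    · intro pr hpr
      rw [Finset.mem_coe, Finset.mem_product, Finset.mem_filter] at hpr
      rw [Finset.mem_coe, Finset.mem_filter]
      refine ⟨Finset.mem_univ _, ?_⟩
      have h2 : Wf pr.1 = Wf ω := by
        have := hpr.1.2
        simp only [p2, Prod.mk.injEq] at this
        exact this.2
      rw [← h2]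
      apply hW
      intro x hx
      simp [hx]
    · intro ω' hω'
      funext x
      by_cases hx : x ∈ D
      · simp [hx]
      · simp [hx]
    · intro pr hpr
      rw [Finset.mem_coe, Finset.mem_product, Finset.mem_filter] at hpr
      have hVD : VD D pr.1 = VD D ω := by
        have := hpr.1.2
        simp only [p2, Prod.mk.injEq] at this
        exact this.1
      have hagree : ∀ x ∈ D, pr.1 x = ω x := VD_eq_iff.mp hVD
      ext : 1
      · funext x
        by_cases hx : x ∈ D
        · simp only [hx, if_pos, dif_pos]
          exact (hagree x hx).symm
        · simp [hx]
      · funext x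
        simp [x.2]
  rw [fib_eq_card_filter Wf ω _ (fun ω' => Iff.rfl),
    fib_eq_card_filter (p2 (VD D) Wf) ω _ (fun ω' => Iff.rfl), hbij,
    Finset.card_product, Finset.card_univ, hcardPi]

lemma p2_eq_iff {Ω α β : Type} {Y : Ω → α} {Z : Ω → β} {ω₁ ω₂ : Ω} :
    p2 Y Z ω₁ = p2 Y Z ω₂ ↔ (Y ω₁ = Y ω₂ ∧ Z ω₁ = Z ω₂) := by
  simp [p2, Prod.ext_iff]

lemma ent_VD_pair {D C : Finset (Fin Q × Fin N)} (hdis : ∀ x ∈ D, x ∉ C) :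
    ent (p2 (VD D) (VD C) : OmT Q N T → _)
      = ((T * D.card : ℕ) : ℝ) * Real.log 2 + ent (VD C : OmT Q N T → _) := by
  have hW : ∀ ω₁ ω₂ : OmT Q N T, (∀ x, x ∉ D → ω₁ x = ω₂ x) → VD C ω₁ = VD C ω₂ := by
    intro ω₁ ω₂ h
    rw [VD_eq_iff]
    intro x hx
    exact h x (fun hD => hdis x hD hx)
  rw [ent_pair_of_mul (VD D) (VD C) ((2^T)^D.card) (fib_VD_mul D (VD C) hW)]
  congr 1
  rw [← pow_mul, Nat.cast_pow, Real.log_pow]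
  push_cast
  ring

lemma subadd (𝒯 : Finset (Fin K)) {γ : Type} (Z : OmT Q N T → γ) :
    ent (p2 (Xs S 𝒯) Z) - ent Z ≤ ∑ k ∈ 𝒯, (ent (p2 (fun ω => msg S k ω) Z) - ent Z) := by
  classical
  induction 𝒯 using Finset.induction_on with
  | empty =>
    have : ent (p2 (Xs S ∅) Z) = ent Z := by
      apply ent_congr
      intro ω₁ ω₂
      rw [p2_eq_iff]
      have : Xs S ∅ ω₁ = Xs S ∅ ω₂ := by
        funext k
        simp [Xs]
      simp [this]
    simp [this]
  | insert k 𝒯 hk ih =>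
    have e1 : ent (p2 (Xs S (insert k 𝒯)) Z)
        = ent (p2 (Xs S 𝒯) (p2 (fun ω => msg S k ω) Z)) := by
      apply ent_congr
      intro ω₁ ω₂
      rw [p2_eq_iff, p2_eq_iff, p2_eq_iff, Xs_eq_iff, Xs_eq_iff]
      constructor
      · rintro ⟨h1, h2⟩
        exact ⟨fun j hj => h1 j (Finset.mem_insert_of_mem hj),
          h1 k (Finset.mem_insert_self k 𝒯), h2⟩
      · rintro ⟨h1, h2, h3⟩
        refine ⟨fun j hj => ?_, h3⟩
        rcases Finset.mem_insert.mp hj with rfl | hj'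
        · exact h2
        · exact h1 j hj'
    have e2 := ent_submod (Ω := OmT Q N T) (Xs S 𝒯) (fun ω => msg S k ω) Z
    rw [Finset.sum_insert hk]
    rw [e1]
    linarith

noncomputable def entC (𝒮 : Finset (Fin K)) (C : Finset (Fin Q × Fin N)) : ℝ :=
  ent (p2 (Xs S 𝒮) (VD C)) - ent (VD C : OmT Q N T → _)

def idx (𝒮 : Finset (Fin K)) (C : Finset (Fin Q × Fin N)) : Finset (Fin Q × Fin N) :=
  (Finset.univ \ C).filter (fun x => Af S x ⊆ 𝒮)

noncomputable def TSum (𝒮 : Finset (Fin K)) (C : Finset (Fin Q × Fin N)) : ℝ :=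
  ∑ x ∈ idx S 𝒮 C, cc (Af S x).card ((Bf S x ∩ 𝒮).card)

noncomputable def wgt (𝒮 : Finset (Fin K)) (k : Fin K) (x : Fin Q × Fin N) : ℝ :=
  if k ∈ Bf S x then 1 else if k ∈ Af S x then 0
    else cc (Af S x).card ((Bf S x ∩ 𝒮).card)

lemma entC_nonneg (𝒮 : Finset (Fin K)) (C : Finset (Fin Q × Fin N)) : 0 ≤ entC S 𝒮 C := by
  apply sub_nonneg.mpr
  apply ent_mono
  intro ω₁ ω₂ h
  exact (p2_eq_iff.mp h).2

lemma Af_nonempty (x : Fin Q × Fin N) : (Af S x).Nonempty := by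
  obtain ⟨k, hk⟩ := S.cover x.2
  exact ⟨k, by simp [Af, hk]⟩

lemma Af_Bf_disj {x : Fin Q × Fin N} {k : Fin K} (hA : k ∈ Af S x) (hB : k ∈ Bf S x) : False := by
  simp only [Af, Bf, Finset.mem_filter] at hA hB
  exact hB.2.2 hA.2

lemma TSum_small {𝒮 : Finset (Fin K)} (h𝒮 : 𝒮.card ≤ 1) (C : Finset (Fin Q × Fin N)) :
    TSum S 𝒮 C = 0 := by
  apply Finset.sum_eq_zero
  intro x hx
  have hsub : Af S x ⊆ 𝒮 := (Finset.mem_filter.mp hx).2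
  have h1 : 1 ≤ (Af S x).card := Finset.card_pos.mpr (Af_nonempty S x)
  have heq : Af S x = 𝒮 := Finset.eq_of_subset_of_card_le hsub (h𝒮.trans h1)
  have hB : Bf S x ∩ 𝒮 = ∅ := by
    rw [Finset.eq_empty_iff_forall_notMem]
    intro k hk
    rw [Finset.mem_inter] at hk
    exact Af_Bf_disj S (heq ▸ hk.2) hk.1
  rw [hB]
  simp [cc_zero]

lemma sum_w_ge {𝒮 : Finset (Fin K)} {C : Finset (Fin Q × Fin N)} {x : Fin Q × Fin N}
    (hx : x ∈ idx S 𝒮 C) :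
    ((𝒮.card : ℝ) - 1) * cc (Af S x).card ((Bf S x ∩ 𝒮).card) ≤ ∑ k ∈ 𝒮, wgt S 𝒮 k x := by
  classical
  have hsub : Af S x ⊆ 𝒮 := (Finset.mem_filter.mp hx).2
  have hs1 : 1 ≤ (Af S x).card := Finset.card_pos.mpr (Af_nonempty S x)
  set s := (Af S x).card with hs
  set b := (Bf S x ∩ 𝒮).card with hbdef
  have hAeq : (𝒮.filter (fun k => k ∉ Bf S x)).filter (fun k => k ∈ Af S x) = Af S x := by
    ext k
    simp only [Finset.mem_filter]
    constructor
    · rintro ⟨⟨-, -⟩, h⟩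
      exact h
    · intro h
      exact ⟨⟨hsub h, fun hB => Af_Bf_disj S h hB⟩, h⟩
  have hBeq : (𝒮.filter (fun k => k ∈ Bf S x)) = Bf S x ∩ 𝒮 := by
    rw [Finset.filter_mem_eq_inter, Finset.inter_comm]
  set e := ((𝒮.filter (fun k => k ∉ Bf S x)).filter (fun k => k ∉ Af S x)).card with he
  have hsum : ∑ k ∈ 𝒮, wgt S 𝒮 k x = (b : ℝ) + (e : ℝ) * cc s b := by
    unfold wgt
    rw [Finset.sum_ite, Finset.sum_const, Finset.sum_ite, Finset.sum_const,
      Finset.sum_const, hBeq]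
    simp only [nsmul_eq_mul, mul_one, mul_zero, zero_add]
    rfl
  have hcard1 : 𝒮.card = b + (𝒮.filter (fun k => k ∉ Bf S x)).card := by
    rw [← Finset.card_filter_add_card_filter_not (p := fun k => k ∈ Bf S x), hBeq]
  have hcard2 : (𝒮.filter (fun k => k ∉ Bf S x)).card = s + e := by
    rw [← Finset.card_filter_add_card_filter_not (p := fun k => k ∈ Af S x), hAeq]
  have hm' : 𝒮.card = b + (s + e) := by rw [hcard1, hcard2]
  rw [hsum, hm']
  rcases Nat.eq_zero_or_pos b with hb0 | hb1
  · rw [hb0]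
    simp [cc_zero]
  · have hb1' : (1:ℝ) ≤ (b:ℝ) := by exact_mod_cast hb1
    have hs1' : (1:ℝ) ≤ (s:ℝ) := by exact_mod_cast hs1
    have hden : (s:ℝ) + (b:ℝ) - 1 ≠ 0 := by linarith
    have hcc : cc s b * ((s:ℝ) + (b:ℝ) - 1) = (b:ℝ) := div_mul_cancel₀ _ hden
    push_cast
    nlinarith [hcc]

lemma claim_step {𝒮 : Finset (Fin K)} {C : Finset (Fin Q × Fin N)} (hC : cols S 𝒮ᶜ ⊆ C)
    {k : Fin K} (hk : k ∈ 𝒮)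
    (IH : ∀ C' : Finset (Fin Q × Fin N), cols S (𝒮.erase k)ᶜ ⊆ C' →
      (T:ℝ) * Real.log 2 * TSum S (𝒮.erase k) C' ≤ entC S (𝒮.erase k) C') :
    (T:ℝ) * Real.log 2 * (∑ x ∈ idx S 𝒮 C, wgt S 𝒮 k x)
      ≤ ent (p2 (Xs S (𝒮.erase k)) (p2 (fun ω => msg S k ω) (VD C)))
        - ent (p2 (fun ω => msg S k ω) (VD C)) := by
  classical
  set 𝒮' := 𝒮.erase k with h𝒮'
  set C' := C ∪ colsOf S k with hC'
  set Nk := needsOf S k \ C' with hNk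
  set C'' := C' ∪ Nk with hC''
  have hTl : (0:ℝ) ≤ (T:ℝ) * Real.log 2 :=
    mul_nonneg (by positivity) (Real.log_nonneg one_le_two)
  have hkC' : colsOf S k ⊆ C' := Finset.subset_union_right
  have hCC' : C ⊆ C' := Finset.subset_union_left
  have hcolssub : ∀ j : Fin K, j ∉ 𝒮' → colsOf S j ⊆ C' := by
    intro j hj y hy
    by_cases hjk : j = k
    · exact hkC' (hjk ▸ hy)
    · have hj𝒮 : j ∉ 𝒮 := fun h => hj (Finset.mem_erase.mpr ⟨hjk, h⟩)
      exact hCC' (hC (Finset.mem_biUnion.mpr ⟨j, Finset.mem_compl.mpr hj𝒮, hy⟩))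
  -- step (a): conditioning reduction
  have hiff1 : ∀ ω₁ ω₂ : OmT Q N T,
      (VD (colsOf S k) ω₁ = VD (colsOf S k) ω₂ ∧ (msg S k ω₁ = msg S k ω₂ ∧
        VD C ω₁ = VD C ω₂)) ↔ VD C' ω₁ = VD C' ω₂ := by
    intro ω₁ ω₂
    constructor
    · rintro ⟨h1, -, h3⟩
      rw [VD_eq_iff]
      intro x hx
      rcases Finset.mem_union.mp hx with hx | hx
      · exact VD_eq_iff.mp h3 x hx
      · exact VD_eq_iff.mp h1 x hx
    · intro h
      have hag := VD_eq_iff.mp h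
      exact ⟨VD_eq_iff.mpr (fun x hx => hag x (hkC' hx)),
        msg_congr S (fun x hx => hag x (hkC' hx)),
        VD_eq_iff.mpr (fun x hx => hag x (hCC' hx))⟩
  have eqA : ent (p2 (Xs S 𝒮') (p2 (VD (colsOf S k)) (p2 (fun ω => msg S k ω) (VD C))))
      = ent (p2 (Xs S 𝒮') (VD C')) := by
    apply ent_congr
    intro ω₁ ω₂
    simp only [p2_eq_iff]
    exact and_congr_right fun _ => hiff1 ω₁ ω₂
  have eqB : ent (p2 (VD (colsOf S k)) (p2 (fun ω => msg S k ω) (VD C)))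
      = ent (VD C' : OmT Q N T → _) := by
    apply ent_congr
    intro ω₁ ω₂
    simp only [p2_eq_iff]
    exact hiff1 ω₁ ω₂
  have ha : ent (p2 (Xs S 𝒮') (VD C')) - ent (VD C' : OmT Q N T → _)
      ≤ ent (p2 (Xs S 𝒮') (p2 (fun ω => msg S k ω) (VD C)))
        - ent (p2 (fun ω => msg S k ω) (VD C)) := by
    have h := ent_cond_reduce (Xs S 𝒮') (VD (colsOf S k)) (p2 (fun ω => msg S k ω) (VD C))
    rw [eqA, eqB] at h
    exact h
  -- step (b): extraction of decodable values
  have hNsub : Nk ⊆ needsOf S k := Finset.sdiff_subset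
  have eqC : ent (p2 (Xs S 𝒮') (VD C')) = ent (p2 (Xs S 𝒮') (p2 (VD Nk) (VD C'))) := by
    apply ent_congr
    intro ω₁ ω₂
    simp only [p2_eq_iff]
    constructor
    · rintro ⟨h1, h2⟩
      refine ⟨h1, ?_, h2⟩
      rw [VD_eq_iff]
      intro x hx
      exact decode S hcolssub hkC' (hNsub hx) ω₁ ω₂ h1 h2
    · rintro ⟨h1, -, h3⟩
      exact ⟨h1, h3⟩
  -- merge congruences
  have hiff2 : ∀ ω₁ ω₂ : OmT Q N T,
      (VD Nk ω₁ = VD Nk ω₂ ∧ VD C' ω₁ = VD C' ω₂) ↔ VD C'' ω₁ = VD C'' ω₂ := by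
    intro ω₁ ω₂
    constructor
    · rintro ⟨h1, h2⟩
      rw [VD_eq_iff]
      intro x hx
      rcases Finset.mem_union.mp hx with hx | hx
      · exact VD_eq_iff.mp h2 x hx
      · exact VD_eq_iff.mp h1 x hx
    · intro h
      have hag := VD_eq_iff.mp h
      exact ⟨VD_eq_iff.mpr (fun x hx => hag x (Finset.mem_union_right _ hx)),
        VD_eq_iff.mpr (fun x hx => hag x (Finset.mem_union_left _ hx))⟩
  have eqD : ent (p2 (Xs S 𝒮') (p2 (VD Nk) (VD C'))) = ent (p2 (Xs S 𝒮') (VD C'')) := by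
    apply ent_congr
    intro ω₁ ω₂
    simp only [p2_eq_iff]
    exact and_congr_right fun _ => hiff2 ω₁ ω₂
  have eqE : ent (p2 (VD Nk) (VD C') : OmT Q N T → _) = ent (VD C'' : OmT Q N T → _) := by
    apply ent_congr
    intro ω₁ ω₂
    simp only [p2_eq_iff]
    exact hiff2 ω₁ ω₂
  -- independence
  have hdisj : ∀ x ∈ Nk, x ∉ C' := fun x hx => (Finset.mem_sdiff.mp hx).2
  have hind : ent (p2 (VD Nk) (VD C') : OmT Q N T → _)
      = ((T * Nk.card : ℕ) : ℝ) * Real.log 2 + ent (VD C' : OmT Q N T → _) :=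
    ent_VD_pair hdisj
  -- IH
  have hcols'' : cols S 𝒮'ᶜ ⊆ C'' := by
    rw [h𝒮', Finset.compl_erase, cols, Finset.biUnion_insert]
    apply Finset.union_subset
    · exact hkC'.trans Finset.subset_union_left
    · intro y hy
      exact Finset.mem_union_left _ (hCC' (hC hy))
  have hIH := IH C'' hcols''
  -- counting
  have hWB : (((idx S 𝒮 C).filter (fun x => k ∈ Bf S x)).card : ℝ) ≤ (Nk.card : ℝ) := by
    have hsubB : (idx S 𝒮 C).filter (fun x => k ∈ Bf S x) ⊆ Nk := by
      intro x hx'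
      obtain ⟨hxidx, hxB⟩ := Finset.mem_filter.mp hx'
      have hxC : x ∉ C := (Finset.mem_sdiff.mp (Finset.mem_filter.mp hxidx).1).2
      have hxBf := Finset.mem_filter.mp hxB
      rw [Finset.mem_sdiff]
      constructor
      · simp only [needsOf, Finset.mem_filter, Finset.mem_univ, true_and]
        exact hxBf.2
      · intro hxC'
        rcases Finset.mem_union.mp hxC' with h | h
        · exact hxC h
        · exact hxBf.2.2 (Finset.mem_filter.mp h).2
    exact_mod_cast Finset.card_le_card hsubB
  have hWrest : ∑ x ∈ (idx S 𝒮 C).filter (fun x => ¬ k ∈ Bf S x ∧ ¬ k ∈ Af S x),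
      cc (Af S x).card ((Bf S x ∩ 𝒮).card) ≤ TSum S 𝒮' C'' := by
    have hrew : ∀ x ∈ (idx S 𝒮 C).filter (fun x => ¬ k ∈ Bf S x ∧ ¬ k ∈ Af S x),
        cc (Af S x).card ((Bf S x ∩ 𝒮).card) = cc (Af S x).card ((Bf S x ∩ 𝒮').card) := by
      intro x hx'
      obtain ⟨-, hnB, -⟩ := Finset.mem_filter.mp hx'
      have : Bf S x ∩ 𝒮' = Bf S x ∩ 𝒮 := by
        ext j
        simp only [h𝒮', Finset.mem_inter, Finset.mem_erase]
        constructor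
        · rintro ⟨hj1, -, hj3⟩
          exact ⟨hj1, hj3⟩
        · rintro ⟨hj1, hj2⟩
          exact ⟨hj1, fun hjk => hnB (hjk ▸ hj1), hj2⟩
      rw [this]
    rw [Finset.sum_congr rfl hrew]
    apply Finset.sum_le_sum_of_subset_of_nonneg
    · intro x hx'
      obtain ⟨hxidx, hnB, hnA⟩ := Finset.mem_filter.mp hx'
      obtain ⟨hxuniv, hAsub⟩ := Finset.mem_filter.mp hxidx
      have hxC : x ∉ C := (Finset.mem_sdiff.mp hxuniv).2
      rw [idx, Finset.mem_filter, Finset.mem_sdiff]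
      refine ⟨⟨Finset.mem_univ _, ?_⟩, ?_⟩
      · intro hxC''
        rcases Finset.mem_union.mp hxC'' with h | h
        · rcases Finset.mem_union.mp h with h' | h'
          · exact hxC h'
          · refine hnA ?_
            simp only [Af, Finset.mem_filter, Finset.mem_univ, true_and]
            exact (Finset.mem_filter.mp h').2
        · have hneed := hNsub h
          refine hnB ?_
          simp only [Bf, Finset.mem_filter, Finset.mem_univ, true_and]
          exact (Finset.mem_filter.mp hneed).2
      · rw [Finset.subset_erase]
        exact ⟨hAsub, hnA⟩
    · intro x _ _
      exact cc_nonneg _ _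
  have hsplitw : ∑ x ∈ idx S 𝒮 C, wgt S 𝒮 k x
      = (((idx S 𝒮 C).filter (fun x => k ∈ Bf S x)).card : ℝ)
        + ∑ x ∈ (idx S 𝒮 C).filter (fun x => ¬ k ∈ Bf S x ∧ ¬ k ∈ Af S x),
            cc (Af S x).card ((Bf S x ∩ 𝒮).card) := by
    unfold wgt
    rw [Finset.sum_ite, Finset.sum_const, Finset.sum_ite, Finset.sum_const]
    simp only [nsmul_eq_mul, mul_one, mul_zero, zero_add]
    congr 1
    rw [Finset.filter_filter]
  -- assemble
  have key1 : (T:ℝ) * Real.log 2 * (∑ x ∈ idx S 𝒮 C, wgt S 𝒮 k x)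
      ≤ (T:ℝ) * Real.log 2 * ((Nk.card : ℝ) + TSum S 𝒮' C'') := by
    apply mul_le_mul_of_nonneg_left _ hTl
    rw [hsplitw]
    exact add_le_add hWB hWrest
  have hcast : ((T * Nk.card : ℕ) : ℝ) = (T:ℝ) * (Nk.card : ℝ) := by push_cast; ring
  calc (T:ℝ) * Real.log 2 * (∑ x ∈ idx S 𝒮 C, wgt S 𝒮 k x)
      ≤ (T:ℝ) * Real.log 2 * ((Nk.card : ℝ) + TSum S 𝒮' C'') := key1
    _ = ((T * Nk.card : ℕ) : ℝ) * Real.log 2 + (T:ℝ) * Real.log 2 * TSum S 𝒮' C'' := by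
        rw [hcast]; ring
    _ ≤ ((T * Nk.card : ℕ) : ℝ) * Real.log 2 + entC S 𝒮' C'' := by linarith
    _ ≤ ent (p2 (Xs S 𝒮') (VD C')) - ent (VD C' : OmT Q N T → _) := by
        unfold entC
        rw [eqC, eqD]
        have hG0 : ent (VD C'' : OmT Q N T → _)
            = ((T * Nk.card : ℕ) : ℝ) * Real.log 2 + ent (VD C' : OmT Q N T → _) := by
          rw [← eqE, hind]
        rw [hG0]
        ring_nf
        linarith
    _ ≤ _ := ha

lemma claim : ∀ (m : ℕ) (𝒮 : Finset (Fin K)), 𝒮.card ≤ m →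
    ∀ (C : Finset (Fin Q × Fin N)), cols S 𝒮ᶜ ⊆ C →
    (T:ℝ) * Real.log 2 * TSum S 𝒮 C ≤ entC S 𝒮 C := by
  intro m
  induction m with
  | zero =>
    intro 𝒮 hm C hC
    rw [TSum_small S (hm.trans (Nat.zero_le 1)) C, mul_zero]
    exact entC_nonneg S 𝒮 C
  | succ m ih =>
    intro 𝒮 hm C hC
    by_cases hsm : 𝒮.card ≤ m
    · exact ih 𝒮 hsm C hC
    have hcard : 𝒮.card = m + 1 := le_antisymm hm (Nat.succ_le_of_lt (not_le.mp hsm))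
    by_cases hm0 : m = 0
    · rw [TSum_small S (by rw [hcard, hm0]) C, mul_zero]
      exact entC_nonneg S 𝒮 C
    have hm1 : 1 ≤ m := Nat.one_le_iff_ne_zero.mpr hm0
    classical
    have step2 : ∀ k ∈ 𝒮, (T:ℝ) * Real.log 2 * (∑ x ∈ idx S 𝒮 C, wgt S 𝒮 k x)
        ≤ ent (p2 (Xs S (𝒮.erase k)) (p2 (fun ω => msg S k ω) (VD C)))
          - ent (p2 (fun ω => msg S k ω) (VD C)) := by
      intro k hk
      apply claim_step S hC hk
      intro C' hC'
      apply ih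
      · rw [Finset.card_erase_of_mem hk, hcard]
        simp
      · exact hC'
    have hre : ∀ k ∈ 𝒮, ent (p2 (Xs S (𝒮.erase k)) (p2 (fun ω => msg S k ω) (VD C)))
        = ent (p2 (Xs S 𝒮) (VD C)) := by
      intro k hk
      apply ent_congr
      intro ω₁ ω₂
      simp only [p2_eq_iff, Xs_eq_iff]
      constructor
      · rintro ⟨h1, h2, h3⟩
        refine ⟨fun j hj => ?_, h3⟩
        by_cases hjk : j = k
        · exact hjk ▸ h2
        · exact h1 j (Finset.mem_erase.mpr ⟨hjk, hj⟩)
      · rintro ⟨h1, h2⟩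
        exact ⟨fun j hj => h1 j (Finset.mem_of_mem_erase hj), h1 k hk, h2⟩
    have step1 : ∑ k ∈ 𝒮, (ent (p2 (Xs S (𝒮.erase k)) (p2 (fun ω => msg S k ω) (VD C)))
        - ent (p2 (fun ω => msg S k ω) (VD C)))
        ≤ ((𝒮.card : ℝ) - 1) * entC S 𝒮 C := by
      have hsubadd : entC S 𝒮 C
          ≤ ∑ k ∈ 𝒮, (ent (p2 (fun ω => msg S k ω) (VD C)) - ent (VD C : OmT Q N T → _)) := by
        unfold entC
        exact subadd S 𝒮 (VD C)
      have hrw : ∀ k ∈ 𝒮, ent (p2 (Xs S (𝒮.erase k)) (p2 (fun ω => msg S k ω) (VD C)))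
          - ent (p2 (fun ω => msg S k ω) (VD C))
          = entC S 𝒮 C - (ent (p2 (fun ω => msg S k ω) (VD C))
            - ent (VD C : OmT Q N T → _)) := by
        intro k hk
        rw [hre k hk]
        unfold entC
        ring
      rw [Finset.sum_congr rfl hrw, Finset.sum_sub_distrib, Finset.sum_const, nsmul_eq_mul]
      linarith
    have hswap : ∑ k ∈ 𝒮, ∑ x ∈ idx S 𝒮 C, wgt S 𝒮 k x
        = ∑ x ∈ idx S 𝒮 C, ∑ k ∈ 𝒮, wgt S 𝒮 k x := Finset.sum_comm
    have hcount : ((𝒮.card:ℝ) - 1) * TSum S 𝒮 C ≤ ∑ x ∈ idx S 𝒮 C, ∑ k ∈ 𝒮, wgt S 𝒮 k x := by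
      unfold TSum
      rw [Finset.mul_sum]
      exact Finset.sum_le_sum (fun x hx => sum_w_ge S hx)
    have hTl : (0:ℝ) ≤ (T:ℝ) * Real.log 2 :=
      mul_nonneg (by positivity) (Real.log_nonneg one_le_two)
    have hchain : (T:ℝ) * Real.log 2 * (((𝒮.card:ℝ) - 1) * TSum S 𝒮 C)
        ≤ ((𝒮.card:ℝ) - 1) * entC S 𝒮 C := by
      calc (T:ℝ) * Real.log 2 * (((𝒮.card:ℝ) - 1) * TSum S 𝒮 C)
          ≤ (T:ℝ) * Real.log 2 * (∑ x ∈ idx S 𝒮 C, ∑ k ∈ 𝒮, wgt S 𝒮 k x) :=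
            mul_le_mul_of_nonneg_left hcount hTl
        _ = ∑ k ∈ 𝒮, ((T:ℝ) * Real.log 2 * ∑ x ∈ idx S 𝒮 C, wgt S 𝒮 k x) := by
            rw [← hswap, Finset.mul_sum]
        _ ≤ ∑ k ∈ 𝒮, (ent (p2 (Xs S (𝒮.erase k)) (p2 (fun ω => msg S k ω) (VD C)))
            - ent (p2 (fun ω => msg S k ω) (VD C))) := Finset.sum_le_sum step2
        _ ≤ _ := step1
    have hpos : (0:ℝ) < (𝒮.card:ℝ) - 1 := by
      rw [hcard]
      push_cast
      have : (1:ℝ) ≤ (m:ℝ) := by exact_mod_cast hm1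
      linarith
    have h3 : ((𝒮.card:ℝ) - 1) * ((T:ℝ) * Real.log 2 * TSum S 𝒮 C)
        ≤ ((𝒮.card:ℝ) - 1) * entC S 𝒮 C := by
      calc ((𝒮.card:ℝ) - 1) * ((T:ℝ) * Real.log 2 * TSum S 𝒮 C)
          = (T:ℝ) * Real.log 2 * (((𝒮.card:ℝ) - 1) * TSum S 𝒮 C) := by ring
        _ ≤ _ := hchain
    exact le_of_mul_le_mul_left h3 hpos

end App

end CDCAux

/-- converse bound for the communication load.
`a s d` counts intermediate values `(q,n)` available at exactly `s` servers
and needed (but not available) at exactly `d` servers. -/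
theorem total_bits_lower_bound (K N Q T : ℕ) (hK : 0 < K) (hN : 0 < N) (hQ : 0 < Q)
    (hT : 0 < T) (S : Scheme K N Q T)
    (a : ℕ → ℕ → ℕ)
    (ha : ∀ s d, a s d = (Finset.univ.filter (fun p : Fin Q × Fin N =>
      (Finset.univ.filter (fun k : Fin K => p.2 ∈ S.M k)).card = s ∧
      (Finset.univ.filter (fun k : Fin K => p.1 ∈ S.W k ∧ p.2 ∉ S.M k)).card = d)).card) :
    ((∑ k : Fin K, (S.len k : ℝ)) ≥
      (T : ℝ) * ∑ s ∈ Finset.Icc 1 K, ∑ d ∈ Finset.Icc 1 (K - s),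
        (a s d : ℝ) * d / ((s : ℝ) + d - 1)) ∧
    commLoad S ≥ (1 / ((Q : ℝ) * N)) * ∑ s ∈ Finset.Icc 1 K, ∑ d ∈ Finset.Icc 1 (K - s),
        (a s d : ℝ) * d / ((s : ℝ) + d - 1) := by
  classical
  set Sg : ℝ := ∑ s ∈ Finset.Icc 1 K, ∑ d ∈ Finset.Icc 1 (K - s),
    (a s d : ℝ) * d / ((s : ℝ) + d - 1) with hSg
  have hlog2 : (0:ℝ) < Real.log 2 := Real.log_pos (by norm_num)
  have hTl : (0:ℝ) ≤ (T:ℝ) * Real.log 2 :=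
    mul_nonneg (by positivity) (Real.log_nonneg one_le_two)
  -- the claim instantiated at the full server set with empty conditioning
  have hclaim : (T:ℝ) * Real.log 2 * CDCAux.TSum S Finset.univ ∅
      ≤ CDCAux.entC S Finset.univ ∅ := by
    apply CDCAux.claim S K Finset.univ
    · rw [Finset.card_univ, Fintype.card_fin]
    · rw [Finset.compl_univ]
      simp [CDCAux.cols]
  -- upper bound on total entropy by message lengths
  have hub : CDCAux.entC S Finset.univ ∅ ≤ (∑ k : Fin K, (S.len k : ℝ)) * Real.log 2 := by
    have h1 : CDCAux.entC S Finset.univ ∅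
        ≤ ∑ k : Fin K, (CDCAux.ent (CDCAux.p2 (fun ω => CDCAux.msg S k ω)
            (CDCAux.VD (∅ : Finset (Fin Q × Fin N))))
          - CDCAux.ent (CDCAux.VD (∅ : Finset (Fin Q × Fin N)) : CDCAux.OmT Q N T → _)) := by
      unfold CDCAux.entC
      exact CDCAux.subadd S Finset.univ (CDCAux.VD ∅)
    have h2 : ∀ k : Fin K, CDCAux.ent (CDCAux.p2 (fun ω => CDCAux.msg S k ω)
        (CDCAux.VD (∅ : Finset (Fin Q × Fin N))))
        - CDCAux.ent (CDCAux.VD (∅ : Finset (Fin Q × Fin N)) : CDCAux.OmT Q N T → _)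
        ≤ (S.len k : ℝ) * Real.log 2 := by
      intro k
      have e0 : CDCAux.ent (CDCAux.p2 (fun ω => CDCAux.msg S k ω)
          (CDCAux.VD (∅ : Finset (Fin Q × Fin N))))
          = CDCAux.ent (fun ω : CDCAux.OmT Q N T => CDCAux.msg S k ω) := by
        apply CDCAux.ent_congr
        intro ω₁ ω₂
        rw [CDCAux.p2_eq_iff]
        have hVD : CDCAux.VD (∅ : Finset (Fin Q × Fin N)) ω₁ = CDCAux.VD ∅ ω₂ := by
          funext x
          simp [CDCAux.VD]
        simp [hVD]
      have e1 := CDCAux.ent_le_log (fun ω : CDCAux.OmT Q N T => CDCAux.msg S k ω)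
      have e2 : (Fintype.card (Fin (S.len k) → Bool)) = 2 ^ (S.len k) := by
        rw [Fintype.card_fun]
        simp
      rw [e2] at e1
      have e3 : Real.log ((2 ^ (S.len k) : ℕ) : ℝ) = (S.len k : ℝ) * Real.log 2 := by
        rw [Nat.cast_pow, Real.log_pow]
        norm_num
      rw [e3] at e1
      have e4 : (0:ℝ) ≤ CDCAux.ent (CDCAux.VD (∅ : Finset (Fin Q × Fin N))
          : CDCAux.OmT Q N T → _) := CDCAux.ent_nonneg _
      rw [e0]
      linarith
    calc CDCAux.entC S Finset.univ ∅ ≤ _ := h1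
      _ ≤ ∑ k : Fin K, (S.len k : ℝ) * Real.log 2 := Finset.sum_le_sum (fun k _ => h2 k)
      _ = (∑ k : Fin K, (S.len k : ℝ)) * Real.log 2 := by rw [Finset.sum_mul]
  -- grouping: the double sum is at most the coordinatewise sum
  have hgroup : Sg ≤ CDCAux.TSum S Finset.univ ∅ := by
    have hTSum : CDCAux.TSum S Finset.univ ∅
        = ∑ x : Fin Q × Fin N, CDCAux.cc (CDCAux.Af S x).card (CDCAux.Bf S x).card := by
      unfold CDCAux.TSum CDCAux.idx
      rw [Finset.sdiff_empty, Finset.filter_true_of_mem (fun x _ => Finset.subset_univ _)]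
      exact Finset.sum_congr rfl (fun x _ => by rw [Finset.inter_univ])
    set f : Fin Q × Fin N → ℝ := fun x => CDCAux.cc (CDCAux.Af S x).card (CDCAux.Bf S x).card
      with hf
    set cls : ℕ → ℕ → Finset (Fin Q × Fin N) := fun s d =>
      Finset.univ.filter (fun x => (CDCAux.Af S x).card = s ∧ (CDCAux.Bf S x).card = d)
      with hcls
    have hacard : ∀ s d, a s d = (cls s d).card := by
      intro s d
      rw [ha s d]
      rfl
    have hterm : ∀ s d, (a s d : ℝ) * d / ((s : ℝ) + d - 1) = ∑ x ∈ cls s d, f x := by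
      intro s d
      have : ∀ x ∈ cls s d, f x = (d:ℝ) / ((s:ℝ) + d - 1) := by
        intro x hx
        obtain ⟨-, h1, h2⟩ := Finset.mem_filter.mp hx
        rw [hf]
        simp only
        rw [h1, h2, CDCAux.cc]
      rw [Finset.sum_congr rfl this, Finset.sum_const, nsmul_eq_mul, hacard s d]
      rw [mul_div_assoc]
    have hinner : ∀ s, ∑ d ∈ Finset.Icc 1 (K - s), ∑ x ∈ cls s d, f x
        ≤ ∑ x ∈ Finset.univ.filter (fun x => (CDCAux.Af S x).card = s), f x := by
      intro s
      rw [← Finset.sum_biUnion]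
      · apply Finset.sum_le_sum_of_subset_of_nonneg
        · intro x hx
          obtain ⟨d, -, hd⟩ := Finset.mem_biUnion.mp hx
          obtain ⟨-, h1, -⟩ := Finset.mem_filter.mp hd
          exact Finset.mem_filter.mpr ⟨Finset.mem_univ _, h1⟩
        · intro x _ _
          exact CDCAux.cc_nonneg _ _
      · intro d1 hd1 d2 hd2 hne
        apply Finset.disjoint_left.mpr
        intro x hx1 hx2
        obtain ⟨-, -, e1⟩ := Finset.mem_filter.mp hx1
        obtain ⟨-, -, e2⟩ := Finset.mem_filter.mp hx2
        exact hne (e1 ▸ e2 ▸ rfl)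
    have houter : ∑ s ∈ Finset.Icc 1 K,
        ∑ x ∈ Finset.univ.filter (fun x => (CDCAux.Af S x).card = s), f x
        ≤ ∑ x : Fin Q × Fin N, f x := by
      rw [← Finset.sum_biUnion]
      · apply Finset.sum_le_sum_of_subset_of_nonneg
        · intro x _
          exact Finset.mem_univ _
        · intro x _ _
          exact CDCAux.cc_nonneg _ _
      · intro s1 hs1 s2 hs2 hne
        apply Finset.disjoint_left.mpr
        intro x hx1 hx2
        obtain ⟨-, e1⟩ := Finset.mem_filter.mp hx1
        obtain ⟨-, e2⟩ := Finset.mem_filter.mp hx2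
        exact hne (e1 ▸ e2 ▸ rfl)
    calc Sg = ∑ s ∈ Finset.Icc 1 K, ∑ d ∈ Finset.Icc 1 (K - s), ∑ x ∈ cls s d, f x := by
          rw [hSg]
          exact Finset.sum_congr rfl (fun s _ => Finset.sum_congr rfl (fun d _ => hterm s d))
      _ ≤ ∑ s ∈ Finset.Icc 1 K,
          ∑ x ∈ Finset.univ.filter (fun x => (CDCAux.Af S x).card = s), f x :=
            Finset.sum_le_sum (fun s _ => hinner s)
      _ ≤ ∑ x : Fin Q × Fin N, f x := houter
      _ = CDCAux.TSum S Finset.univ ∅ := hTSum.symm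
  -- combine everything
  have hmain : (T:ℝ) * Sg ≤ ∑ k : Fin K, (S.len k : ℝ) := by
    have c1 : (T:ℝ) * Sg * Real.log 2 ≤ (∑ k : Fin K, (S.len k : ℝ)) * Real.log 2 := by
      calc (T:ℝ) * Sg * Real.log 2 = (T:ℝ) * Real.log 2 * Sg := by ring
        _ ≤ (T:ℝ) * Real.log 2 * CDCAux.TSum S Finset.univ ∅ :=
            mul_le_mul_of_nonneg_left hgroup hTl
        _ ≤ CDCAux.entC S Finset.univ ∅ := hclaim
        _ ≤ (∑ k : Fin K, (S.len k : ℝ)) * Real.log 2 := hub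
    exact le_of_mul_le_mul_right c1 hlog2
  constructor
  · exact hmain
  · have hQ' : (0:ℝ) < (Q:ℝ) := by exact_mod_cast hQ
    have hN' : (0:ℝ) < (N:ℝ) := by exact_mod_cast hN
    have hT' : (0:ℝ) < (T:ℝ) := by exact_mod_cast hT
    rw [ge_iff_le, commLoad]
    have heq : (1 / ((Q:ℝ) * N)) * Sg = (T:ℝ) * Sg / ((Q:ℝ) * N * T) := by
      field_simp
    rw [heq]
    apply div_le_div_of_nonneg_right hmain (by positivity)
end

section
/- Let c_m, c_s > 0 be reals. Every (K,N,Q,T)-scheme whose Reduce assignment is a singleton Reduce assignment satisfies c_m·p + c_s·L ≥ min_{r ∈ {0,1,…,Q}} f(r), where f(r) = c_m·r/Q + c_s·(Q−r)/(Q·(r+1)), p is the peak computation load and L is the communication load. -/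
section AuxSeqLB
open Finset
variable {K N Q T : ℕ}

/-- The set of "unknown" entries for the ordering `π`. -/
def Bset (S : Scheme K N Q T) (σ : Fin Q → Fin K) (π : Equiv.Perm (Fin Q)) :
    Finset (Fin Q × Fin N) :=
  Finset.univ.filter
    (fun p => ∀ q' : Fin Q, π.symm p.1 ≤ π.symm q' → p.2 ∉ S.M (σ q'))

/-- extension of a partial assignment on `Bset` by `false`. -/
def extB (S : Scheme K N Q T) (σ : Fin Q → Fin K) (π : Equiv.Perm (Fin Q))
    (u : {p // p ∈ Bset S σ π} → Fin T → Bool) : Fin Q × Fin N → Fin T → Bool :=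
  fun p => if h : p ∈ Bset S σ π then u ⟨p, h⟩ else fun _ => false

theorem key_bound (S : Scheme K N Q T) (σ : Fin Q → Fin K) (hσ : ∀ q, q ∈ S.W (σ q))
    (π : Equiv.Perm (Fin Q)) :
    T * (Bset S σ π).card ≤ ∑ k, S.len k := by
  -- main injectivity claim
  have main : ∀ u u' : {p // p ∈ Bset S σ π} → Fin T → Bool,
      (fun j => S.enc j (fun q' n => extB S σ π u (q', n.1))) =
      (fun j => S.enc j (fun q' n => extB S σ π u' (q', n.1))) →
      ∀ q n, extB S σ π u (q, n) = extB S σ π u' (q, n) := by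
    intro u u' hmsg
    have step : ∀ d : ℕ, ∀ q : Fin Q, Q ≤ d + (π.symm q : ℕ) →
        ∀ n, extB S σ π u (q, n) = extB S σ π u' (q, n) := by
      intro d
      induction d with
      | zero =>
        intro q hq
        have := (π.symm q).isLt
        omega
      | succ d ih =>
        intro q hq n
        have hloc : (fun (q' : Fin Q) (n' : {n' : Fin N // n' ∈ S.M (σ q)}) =>
            extB S σ π u (q', n'.1)) =
            (fun q' n' => extB S σ π u' (q', n'.1)) := by
          funext q' n'
          by_cases hB : (q', n'.1) ∈ Bset S σ π
          · have hprop := (Finset.mem_filter.mp hB).2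
            have hlt : (π.symm q : ℕ) < π.symm q' := by
              by_contra hle
              push_neg at hle
              exact hprop q (by exact_mod_cast hle) n'.2
            exact ih q' (by omega) n'.1
          · simp only [extB, dif_neg hB]
        have h1 := S.correct (extB S σ π u) (σ q) q (hσ q)
        have h2 := S.correct (extB S σ π u') (σ q) q (hσ q)
        rw [hmsg, hloc] at h1
        rw [h2] at h1
        exact congrFun h1.symm n
    intro q n
    exact step Q q (by omega) n
  -- build the injection
  have hinj : Function.Injective
      (fun u : {p // p ∈ Bset S σ π} → Fin T → Bool =>
        (fun j => S.enc j (fun q' n => extB S σ π u (q', n.1))) :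
        _ → ((j : Fin K) → Fin (S.len j) → Bool)) := by
    intro u u' h
    funext p
    obtain ⟨⟨q, n⟩, hp⟩ := p
    have := main u u' h q n
    simpa only [extB, dif_pos hp] using this
  have hcard := Fintype.card_le_of_injective _ hinj
  simp only [Fintype.card_fun, Fintype.card_coe, Fintype.card_pi, Fintype.card_fin,
    Finset.prod_pow_eq_pow_sum] at hcard
  have h2 : (2 : ℕ) ^ (T * (Bset S σ π).card) ≤ 2 ^ (∑ k, S.len k) := by
    calc (2:ℕ) ^ (T * (Bset S σ π).card) = (2 ^ T) ^ (Bset S σ π).card := by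
          rw [← pow_mul]
      _ ≤ 2 ^ (∑ k, S.len k) := hcard
  exact (Nat.pow_le_pow_iff_right one_lt_two).mp h2

theorem swap_mem_finset {Q : ℕ} {A : Finset (Fin Q)} {a a' : Fin Q}
    (ha : a ∈ A) (ha' : a' ∈ A) {b : Fin Q} (hb : b ∈ A) : Equiv.swap a a' b ∈ A := by
  rcases eq_or_ne b a with rfl | h1
  · simpa [Equiv.swap_apply_left] using ha'
  rcases eq_or_ne b a' with rfl | h2
  · simpa [Equiv.swap_apply_right] using ha
  · rwa [Equiv.swap_apply_of_ne_of_ne h1 h2]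

theorem fiber_eq (Q : ℕ) (A : Finset (Fin Q)) (a a' : Fin Q) (ha : a ∈ A) (ha' : a' ∈ A) :
    (∑ π : Equiv.Perm (Fin Q), (if ∀ b ∈ A, π.symm b ≤ π.symm a then 1 else 0)) =
    (∑ π : Equiv.Perm (Fin Q), (if ∀ b ∈ A, π.symm b ≤ π.symm a' then 1 else 0)) := by
  classical
  refine Fintype.sum_equiv (Equiv.mulLeft (Equiv.swap a a')) _ _ ?_
  intro π
  congr 1
  have hsymm : ∀ b, ((Equiv.mulLeft (Equiv.swap a a') π)).symm b
      = π.symm (Equiv.swap a a' b) := by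
    intro b
    simp [Equiv.mulLeft, Equiv.Perm.mul_def, Equiv.symm_trans_apply]
  simp only [hsymm, Equiv.swap_apply_right]
  -- goal: (∀ b ∈ A, π.symm b ≤ π.symm a) = (∀ b ∈ A, π.symm (swap a a' b) ≤ π.symm a)
  apply propext
  constructor
  · intro h b hb
    exact h _ (swap_mem_finset ha ha' hb)
  · intro h b hb
    have := h _ (swap_mem_finset ha ha' hb)
    rwa [Equiv.swap_apply_self] at this

theorem last_count (Q : ℕ) (A : Finset (Fin Q)) (a : Fin Q) (ha : a ∈ A) :
    (∑ π : Equiv.Perm (Fin Q),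
      (if ∀ b ∈ A, π.symm b ≤ π.symm a then 1 else 0)) * A.card = Q.factorial := by
  classical
  have hsum : ∑ a' ∈ A, (∑ π : Equiv.Perm (Fin Q),
      (if ∀ b ∈ A, π.symm b ≤ π.symm a' then 1 else 0)) = Q.factorial := by
    rw [Finset.sum_comm]
    have hone : ∀ π : Equiv.Perm (Fin Q),
        (∑ a' ∈ A, if ∀ b ∈ A, π.symm b ≤ π.symm a' then (1:ℕ) else 0) = 1 := by
      intro π
      rw [← Finset.card_filter]
      rw [Finset.card_eq_one]
      obtain ⟨a₀, ha₀, hmax⟩ := Finset.exists_max_image A (fun b => π.symm b) ⟨a, ha⟩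
      refine ⟨a₀, ?_⟩
      ext x
      simp only [Finset.mem_filter, Finset.mem_singleton]
      constructor
      · rintro ⟨hx, hxmax⟩
        have h1 : π.symm a₀ ≤ π.symm x := hxmax a₀ ha₀
        have h2 : π.symm x ≤ π.symm a₀ := hmax x hx
        exact π.symm.injective (le_antisymm h2 h1)
      · rintro rfl
        exact ⟨ha₀, hmax⟩
    rw [Finset.sum_congr rfl (fun π _ => hone π), Finset.sum_const, smul_eq_mul, mul_one,
      Finset.card_univ, Fintype.card_perm, Fintype.card_fin]
  have heq : ∀ a' ∈ A, (∑ π : Equiv.Perm (Fin Q),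
      (if ∀ b ∈ A, π.symm b ≤ π.symm a' then (1:ℕ) else 0)) =
      (∑ π : Equiv.Perm (Fin Q), (if ∀ b ∈ A, π.symm b ≤ π.symm a then 1 else 0)) :=
    fun a' ha' => fiber_eq Q A a' a ha' ha
  rw [Finset.sum_congr rfl heq, Finset.sum_const, smul_eq_mul] at hsum
  rw [mul_comm]
  exact hsum

theorem count_lemma (Q : ℕ) (Sn : Finset (Fin Q)) :
    (∑ π : Equiv.Perm (Fin Q), ∑ q : Fin Q,
      (if ∀ q' ∈ Sn, π.symm q' < π.symm q then 1 else 0)) * (Sn.card + 1)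
      = Q.factorial * (Q - Sn.card) := by
  classical
  rw [Finset.sum_comm]
  have hzero : ∀ q ∈ Sn, (∑ π : Equiv.Perm (Fin Q),
      (if ∀ q' ∈ Sn, π.symm q' < π.symm q then (1:ℕ) else 0)) = 0 := by
    intro q hq
    apply Finset.sum_eq_zero
    intro π _
    rw [if_neg]
    intro h
    exact absurd (h q hq) (lt_irrefl _)
  have hsplit : (∑ q : Fin Q, ∑ π : Equiv.Perm (Fin Q),
      (if ∀ q' ∈ Sn, π.symm q' < π.symm q then (1:ℕ) else 0)) =
      ∑ q ∈ Snᶜ, ∑ π : Equiv.Perm (Fin Q),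
      (if ∀ q' ∈ Sn, π.symm q' < π.symm q then (1:ℕ) else 0) := by
    rw [← Finset.sum_add_sum_compl Sn]
    rw [Finset.sum_congr rfl hzero, Finset.sum_const, smul_eq_mul, mul_zero, zero_add]
  rw [hsplit, Finset.sum_mul]
  have hterm : ∀ q ∈ Snᶜ, (∑ π : Equiv.Perm (Fin Q),
      (if ∀ q' ∈ Sn, π.symm q' < π.symm q then (1:ℕ) else 0)) * (Sn.card + 1)
      = Q.factorial := by
    intro q hq
    rw [Finset.mem_compl] at hq
    have hcard : (insert q Sn).card = Sn.card + 1 := Finset.card_insert_of_notMem hq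
    rw [show (Sn.card + 1) = (insert q Sn).card from hcard.symm]
    rw [show (∑ π : Equiv.Perm (Fin Q),
        (if ∀ q' ∈ Sn, π.symm q' < π.symm q then (1:ℕ) else 0)) =
        (∑ π : Equiv.Perm (Fin Q),
        (if ∀ b ∈ insert q Sn, π.symm b ≤ π.symm q then (1:ℕ) else 0)) from ?_]
    · exact last_count Q (insert q Sn) q (Finset.mem_insert_self q Sn)
    · apply Finset.sum_congr rfl
      intro π _
      congr 1
      apply propext
      constructor
      · intro h b hb
        rcases Finset.mem_insert.mp hb with rfl | hb'
        · exact le_refl _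
        · exact le_of_lt (h b hb')
      · intro h q' hq'
        have hle := h q' (Finset.mem_insert_of_mem hq')
        have hne : q' ≠ q := fun hc => hq (hc ▸ hq')
        exact lt_of_le_of_ne hle (fun hc => hne (π.symm.injective hc))
  rw [Finset.sum_congr rfl hterm, Finset.sum_const, smul_eq_mul, Finset.card_compl,
    Fintype.card_fin, mul_comm]

theorem chord_ineq (Q r t : ℕ) :
    ((Q : ℝ) - r) / ((r : ℝ) + 1)
      - ((Q : ℝ) + 1) / (((r : ℝ) + 1) * ((r : ℝ) + 2)) * ((t : ℝ) - r)
    ≤ ((Q : ℝ) - t) / ((t : ℝ) + 1) := by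
  have ht1 : (0:ℝ) < (t:ℝ) + 1 := by positivity
  have hr1 : (0:ℝ) < (r:ℝ) + 1 := by positivity
  have hr2 : (0:ℝ) < (r:ℝ) + 2 := by positivity
  have hkey : (0:ℝ) ≤ ((t:ℝ) - r) * ((t:ℝ) - r - 1) := by
    rcases le_or_gt t r with h | h
    · have h1 : (t:ℝ) - r ≤ 0 := by
        have : (t:ℝ) ≤ r := by exact_mod_cast h
        linarith
      have h2 : (t:ℝ) - r - 1 ≤ 0 := by linarith
      nlinarith
    · have h1 : (1:ℝ) ≤ (t:ℝ) - r := by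
        have : (r:ℝ) + 1 ≤ t := by exact_mod_cast h
        linarith
      nlinarith
  have hdiff : ((Q : ℝ) - t) / ((t : ℝ) + 1)
      - (((Q : ℝ) - r) / ((r : ℝ) + 1)
        - ((Q : ℝ) + 1) / (((r : ℝ) + 1) * ((r : ℝ) + 2)) * ((t : ℝ) - r))
      = ((Q:ℝ) + 1) * (((t:ℝ) - r) * ((t:ℝ) - r - 1))
        / (((t:ℝ) + 1) * (((r:ℝ) + 1) * ((r:ℝ) + 2))) := by
    field_simp
    ring
  have hpos : (0:ℝ) ≤ ((Q:ℝ) + 1) * (((t:ℝ) - r) * ((t:ℝ) - r - 1))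
      / (((t:ℝ) + 1) * (((r:ℝ) + 1) * ((r:ℝ) + 2))) := by
    apply div_nonneg
    · exact mul_nonneg (by positivity) hkey
    · positivity
  linarith [hdiff, hpos]

end AuxSeqLB

open Finset in
set_option maxHeartbeats 2000000 in
/-- lower bound on `c_m·p + c_s·L` for schemes with
singleton Reduce assignment. -/
theorem sequential_lower_bound (K N Q T : ℕ) (hK : 0 < K) (hN : 0 < N) (hQ : 0 < Q)
    (hT : 0 < T) (S : Scheme K N Q T) (hS : SingletonReduce S)
    (cm cs : ℝ) (hcm : 0 < cm) (hcs : 0 < cs) :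
    cm * peakLoad S + cs * commLoad S ≥
      (Finset.range (Q + 1)).inf' Finset.nonempty_range_add_one
        (fun r : ℕ => cm * (r : ℝ) / Q + cs * ((Q : ℝ) - r) / ((Q : ℝ) * (r + 1))) := by
  classical
  obtain ⟨-, hcov, -⟩ := hS
  choose σ hσ using hcov
  set m : ℕ := Finset.univ.sup (fun k : Fin K => (S.M k).card) with hm
  set Lnat : ℕ := ∑ k, S.len k with hLnat
  set t : Fin N → ℕ :=
    fun n => (Finset.univ.filter (fun q : Fin Q => n ∈ S.M (σ q))).card with ht
  set V : Fin N → ℕ := fun n => ∑ π : Equiv.Perm (Fin Q), ∑ q : Fin Q,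
    (if ∀ q' ∈ Finset.univ.filter (fun q' : Fin Q => n ∈ S.M (σ q')),
      π.symm q' < π.symm q then 1 else 0) with hV
  have hmN : m ≤ N := by
    apply Finset.sup_le
    intro k _
    simpa using Finset.card_le_univ (S.M k)
  have htQ : ∀ n, t n ≤ Q := by
    intro n
    have h := Finset.card_filter_le (Finset.univ : Finset (Fin Q))
      (fun q : Fin Q => n ∈ S.M (σ q))
    simpa using h
  -- Step 2 : ∑_π |B π| = ∑_n V n
  have hswap : ∑ π : Equiv.Perm (Fin Q), (Bset S σ π).card = ∑ n : Fin N, V n := by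
    have hcard : ∀ π : Equiv.Perm (Fin Q), (Bset S σ π).card = ∑ q : Fin Q, ∑ n : Fin N,
        (if ∀ q' ∈ Finset.univ.filter (fun q' : Fin Q => n ∈ S.M (σ q')),
          π.symm q' < π.symm q then 1 else 0) := by
      intro π
      rw [Bset, Finset.card_filter, Fintype.sum_prod_type]
      apply Finset.sum_congr rfl; intro q _
      apply Finset.sum_congr rfl; intro n _
      congr 1
      apply propext
      constructor
      · intro h q' hq'
        rw [Finset.mem_filter] at hq'
        by_contra hlt
        push_neg at hlt
        exact h q' hlt hq'.2
      · intro h q' hle hn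
        have hq' : q' ∈ Finset.univ.filter (fun q' : Fin Q => n ∈ S.M (σ q')) := by
          simp [hn]
        exact absurd hle (not_le.mpr (h q' hq'))
    calc ∑ π : Equiv.Perm (Fin Q), (Bset S σ π).card
        = ∑ π : Equiv.Perm (Fin Q), ∑ q : Fin Q, ∑ n : Fin N,
          (if ∀ q' ∈ Finset.univ.filter (fun q' : Fin Q => n ∈ S.M (σ q')),
            π.symm q' < π.symm q then 1 else 0) :=
          Finset.sum_congr rfl (fun π _ => hcard π)
      _ = ∑ π : Equiv.Perm (Fin Q), ∑ n : Fin N, ∑ q : Fin Q,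
          (if ∀ q' ∈ Finset.univ.filter (fun q' : Fin Q => n ∈ S.M (σ q')),
            π.symm q' < π.symm q then 1 else 0) :=
          Finset.sum_congr rfl (fun π _ => Finset.sum_comm)
      _ = ∑ n : Fin N, V n := Finset.sum_comm
  -- Step 3 : counting identity
  have hcount : ∀ n, V n * (t n + 1) = Q.factorial * (Q - t n) := by
    intro n
    exact count_lemma Q _
  -- Step 4 : T * ∑ V ≤ Q! * Lnat
  have hTV : T * (∑ n : Fin N, V n) ≤ Q.factorial * Lnat := by
    calc T * (∑ n : Fin N, V n) = ∑ π : Equiv.Perm (Fin Q), T * (Bset S σ π).card := by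
          rw [← hswap, Finset.mul_sum]
      _ ≤ ∑ π : Equiv.Perm (Fin Q), Lnat :=
          Finset.sum_le_sum (fun π _ => key_bound S σ hσ π)
      _ = Q.factorial * Lnat := by
          rw [Finset.sum_const, smul_eq_mul, Finset.card_univ, Fintype.card_perm,
            Fintype.card_fin]
  -- ∑ t ≤ Q * m
  have hsumt : ∑ n : Fin N, t n ≤ Q * m := by
    have he : ∑ n : Fin N, t n = ∑ q : Fin Q, (S.M (σ q)).card := by
      calc ∑ n : Fin N, t n
          = ∑ n : Fin N, ∑ q : Fin Q, (if n ∈ S.M (σ q) then 1 else 0) := by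
            apply Finset.sum_congr rfl; intro n _
            simp only [ht, Finset.card_filter]
        _ = ∑ q : Fin Q, ∑ n : Fin N, (if n ∈ S.M (σ q) then 1 else 0) := Finset.sum_comm
        _ = ∑ q : Fin Q, (S.M (σ q)).card := by
            apply Finset.sum_congr rfl; intro q _
            rw [← Finset.card_filter]
            congr 1
            ext n
            simp
    rw [he]
    calc ∑ q : Fin Q, (S.M (σ q)).card ≤ ∑ q : Fin Q, m :=
          Finset.sum_le_sum (fun q _ => by
            rw [hm]; exact Finset.le_sup (f := fun k : Fin K => (S.M k).card) (Finset.mem_univ (σ q)))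
      _ = Q * m := by
          rw [Finset.sum_const, smul_eq_mul, Finset.card_univ, Fintype.card_fin]
  -- now go to the reals
  set r : ℕ := min (Q - 1) ((Q * m) / N) with hr
  have hrQ : r + 1 ≤ Q := by
    have h1 : r ≤ Q - 1 := min_le_left _ _
    omega
  have hNpos : (0:ℝ) < N := by exact_mod_cast hN
  have hQpos : (0:ℝ) < Q := by exact_mod_cast hQ
  have hTpos : (0:ℝ) < T := by exact_mod_cast hT
  set x : ℝ := (Q:ℝ) * m / N with hx
  have hrx : (r:ℝ) ≤ x := by
    have h1 : r ≤ (Q * m) / N := min_le_right _ _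
    have h2 : ((Q * m / N : ℕ) : ℝ) ≤ ((Q*m : ℕ):ℝ) / ((N:ℕ):ℝ) := Nat.cast_div_le
    calc (r:ℝ) ≤ ((Q * m / N : ℕ) : ℝ) := by exact_mod_cast h1
      _ ≤ ((Q*m:ℕ):ℝ)/((N:ℕ):ℝ) := h2
      _ = x := by rw [hx]; push_cast; ring
  have hxr : x ≤ (r:ℝ) + 1 := by
    rcases le_or_gt ((Q*m)/N) (Q-1) with h | h
    · have hre : r = (Q*m)/N := by rw [hr]; exact min_eq_right h
      have hdm := Nat.div_add_mod (Q*m) N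
      have hmod := Nat.mod_lt (Q*m) hN
      have e1 : ((Q*m:ℕ):ℝ) = (N:ℝ) * ((Q*m/N : ℕ):ℝ) + ((Q*m%N : ℕ):ℝ) := by
        exact_mod_cast congrArg (fun z : ℕ => (z:ℝ)) hdm.symm
      have e2 : ((Q*m%N : ℕ):ℝ) < (N:ℝ) := by exact_mod_cast hmod
      rw [hx, hre, div_le_iff₀ hNpos]
      push_cast at e1 ⊢
      nlinarith
    · have hre : r = Q - 1 := by rw [hr]; exact min_eq_left (le_of_lt h)
      have hrQ1 : ((r:ℝ)+1) = (Q:ℝ) := by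
        rw [hre]
        have : (1:ℕ) ≤ Q := hQ
        push_cast [Nat.cast_sub this]
        ring
      rw [hrQ1, hx, div_le_iff₀ hNpos]
      have hmr : (m:ℝ) ≤ (N:ℝ) := by exact_mod_cast hmN
      nlinarith
  set Ar : ℝ := ((Q:ℝ) - r)/((r:ℝ)+1) with hAr
  set Br : ℝ := ((Q:ℝ)+1)/(((r:ℝ)+1)*((r:ℝ)+2)) with hBr
  have hBpos : 0 ≤ Br := by rw [hBr]; positivity
  have QFpos : (0:ℝ) < (Q.factorial : ℝ) := by exact_mod_cast Q.factorial_pos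
  have hVreal : ∀ n, (Q.factorial:ℝ) * (Ar - Br * ((t n:ℝ) - r)) ≤ ((V n : ℕ):ℝ) := by
    intro n
    have hc : ((V n:ℕ):ℝ) * ((t n:ℝ)+1) = (Q.factorial:ℝ) * ((Q:ℝ) - (t n:ℝ)) := by
      have h0 := hcount n
      have h1 : ((V n * (t n + 1) : ℕ) : ℝ) = ((Q.factorial * (Q - t n) : ℕ):ℝ) := by
        exact_mod_cast congrArg (fun z : ℕ => (z:ℝ)) h0
      push_cast [Nat.cast_sub (htQ n)] at h1
      linarith
    have ht1 : (0:ℝ) < (t n:ℝ) + 1 := by positivity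
    have h2 : ((V n:ℕ):ℝ) = (Q.factorial:ℝ) * (((Q:ℝ) - (t n:ℝ))/((t n:ℝ)+1)) := by
      rw [← mul_div_assoc, eq_div_iff (ne_of_gt ht1)]
      linarith
    rw [h2]
    have h3 := chord_ineq Q r (t n)
    rw [← hAr, ← hBr] at h3
    exact mul_le_mul_of_nonneg_left h3 QFpos.le
  have hsumtR : ∑ n : Fin N, (t n : ℝ) ≤ (Q:ℝ)*(m:ℝ) := by exact_mod_cast hsumt
  have hsumV : (Q.factorial:ℝ) * ((N:ℝ)*Ar - Br*((Q:ℝ)*(m:ℝ) - (N:ℝ)*(r:ℝ)))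
      ≤ ∑ n : Fin N, ((V n:ℕ):ℝ) := by
    have h1 : ∑ n : Fin N, (Q.factorial:ℝ) * (Ar - Br*((t n:ℝ) - (r:ℝ)))
        ≤ ∑ n : Fin N, ((V n:ℕ):ℝ) :=
      Finset.sum_le_sum (fun n _ => hVreal n)
    have h2 : ∑ n : Fin N, (Q.factorial:ℝ) * (Ar - Br*((t n:ℝ) - (r:ℝ)))
        = (Q.factorial:ℝ) * ((N:ℝ)*(Ar + Br*(r:ℝ)) - Br * ∑ n : Fin N, (t n:ℝ)) := by
      rw [← Finset.mul_sum]
      congr 1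
      calc ∑ n : Fin N, (Ar - Br*((t n:ℝ) - (r:ℝ)))
          = ∑ n : Fin N, ((Ar + Br*(r:ℝ)) - Br*(t n:ℝ)) :=
            Finset.sum_congr rfl (fun n _ => by ring)
        _ = (N:ℝ)*(Ar + Br*(r:ℝ)) - Br * ∑ n : Fin N, (t n:ℝ) := by
            rw [Finset.sum_sub_distrib, Finset.sum_const, ← Finset.mul_sum,
              Finset.card_univ, Fintype.card_fin, nsmul_eq_mul]
    have h3 : (Q.factorial:ℝ) * ((N:ℝ)*Ar - Br*((Q:ℝ)*(m:ℝ) - (N:ℝ)*(r:ℝ)))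
        ≤ (Q.factorial:ℝ) * ((N:ℝ)*(Ar + Br*(r:ℝ)) - Br * ∑ n : Fin N, (t n:ℝ)) := by
      apply mul_le_mul_of_nonneg_left _ QFpos.le
      nlinarith [mul_le_mul_of_nonneg_left hsumtR hBpos]
    linarith [h1, h2 ▸ h1, h3]
  have hLb : (T:ℝ) * ((N:ℝ)*Ar - Br*((Q:ℝ)*(m:ℝ) - (N:ℝ)*(r:ℝ))) ≤ (Lnat:ℝ) := by
    have h1 : (T:ℝ) * ∑ n : Fin N, ((V n:ℕ):ℝ) ≤ (Q.factorial:ℝ) * (Lnat:ℝ) := by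
      exact_mod_cast hTV
    have h2 := mul_le_mul_of_nonneg_left hsumV hTpos.le
    have h3 : (Q.factorial:ℝ) * ((T:ℝ) * ((N:ℝ)*Ar - Br*((Q:ℝ)*(m:ℝ) - (N:ℝ)*(r:ℝ))))
        ≤ (Q.factorial:ℝ) * (Lnat:ℝ) := by nlinarith
    exact le_of_mul_le_mul_left h3 QFpos
  have hcomm : ((N:ℝ)*Ar - Br*((Q:ℝ)*(m:ℝ) - (N:ℝ)*(r:ℝ))) / ((Q:ℝ)*(N:ℝ))
      ≤ commLoad S := by
    have hLcast : (Lnat:ℝ) = ∑ k : Fin K, (S.len k:ℝ) := by rw [hLnat]; push_cast; ring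
    rw [commLoad, ← hLcast, div_le_div_iff₀ (by positivity) (by positivity)]
    nlinarith [mul_le_mul_of_nonneg_right hLb (le_of_lt (mul_pos hQpos hNpos))]
  have hpeak : peakLoad S = (m:ℝ)/(N:ℝ) := rfl
  -- membership in range
  have hmem1 : r ∈ Finset.range (Q+1) := Finset.mem_range.mpr (by omega)
  have hmem2 : r+1 ∈ Finset.range (Q+1) := Finset.mem_range.mpr (by omega)
  have hf1 : (Finset.range (Q + 1)).inf' Finset.nonempty_range_add_one
      (fun j : ℕ => cm * (j : ℝ) / Q + cs * ((Q : ℝ) - j) / ((Q : ℝ) * (j + 1)))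
      ≤ (fun j : ℕ => cm * (j : ℝ) / Q + cs * ((Q : ℝ) - j) / ((Q : ℝ) * (j + 1))) r :=
    Finset.inf'_le _ hmem1
  have hf2 : (Finset.range (Q + 1)).inf' Finset.nonempty_range_add_one
      (fun j : ℕ => cm * (j : ℝ) / Q + cs * ((Q : ℝ) - j) / ((Q : ℝ) * (j + 1)))
      ≤ (fun j : ℕ => cm * (j : ℝ) / Q + cs * ((Q : ℝ) - j) / ((Q : ℝ) * (j + 1))) (r+1) :=
    Finset.inf'_le _ hmem2
  set lam : ℝ := (r:ℝ) + 1 - x with hlamdef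
  set mu : ℝ := x - (r:ℝ) with hmudef
  have hlam : 0 ≤ lam := by rw [hlamdef]; linarith
  have hmu : 0 ≤ mu := by rw [hmudef]; linarith
  have hlm : lam + mu = 1 := by rw [hlamdef, hmudef]; ring
  have hr1ne : ((r:ℝ)+1) ≠ 0 := by positivity
  have hr2ne : ((r:ℝ)+2) ≠ 0 := by positivity
  have hQne : (Q:ℝ) ≠ 0 := ne_of_gt hQpos
  have hNne : (N:ℝ) ≠ 0 := ne_of_gt hNpos
  have hid : cm * ((m:ℝ)/(N:ℝ))
      + cs * (((N:ℝ)*Ar - Br*((Q:ℝ)*(m:ℝ) - (N:ℝ)*(r:ℝ))) / ((Q:ℝ)*(N:ℝ)))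
      = lam * (cm * (r:ℝ)/(Q:ℝ) + cs*((Q:ℝ)-(r:ℝ))/((Q:ℝ)*((r:ℝ)+1)))
        + mu * (cm * ((r:ℝ)+1)/(Q:ℝ)
          + cs*((Q:ℝ)-((r:ℝ)+1))/((Q:ℝ)*(((r:ℝ)+1)+1))) := by
    rw [hlamdef, hmudef, hx, hAr, hBr]
    field_simp
    ring
  -- cast the inf'-terms
  have hcast1 : (fun j : ℕ => cm * (j : ℝ) / Q + cs * ((Q : ℝ) - j) / ((Q : ℝ) * (j + 1))) r
      = cm * (r:ℝ)/(Q:ℝ) + cs*((Q:ℝ)-(r:ℝ))/((Q:ℝ)*((r:ℝ)+1)) := by push_cast; ring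
  have hcast2 : (fun j : ℕ => cm * (j : ℝ) / Q + cs * ((Q : ℝ) - j) / ((Q : ℝ) * (j + 1))) (r+1)
      = cm * ((r:ℝ)+1)/(Q:ℝ) + cs*((Q:ℝ)-((r:ℝ)+1))/((Q:ℝ)*(((r:ℝ)+1)+1)) := by
    push_cast; ring
  rw [hcast1] at hf1
  rw [hcast2] at hf2
  rw [ge_iff_le]
  set I : ℝ := (Finset.range (Q + 1)).inf' Finset.nonempty_range_add_one
    (fun j : ℕ => cm * (j : ℝ) / Q + cs * ((Q : ℝ) - j) / ((Q : ℝ) * (j + 1))) with hI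
  calc I = lam * I + mu * I := by rw [← add_mul, hlm, one_mul]
    _ ≤ lam * (cm * (r:ℝ)/(Q:ℝ) + cs*((Q:ℝ)-(r:ℝ))/((Q:ℝ)*((r:ℝ)+1)))
        + mu * (cm * ((r:ℝ)+1)/(Q:ℝ)
          + cs*((Q:ℝ)-((r:ℝ)+1))/((Q:ℝ)*(((r:ℝ)+1)+1))) :=
        add_le_add (mul_le_mul_of_nonneg_left hf1 hlam)
          (mul_le_mul_of_nonneg_left hf2 hmu)
    _ = cm * ((m:ℝ)/(N:ℝ))
        + cs * (((N:ℝ)*Ar - Br*((Q:ℝ)*(m:ℝ) - (N:ℝ)*(r:ℝ))) / ((Q:ℝ)*(N:ℝ))) := hid.symm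
    _ ≤ cm * peakLoad S + cs * commLoad S := by
        rw [hpeak]
        exact add_le_add_right (mul_le_mul_of_nonneg_left hcomm hcs.le) _
end

section
/- For every (K,N,Q,T)-scheme whose Reduce assignment W partitions Fin Q (the sets W k are pairwise disjoint and ⋃_k W k = Finset.univ, but |W k| may be arbitrary), there exist K' ≥ K and a (K',N,Q,T)-scheme with a singleton Reduce assignment whose peak computation load equals that of the original scheme and whose communication load equals that of the original scheme. -/
namespace Boost

variable {K N Q T : ℕ}

def sig (hQ : 0 < Q) (c : Fin Q → Fin K) (i : Fin (K + Q)) : Fin K :=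
  if h : i.1 < K then ⟨i.1, h⟩ else c ⟨(i.1 - K) % Q, Nat.mod_lt _ hQ⟩

def tau (hQ : 0 < Q) (i : Fin (K + Q)) : Fin Q :=
  ⟨(i.1 - K) % Q, Nat.mod_lt _ hQ⟩

@[simp] lemma sig_lt (hQ : 0 < Q) (c : Fin Q → Fin K) (i : Fin (K + Q)) (h : i.1 < K) :
    sig hQ c i = ⟨i.1, h⟩ := dif_pos h

lemma enc_congr {N T : ℕ} (S : Scheme K N Q T) (v : Fin Q × Fin N → Fin T → Bool)
    {k k' : Fin K} (h : k' = k) (p : S.len k = S.len k') (b : Fin (S.len k)) :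
    S.enc k' (fun q' n => v (q', n.1)) (Fin.cast p b) =
      S.enc k (fun q' n => v (q', n.1)) b := by
  subst h; simp

@[simp] lemma sig_ge (hQ : 0 < Q) (c : Fin Q → Fin K) (i : Fin (K + Q)) (h : ¬ i.1 < K) :
    sig hQ c i = c (tau hQ i) := dif_neg h

def boost (hQ : 0 < Q) (S : Scheme K N Q T) (c : Fin Q → Fin K)
    (hc : ∀ q, q ∈ S.W (c q)) : Scheme (K + Q) N Q T where
  M i := S.M (sig hQ c i)
  W i := if i.1 < K then ∅ else {tau hQ i}
  cover n := by
    obtain ⟨k, hk⟩ := S.cover n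
    exact ⟨⟨k.1, by omega⟩, by simpa [sig, k.2] using hk⟩
  len i := if h : i.1 < K then S.len (sig hQ c i) else 0
  enc i v j :=
    if h : i.1 < K then S.enc (sig hQ c i) v (Fin.cast (dif_pos h) j)
    else (Fin.cast (dif_neg h) j).elim0
  dec i q hq X v :=
    S.dec (sig hQ c i) q
      (by
        by_cases h : i.1 < K
        · simp [h] at hq
        · simp only [if_neg h, Finset.mem_singleton] at hq
          subst hq
          rw [sig_ge hQ c i h]
          exact hc _)
      (fun j b => X ⟨j.1, by omega⟩
        (Fin.cast (by simp [sig, j.2]) b)) v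
  correct v i q hq := by
    set sg := sig hQ c i with hsg
    have hq' : q ∈ S.W sg := by
      by_cases h : i.1 < K
      · simp [h] at hq
      · simp only [if_neg h, Finset.mem_singleton] at hq
        subst hq
        rw [hsg, sig_ge hQ c i h]
        exact hc _
    refine Eq.trans ?_ (S.correct v sg q hq')
    have key : ∀ (M1 M2 : (j : Fin K) → Fin (S.len j) → Bool)
        (h1 h2 : q ∈ S.W sg), M1 = M2 →
        S.dec sg q h1 M1 (fun q' n => v (q', n.1)) =
        S.dec sg q h2 M2 (fun q' n => v (q', n.1)) := by
      rintro M1 M2 h1 h2 rfl; rfl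
    apply key
    funext j b
    have hj : (j.1 : ℕ) < K := j.2
    show (if h : (j.1 : ℕ) < K then _ else _) = _
    split
    · have hs : sig hQ c (⟨j.1, by omega⟩ : Fin (K + Q)) = j := by simp [sig, hj]
      rw [Fin.cast_cast]
      exact enc_congr S v hs _ b
    · exact absurd hj ‹_›
end Boost

/-- any scheme whose Reduce assignment partitions `Fin Q` can be
turned into a scheme with singleton Reduce assignment, using at least as many
servers, with the same peak computation load and the same communication load. -/
theorem singletonize_reduce (K N Q T : ℕ) (hK : 0 < K) (hN : 0 < N) (hQ : 0 < Q)
    (hT : 0 < T) (S : Scheme K N Q T)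
    (hdisj : ∀ j k : Fin K, j ≠ k → Disjoint (S.W j) (S.W k))
    (hcover : ∀ q : Fin Q, ∃ k : Fin K, q ∈ S.W k) :
    ∃ (K' : ℕ) (S' : Scheme K' N Q T), K ≤ K' ∧ SingletonReduce S' ∧
      peakLoad S' = peakLoad S ∧ commLoad S' = commLoad S := by
  classical
  set c : Fin Q → Fin K := fun q => (hcover q).choose with hc_def
  have hc : ∀ q, q ∈ S.W (c q) := fun q => (hcover q).choose_spec
  refine ⟨K + Q, Boost.boost hQ S c hc, Nat.le_add_right _ _, ?_, ?_, ?_⟩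
  · refine ⟨?_, ?_, ?_⟩
    · intro j k hjk
      show Disjoint (if (j:ℕ) < K then ∅ else {Boost.tau hQ j})
        (if (k:ℕ) < K then ∅ else {Boost.tau hQ k})
      split
      · simp
      · split
        · simp
        · rename_i hj hk
          simp only [Finset.disjoint_singleton_left, Finset.mem_singleton]
          intro he
          apply hjk
          have h1 : (j:ℕ) - K < Q := by omega
          have h2 : (k:ℕ) - K < Q := by omega
          have := congrArg Fin.val he
          simp only [Boost.tau, Nat.mod_eq_of_lt h1, Nat.mod_eq_of_lt h2] at this
          exact Fin.ext (by omega)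
    · intro q
      refine ⟨⟨K + q.1, by omega⟩, ?_⟩
      show q ∈ (if K + q.1 < K then ∅ else {Boost.tau hQ ⟨K + q.1, by omega⟩})
      rw [if_neg (by omega)]
      simp only [Finset.mem_singleton, Boost.tau]
      exact Fin.ext (by simp [Nat.mod_eq_of_lt q.2])
    · intro k
      show (if (k:ℕ) < K then (∅ : Finset (Fin Q)) else {Boost.tau hQ k}).card ≤ 1
      split <;> simp
  · unfold peakLoad
    congr 1
    norm_cast
    apply le_antisymm
    · exact Finset.sup_le fun i _ =>
        Finset.le_sup (f := fun k : Fin K => (S.M k).card) (Finset.mem_univ (Boost.sig hQ c i))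
    · refine Finset.sup_le fun k _ => ?_
      have : S.M k = S.M (Boost.sig hQ c ⟨k.1, by omega⟩) := by
        simp [Boost.sig, k.2]
      rw [this]
      exact Finset.le_sup (f := fun i : Fin (K+Q) =>
        (S.M (Boost.sig hQ c i)).card) (Finset.mem_univ (⟨k.1, by omega⟩ : Fin (K + Q)))
  · unfold commLoad
    congr 1
    rw [Fin.sum_univ_add]
    have h2 : ∀ q : Fin Q,
        ((Boost.boost hQ S c hc).len (Fin.natAdd K q) : ℝ) = 0 := by
      intro q
      show ((if h : K + q.1 < K then _ else 0 : ℕ) : ℝ) = 0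
      rw [dif_neg (by omega)]
      simp
    simp only [h2, Finset.sum_const_zero, add_zero]
    refine Finset.sum_congr rfl fun k _ => ?_
    show ((if h : (k:ℕ) < K then S.len (Boost.sig hQ c (Fin.castAdd Q k)) else 0 : ℕ) : ℝ) = _
    rw [dif_pos k.2]
    congr 2
    simp [Boost.sig, k.2, Fin.castAdd]
end

section
/- Let Q ≥ 2, let r ∈ {1,…,Q−1}, let H = ⌈Q/r⌉, and suppose N is a positive multiple of H·C(Q,r) (binomial coefficient). Then for every T ≥ 1 there exists a (Q+H, N, Q, T)-scheme with singleton Reduce assignment (server k reduces function k for k ∈ {1,…,Q}, and the remaining H servers reduce nothing) in which each of the Q solver servers maps exactly r·N/Q files, each of the H helper servers maps exactly N/H files (so the peak computation load equals r/Q), and the communication load equals exactly (Q−r)/(Q·(r+1)). -/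
namespace CDC

abbrev SubR (Q r : ℕ) := {S : Finset (Fin Q) // S.card = r}

lemma card_subR (Q r : ℕ) : Fintype.card (SubR Q r) = Q.choose r := by
  rw [Fintype.card_subtype]
  have h : (Finset.univ.filter fun S : Finset (Fin Q) => S.card = r)
      = Finset.powersetCard r Finset.univ := by
    rw [Finset.powersetCard_eq_filter, Finset.powerset_univ]
  rw [h, Finset.card_powersetCard, Finset.card_univ, Fintype.card_fin]

def eqProd2 {α β γ : Type*} (P : β → Prop) : {x : α × β × γ // P x.2.1} ≃ α × {b // P b} × γ where
  toFun x := (x.1.1, ⟨x.1.2.1, x.2⟩, x.1.2.2)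
  invFun y := ⟨(y.1, y.2.1.1, y.2.2), y.2.1.2⟩
  left_inv _ := rfl
  right_inv _ := rfl

def eqProd1 {α β γ : Type*} (P : α → Prop) : {x : α × β × γ // P x.1} ≃ {a // P a} × β × γ where
  toFun x := (⟨x.1.1, x.2⟩, x.1.2.1, x.1.2.2)
  invFun y := ⟨(y.1.1, y.2.1, y.2.2), y.1.2⟩
  left_inv _ := rfl
  right_inv _ := rfl

lemma card_subR_mem (Q r : ℕ) (hr : 1 ≤ r) (q0 : Fin Q) :
    Fintype.card {S : SubR Q r // q0 ∈ S.1} = (Q - 1).choose (r - 1) := by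
  rw [Fintype.card_congr (Equiv.subtypeSubtypeEquivSubtypeInter
    (fun S : Finset (Fin Q) => S.card = r) (fun S => q0 ∈ S)), Fintype.card_subtype]
  have h : (Finset.univ.filter fun S : Finset (Fin Q) => S.card = r ∧ q0 ∈ S).card
      = ((Finset.univ.erase q0).powersetCard (r - 1)).card := by
    refine Finset.card_bij' (fun S _ => S.erase q0) (fun S _ => insert q0 S) ?_ ?_ ?_ ?_
    · intro S hS
      simp only [Finset.mem_filter, Finset.mem_univ, true_and] at hS
      rw [Finset.mem_powersetCard]
      exact ⟨fun a ha => Finset.mem_erase.2 ⟨(Finset.mem_erase.1 ha).1, Finset.mem_univ a⟩,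
        by rw [Finset.card_erase_of_mem hS.2, hS.1]⟩
    · intro S hS
      rw [Finset.mem_powersetCard] at hS
      have hq0 : q0 ∉ S := fun h => (Finset.mem_erase.1 (hS.1 h)).1 rfl
      simp only [Finset.mem_filter, Finset.mem_univ, true_and]
      exact ⟨by rw [Finset.card_insert_of_notMem hq0, hS.2]; omega, Finset.mem_insert_self _ _⟩
    · intro S hS
      simp only [Finset.mem_filter, Finset.mem_univ, true_and] at hS
      exact Finset.insert_erase hS.2
    · intro S hS
      rw [Finset.mem_powersetCard] at hS
      have hq0 : q0 ∉ S := fun h => (Finset.mem_erase.1 (hS.1 h)).1 rfl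
      exact Finset.erase_insert hq0
  rw [h, Finset.card_powersetCard, Finset.card_erase_of_mem (Finset.mem_univ q0),
    Finset.card_univ, Fintype.card_fin]

lemma card_fin_val_eq (H : ℕ) (v : ℕ) (hv : v < H) :
    Fintype.card {a : Fin H // (a : ℕ) = v} = 1 := by
  rw [Fintype.card_congr (Equiv.subtypeEquivRight (q := fun a : Fin H => a = ⟨v, hv⟩)
    (fun a => by simp [Fin.ext_iff]))]
  exact Fintype.card_subtype_eq _

variable {Q r H N g m T : ℕ}

def MapF (e : Fin H × SubR Q r × Fin g ≃ Fin N) (k : Fin (Q + H)) : Finset (Fin N) :=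
  if h : (k : ℕ) < Q then
    Finset.univ.filter (fun n => (⟨(k : ℕ), h⟩ : Fin Q) ∈ ((e.symm n).2.1 : Finset (Fin Q)))
  else
    Finset.univ.filter (fun n => (((e.symm n).1 : Fin H) : ℕ) = (k : ℕ) - Q)

lemma mem_MapF_solver (e : Fin H × SubR Q r × Fin g ≃ Fin N) {k : Fin (Q + H)}
    (hk : (k : ℕ) < Q) (n : Fin N) :
    n ∈ MapF e k ↔ (⟨(k : ℕ), hk⟩ : Fin Q) ∈ ((e.symm n).2.1 : Finset (Fin Q)) := by
  simp [MapF, hk]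

lemma mem_MapF_helper (e : Fin H × SubR Q r × Fin g ≃ Fin N) {k : Fin (Q + H)}
    (hk : ¬ (k : ℕ) < Q) (n : Fin N) :
    n ∈ MapF e k ↔ (((e.symm n).1 : Fin H) : ℕ) = (k : ℕ) - Q := by
  simp [MapF, hk]

lemma mem_MapF_helper' (e : Fin H × SubR Q r × Fin g ≃ Fin N) (h : Fin H) (B : SubR Q r)
    (j : Fin g) (k : Fin (Q + H)) (hk : (k : ℕ) = Q + (h : ℕ)) :
    e (h, B, j) ∈ MapF e k := by
  have hk' : ¬ (k : ℕ) < Q := by omega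
  rw [mem_MapF_helper e hk', Equiv.symm_apply_apply, hk]
  simp

lemma card_MapF_solver (hr : 1 ≤ r) (e : Fin H × SubR Q r × Fin g ≃ Fin N)
    (k : Fin (Q + H)) (hk : (k : ℕ) < Q) :
    (MapF e k).card = H * ((Q - 1).choose (r - 1)) * g := by
  rw [MapF, dif_pos hk, ← Fintype.card_subtype,
    Fintype.card_congr ((Equiv.subtypeEquiv e.symm (fun n => Iff.rfl)).trans
      (eqProd2 (fun S : SubR Q r => (⟨(k : ℕ), hk⟩ : Fin Q) ∈ S.1))),
    Fintype.card_prod, Fintype.card_prod, Fintype.card_fin, Fintype.card_fin,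
    card_subR_mem Q r hr]
  ring

lemma card_MapF_helper (e : Fin H × SubR Q r × Fin g ≃ Fin N)
    (k : Fin (Q + H)) (hk : ¬ (k : ℕ) < Q) (hkH : (k : ℕ) - Q < H) :
    (MapF e k).card = Q.choose r * g := by
  rw [MapF, dif_neg hk, ← Fintype.card_subtype,
    Fintype.card_congr ((Equiv.subtypeEquiv e.symm (fun n => Iff.rfl)).trans
      (eqProd1 (fun a : Fin H => (a : ℕ) = (k : ℕ) - Q))),
    Fintype.card_prod, Fintype.card_prod, Fintype.card_fin,
    card_fin_val_eq H _ hkH, card_subR]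
  ring

def WF (Q H : ℕ) (k : Fin (Q + H)) : Finset (Fin Q) :=
  if h : (k : ℕ) < Q then {⟨(k : ℕ), h⟩} else ∅

lemma WF_pos {Q H : ℕ} {k : Fin (Q + H)} (h : (k : ℕ) < Q) :
    WF Q H k = {(⟨(k : ℕ), h⟩ : Fin Q)} := dif_pos h

lemma WF_neg {Q H : ℕ} {k : Fin (Q + H)} (h : ¬ (k : ℕ) < Q) : WF Q H k = ∅ := dif_neg h

def lenF (Q H m : ℕ) (k : Fin (Q + H)) : ℕ := if (k : ℕ) < Q then 0 else m

def toZ (b : Bool) : ZMod 2 := if b then 1 else 0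
def ofZ (z : ZMod 2) : Bool := decide (z = 1)

@[simp] lemma ofZ_toZ (b : Bool) : ofZ (toZ b) = b := by cases b <;> decide
@[simp] lemma toZ_ofZ (z : ZMod 2) : toZ (ofZ z) = z := by revert z; decide

def encF (e : Fin H × SubR Q r × Fin g ≃ Fin N)
    (eM : SubR Q (r+1) × Fin g × Fin T ≃ Fin m) (k : Fin (Q + H))
    (vloc : Fin Q → {n : Fin N // n ∈ MapF e k} → Fin T → Bool)
    (i : Fin (lenF Q H m k)) : Bool :=
  if hk : (k : ℕ) < Q then true
  else
    let idx := eM.symm ⟨i.1, by simpa [lenF, hk] using i.2⟩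
    let A := idx.1
    let j := idx.2.1
    let t := idx.2.2
    ofZ (∑ a ∈ A.1, if pf : (A.1.erase a).card = r then
      (if mem : e (⟨(k : ℕ) - Q, by have := k.isLt; omega⟩, ⟨A.1.erase a, pf⟩, j) ∈ MapF e k
        then toZ (vloc a ⟨_, mem⟩ t) else 0) else 0)

lemma encF_helper (e : Fin H × SubR Q r × Fin g ≃ Fin N)
    (eM : SubR Q (r+1) × Fin g × Fin T ≃ Fin m) (k : Fin (Q + H)) (hk : ¬ (k : ℕ) < Q)
    (vloc : Fin Q → {n : Fin N // n ∈ MapF e k} → Fin T → Bool)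
    (A : SubR Q (r+1)) (j : Fin g) (t : Fin T) (i : Fin (lenF Q H m k))
    (hi : (i : ℕ) = ((eM (A, j, t)) : ℕ)) :
    encF e eM k vloc i = ofZ (∑ a ∈ A.1, if pf : (A.1.erase a).card = r then
      (if mem : e (⟨(k : ℕ) - Q, by have := k.isLt; omega⟩, ⟨A.1.erase a, pf⟩, j) ∈ MapF e k
        then toZ (vloc a ⟨_, mem⟩ t) else 0) else 0) := by
  rw [encF, dif_neg hk]
  have h2 : (⟨i.1, by simpa [lenF, hk] using i.2⟩ : Fin m) = eM (A, j, t) := Fin.ext hi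
  rw [h2, Equiv.symm_apply_apply]

def decF (e : Fin H × SubR Q r × Fin g ≃ Fin N)
    (eM : SubR Q (r+1) × Fin g × Fin T ≃ Fin m) (k : Fin (Q + H)) (q : Fin Q)
    (msgs : (j : Fin (Q + H)) → Fin (lenF Q H m j) → Bool)
    (loc : Fin Q → {n : Fin N // n ∈ MapF e k} → Fin T → Bool) :
    Fin N → Fin T → Bool := fun n t =>
  if hn : n ∈ MapF e k then loc q ⟨n, hn⟩ t
  else if hk : (k : ℕ) < Q then
    let qk : Fin Q := ⟨(k : ℕ), hk⟩
    let x := e.symm n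
    if pfA : (insert qk x.2.1.1).card = r + 1 then
      let A : SubR Q (r+1) := ⟨insert qk x.2.1.1, pfA⟩
      let srv : Fin (Q + H) := ⟨Q + x.1.1, by have := x.1.isLt; omega⟩
      let msgbit := msgs srv ⟨(eM (A, x.2.2, t)).1, by
        simp only [lenF, srv, Fin.val_mk, if_neg (by omega : ¬ (Q + x.1.1 < Q))]
        exact (eM (A, x.2.2, t)).isLt⟩
      ofZ (toZ msgbit - ∑ a ∈ x.2.1.1, (if pf : (A.1.erase a).card = r then
        (if mem : e (x.1, ⟨A.1.erase a, pf⟩, x.2.2) ∈ MapF e k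
          then toZ (loc a ⟨_, mem⟩ t) else 0) else 0))
    else true
  else true

lemma correctF (e : Fin H × SubR Q r × Fin g ≃ Fin N)
    (eM : SubR Q (r+1) × Fin g × Fin T ≃ Fin m)
    (v : Fin Q × Fin N → Fin T → Bool) (k : Fin (Q + H)) (q : Fin Q) (hq : q ∈ WF Q H k) :
    decF e eM k q (fun j => encF e eM j (fun q' n => v (q', n.1)))
      (fun q' n => v (q', n.1)) = fun n => v (q, n) := by
  by_cases hk : (k : ℕ) < Q
  · rw [WF, dif_pos hk, Finset.mem_singleton] at hq
    subst hq
    funext n t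
    by_cases hn : n ∈ MapF e k
    · rw [decF, dif_pos hn]
    · set qk : Fin Q := ⟨(k : ℕ), hk⟩ with hqk_def
      set x := e.symm n with hx
      have hS : x.2.1.1.card = r := x.2.1.2
      have hqk : qk ∉ x.2.1.1 := by
        rw [mem_MapF_solver e hk] at hn; exact hn
      have pfA : (insert qk x.2.1.1).card = r + 1 := by
        rw [Finset.card_insert_of_notMem hqk, hS]
      rw [decF, dif_neg hn, dif_pos hk]
      simp only
      rw [dif_pos pfA]
      rw [encF_helper e eM _ (by simp) _ ⟨insert qk x.2.1.1, pfA⟩ x.2.2 t _ rfl]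
      simp only [Fin.val_mk, Nat.add_sub_cancel_left, Fin.eta]
      rw [Finset.sum_insert hqk]
      have pf1 : ((insert qk x.2.1.1).erase qk).card = r := by
        rw [Finset.erase_insert hqk]; exact hS
      rw [dif_pos pf1, dif_pos (mem_MapF_helper' e x.1 _ x.2.2 _ (by simp [hx]))]
      have hB : (⟨(insert qk x.2.1.1).erase qk, pf1⟩ : SubR Q r) = x.2.1 :=
        Subtype.ext (Finset.erase_insert hqk)
      rw [hB]
      have he : e (x.1, x.2.1, x.2.2) = n := by
        rw [show (x.1, x.2.1, x.2.2) = x from rfl, hx, Equiv.apply_symm_apply]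
      rw [he, toZ_ofZ]
      have hsum : ∀ a ∈ x.2.1.1,
          (if pf : ((insert qk x.2.1.1).erase a).card = r then
            (if mem : e (x.1, ⟨(insert qk x.2.1.1).erase a, pf⟩, x.2.2) ∈
                MapF e (⟨Q + x.1.1, by have := x.1.isLt; omega⟩ : Fin (Q + H))
              then toZ (v (a, (e (x.1, ⟨(insert qk x.2.1.1).erase a, pf⟩, x.2.2))) t) else 0)
            else 0) =
          (if pf : ((insert qk x.2.1.1).erase a).card = r then
            (if mem : e (x.1, ⟨(insert qk x.2.1.1).erase a, pf⟩, x.2.2) ∈ MapF e k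
              then toZ (v (a, (e (x.1, ⟨(insert qk x.2.1.1).erase a, pf⟩, x.2.2))) t) else 0)
            else 0) := by
        intro a ha
        have pfa : ((insert qk x.2.1.1).erase a).card = r := by
          rw [Finset.card_erase_of_mem (Finset.mem_insert_of_mem ha), pfA]
          omega
        have memdec : e (x.1, ⟨(insert qk x.2.1.1).erase a, pfa⟩, x.2.2) ∈ MapF e k := by
          rw [mem_MapF_solver e hk, Equiv.symm_apply_apply]
          exact Finset.mem_erase.2 ⟨fun hc => hqk (by rw [hqk_def, hc]; exact ha),
            Finset.mem_insert_self _ _⟩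
        rw [dif_pos pfa, dif_pos pfa, dif_pos (mem_MapF_helper' e x.1 _ x.2.2 _ (by simp [hx])),
          dif_pos memdec]
      rw [Finset.sum_congr rfl hsum, add_sub_cancel_right, ofZ_toZ]
  · rw [WF, dif_neg hk] at hq
    exact absurd hq (Finset.notMem_empty q)

end CDC

/-- achievability.  For `1 ≤ r ≤ Q-1`, `H = ⌈Q/r⌉` and `N` a
positive multiple of `H·C(Q,r)`, there is a `(Q+H,N,Q,T)`-scheme with singleton
Reduce assignment in which server `k < Q` reduces function `k`, helpers reduce
nothing, each solver maps `r·N/Q` files, each helper maps `N/H` files (so the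
peak computation load is `r/Q`), and the communication load is
`(Q-r)/(Q·(r+1))`. -/
theorem coded_scheme_exists (Q r H N : ℕ) (hQ : 2 ≤ Q) (hr1 : 1 ≤ r) (hr2 : r ≤ Q - 1)
    (hH : H = ⌈(Q : ℚ) / (r : ℚ)⌉₊) (hN : 0 < N) (hdvd : H * Nat.choose Q r ∣ N) :
    ∀ T : ℕ, 1 ≤ T → ∃ S : Scheme (Q + H) N Q T,
      SingletonReduce S ∧
      (∀ (k : Fin (Q + H)) (h : (k : ℕ) < Q), S.W k = {⟨(k : ℕ), h⟩}) ∧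
      (∀ k : Fin (Q + H), Q ≤ (k : ℕ) → S.W k = ∅) ∧
      (∀ k : Fin (Q + H), (k : ℕ) < Q → (S.M k).card * Q = r * N) ∧
      (∀ k : Fin (Q + H), Q ≤ (k : ℕ) → (S.M k).card * H = N) ∧
      peakLoad S = (r : ℝ) / Q ∧
      commLoad S = ((Q : ℝ) - r) / ((Q : ℝ) * (r + 1)) := by
  intro T hT
  have hrQ : r + 1 ≤ Q := by omega
  have hH1 : 1 ≤ H := by
    rw [hH]
    have hpos : (0 : ℚ) < (Q : ℚ) / (r : ℚ) := by
      apply div_pos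
      · exact_mod_cast (by omega : 0 < Q)
      · exact_mod_cast hr1
    exact Nat.one_le_iff_ne_zero.2 (by positivity)
  have hQrH : Q ≤ r * H := by
    have h1 : (Q : ℚ) / (r : ℚ) ≤ (H : ℚ) := by rw [hH]; exact Nat.le_ceil _
    have hr0 : (0 : ℚ) < (r : ℚ) := by exact_mod_cast hr1
    have h2 := (div_le_iff₀ hr0).1 h1
    have h3 : (Q : ℚ) ≤ ((r * H : ℕ) : ℚ) := by push_cast; linarith
    exact_mod_cast h3
  set c := Q.choose r with hc
  set c' := Q.choose (r + 1) with hc'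
  set a := (Q - 1).choose (r - 1) with ha
  set g := N / (H * c) with hg
  have hcpos : 0 < c := Nat.choose_pos (by omega)
  have hNg : H * c * g = N := Nat.mul_div_cancel' hdvd
  have hgpos : 0 < g := by
    rcases Nat.eq_zero_or_pos g with h | h
    · rw [h, Nat.mul_zero] at hNg; omega
    · exact h
  set m := c' * g * T with hm
  have key : Q * a = c * r := by
    obtain ⟨Q', rfl⟩ : ∃ Q', Q = Q' + 1 := ⟨Q - 1, by omega⟩
    obtain ⟨r', rfl⟩ : ∃ r', r = r' + 1 := ⟨r - 1, by omega⟩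
    simpa [ha, hc] using Nat.add_one_mul_choose_eq Q' r'
  have key2 : c' * (r + 1) = c * (Q - r) := by
    rw [hc, hc']; exact Nat.choose_succ_right_eq Q r
  have hcard1 : Fintype.card (Fin H × CDC.SubR Q r × Fin g) = N := by
    rw [Fintype.card_prod, Fintype.card_prod, Fintype.card_fin, Fintype.card_fin,
      CDC.card_subR, ← hc, ← hNg]
    ring
  have hcard2 : Fintype.card (CDC.SubR Q (r + 1) × Fin g × Fin T) = m := by
    rw [Fintype.card_prod, Fintype.card_prod, Fintype.card_fin, Fintype.card_fin,
      CDC.card_subR, ← hc', hm]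
    ring
  set e := Fintype.equivFinOfCardEq hcard1 with he
  set eM := Fintype.equivFinOfCardEq hcard2 with heM
  have hsolvercard : ∀ (k : Fin (Q + H)), (k : ℕ) < Q → (CDC.MapF e k).card = H * a * g :=
    fun k hk => CDC.card_MapF_solver hr1 e k hk
  have hhelpercard : ∀ (k : Fin (Q + H)), ¬ (k : ℕ) < Q → (CDC.MapF e k).card = c * g :=
    fun k hk => by
      rw [CDC.card_MapF_helper e k hk (by have := k.isLt; omega), ← hc]
  have hsol : (H * a * g) * Q = r * N := by
    calc (H * a * g) * Q = (Q * a) * (H * g) := by ring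
      _ = (c * r) * (H * g) := by rw [key]
      _ = r * (H * c * g) := by ring
      _ = r * N := by rw [hNg]
  have hhelperle : c * g ≤ H * a * g := by
    have h1 : c ≤ H * a := by
      have h2 : c * r ≤ (H * a) * r := by
        calc c * r = Q * a := key.symm
          _ ≤ (r * H) * a := Nat.mul_le_mul_right a hQrH
          _ = (H * a) * r := by ring
      exact Nat.le_of_mul_le_mul_right h2 (by omega)
    exact Nat.mul_le_mul_right g h1
  refine ⟨{ M := CDC.MapF e, W := CDC.WF Q H, cover := ?_, len := CDC.lenF Q H m,
            enc := CDC.encF e eM,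
            dec := fun k q _ msgs loc => CDC.decF e eM k q msgs loc,
            correct := fun v k q hq => CDC.correctF e eM v k q hq }, ?_, ?_, ?_, ?_, ?_, ?_, ?_⟩
  · -- cover
    intro n
    have hcardS : ((e.symm n).2.1 : Finset (Fin Q)).card = r := (e.symm n).2.1.2
    have hne : ((e.symm n).2.1 : Finset (Fin Q)).Nonempty := by
      rw [← Finset.card_pos, hcardS]; omega
    obtain ⟨q0, hq0⟩ := hne
    refine ⟨⟨(q0 : ℕ), by have := q0.isLt; omega⟩, ?_⟩
    rw [CDC.mem_MapF_solver e (q0.isLt : ((⟨(q0 : ℕ), by have := q0.isLt; omega⟩ :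
      Fin (Q + H)) : ℕ) < Q)]
    simpa using hq0
  · -- SingletonReduce
    refine ⟨?_, ?_, ?_⟩
    · intro j k hjk
      show Disjoint (CDC.WF Q H j) (CDC.WF Q H k)
      by_cases hj : (j : ℕ) < Q
      · by_cases hk : (k : ℕ) < Q
        · rw [CDC.WF_pos hj, CDC.WF_pos hk, Finset.disjoint_singleton]
          exact fun h2 => hjk (Fin.ext (by simpa [Fin.ext_iff] using h2))
        · rw [CDC.WF_neg hk]; exact Finset.disjoint_empty_right _
      · rw [CDC.WF_neg hj]; exact Finset.disjoint_empty_left _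
    · intro q
      refine ⟨⟨(q : ℕ), by have := q.isLt; omega⟩, ?_⟩
      show q ∈ CDC.WF Q H _
      rw [CDC.WF_pos (q.isLt : ((⟨(q : ℕ), by have := q.isLt; omega⟩ :
        Fin (Q + H)) : ℕ) < Q)]
      simp [Fin.ext_iff]
    · intro k
      show (CDC.WF Q H k).card ≤ 1
      by_cases hk : (k : ℕ) < Q
      · rw [CDC.WF_pos hk]; simp
      · rw [CDC.WF_neg hk]; simp
  · -- W for solvers
    intro k h
    exact CDC.WF_pos h
  · -- W for helpers
    intro k h
    exact CDC.WF_neg (by omega)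
  · -- solver cards
    intro k hk
    show (CDC.MapF e k).card * Q = r * N
    rw [hsolvercard k hk]
    exact hsol
  · -- helper cards
    intro k hk
    show (CDC.MapF e k).card * H = N
    rw [hhelpercard k (by omega)]
    calc c * g * H = H * c * g := by ring
      _ = N := hNg
  · -- peak load
    have hsup : (Finset.univ.sup fun k : Fin (Q + H) => (CDC.MapF e k).card) = H * a * g := by
      apply le_antisymm
      · apply Finset.sup_le
        intro k _
        by_cases hk : (k : ℕ) < Q
        · rw [hsolvercard k hk]
        · rw [hhelpercard k hk]; exact hhelperle
      · have h0 : ((⟨0, by omega⟩ : Fin (Q + H)) : ℕ) < Q := by simp; omega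
        calc H * a * g = (CDC.MapF e ⟨0, by omega⟩).card := (hsolvercard _ h0).symm
          _ ≤ _ := Finset.le_sup (f := fun k : Fin (Q + H) => (CDC.MapF e k).card)
            (Finset.mem_univ _)
    show ((Finset.univ.sup fun k : Fin (Q + H) => (CDC.MapF e k).card : ℕ) : ℝ) / N
      = (r : ℝ) / Q
    have hN0 : (N : ℝ) ≠ 0 := Nat.cast_ne_zero.2 (by omega)
    have hQ0 : (Q : ℝ) ≠ 0 := Nat.cast_ne_zero.2 (by omega)
    rw [hsup, div_eq_div_iff hN0 hQ0]
    exact_mod_cast hsol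
  · -- communication load
    have hlen : ∀ i : Fin Q, CDC.lenF Q H m (Fin.castAdd H i) = 0 := fun i => if_pos i.isLt
    have hlen2 : ∀ i : Fin H, CDC.lenF Q H m (Fin.natAdd Q i) = m :=
      fun i => if_neg (Nat.not_lt.2 (Nat.le_add_right Q i.1))
    have hsum : (∑ k : Fin (Q + H), ((CDC.lenF Q H m k : ℕ) : ℝ)) = (H : ℝ) * m := by
      rw [Fin.sum_univ_add]
      simp [hlen, hlen2, Finset.sum_const, Finset.card_univ, mul_comm]
    show (∑ k : Fin (Q + H), ((CDC.lenF Q H m k : ℕ) : ℝ)) / ((Q : ℝ) * N * T)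
      = ((Q : ℝ) - r) / ((Q : ℝ) * (r + 1))
    have hN0 : (N : ℝ) ≠ 0 := Nat.cast_ne_zero.2 (by omega)
    have hQ0 : (Q : ℝ) ≠ 0 := Nat.cast_ne_zero.2 (by omega)
    have hT0 : (T : ℝ) ≠ 0 := Nat.cast_ne_zero.2 (by omega)
    have hr0R : (r : ℝ) + 1 ≠ 0 := by positivity
    rw [hsum, div_eq_div_iff (mul_ne_zero (mul_ne_zero hQ0 hN0) hT0) (mul_ne_zero hQ0 hr0R)]
    have hNr : (N : ℝ) = (H : ℝ) * c * g := by exact_mod_cast hNg.symm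
    have key2R : (c' : ℝ) * ((r : ℝ) + 1) = (c : ℝ) * ((Q : ℝ) - r) := by
      have h4 := congrArg (fun x : ℕ => (x : ℝ)) key2
      push_cast [Nat.cast_sub (show r ≤ Q by omega)] at h4
      linarith
    rw [hm]
    push_cast
    linear_combination ((H : ℝ) * g * T * Q) * key2R - (((Q : ℝ) - r) * Q * T) * hNr
end

section
/- Let c_m, c_s > 0 be reals, let f(r) = c_m·r/Q + c_s·(Q−r)/(Q·(r+1)), and let r* be the largest element of argmin_{r ∈ {0,1,…,Q}} f(r). Assume 0 < r* < Q. Then every (K,N,Q,T)-scheme with singleton Reduce assignment that attains the lower bound with equality, i.e., c_m·p + c_s·L = min_{r ∈ {0,…,Q}} f(r), satisfies K ≥ Q + ⌈Q/r*⌉. -/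
open Finset

/-- The set of functions whose reducer maps file `n`. -/
def DnSet {K N Q T : ℕ} (S : Scheme K N Q T) (k : Fin Q → Fin K) (n : Fin N) :
    Finset (Fin Q) :=
  Finset.univ.filter (fun q => n ∈ S.M (k q))

/-- Number of functions preceding (in the order `σ`) all reducers that map `n`. -/
def iCount {K N Q T : ℕ} (S : Scheme K N Q T) (k : Fin Q → Fin K)
    (σ : Equiv.Perm (Fin Q)) (n : Fin N) : ℕ :=
  (Finset.univ.filter (fun x : Fin Q => ∀ y ∈ DnSet S k n, σ x < σ y)).card

lemma chain_bound {K N Q T : ℕ} (S : Scheme K N Q T) (hQ : 0 < Q)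
    (k : Fin Q → Fin K) (hk : ∀ q, q ∈ S.W (k q)) (σ : Equiv.Perm (Fin Q)) :
    T * ∑ n : Fin N, iCount S k σ n + S.len (k (σ.symm ⟨0, hQ⟩))
      ≤ ∑ j : Fin K, S.len j := by
  classical
  set k1 : Fin K := k (σ.symm ⟨0, hQ⟩) with hk1
  set F : Finset (Fin Q × Fin N) :=
    Finset.univ.filter (fun p => ∀ y ∈ DnSet S k p.2, σ p.1 < σ y) with hF
  set vex : (↥F → Fin T → Bool) → (Fin Q × Fin N → Fin T → Bool) :=
    fun w p => if h : p ∈ F then w ⟨p, h⟩ else fun _ => false with hvex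
  have hnotF : ∀ (q' : Fin Q) (n : Fin N), n ∈ S.M k1 → (q', n) ∉ F := by
    intro q' n hn hmem
    have h2 := (Finset.mem_filter.1 hmem).2
    have hy : σ.symm ⟨0, hQ⟩ ∈ DnSet S k n := by
      simp only [DnSet, Finset.mem_filter, Finset.mem_univ, true_and]
      exact hn
    have := h2 (σ.symm ⟨0, hQ⟩) hy
    rw [Equiv.apply_symm_apply] at this
    exact absurd this (by simp [Fin.lt_def])
  set G : (↥F → Fin T → Bool) → ((j : {j : Fin K // j ≠ k1}) → Fin (S.len j.1) → Bool) :=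
    fun w j => S.enc j.1 (fun q' n => vex w (q', n.1)) with hG
  have hinj : Function.Injective G := by
    intro w w' hww
    -- all messages agree
    have hmsgs : (fun j => S.enc j (fun q' n => vex w (q', n.1)))
        = (fun j => S.enc j (fun q' n => vex w' (q', n.1))) := by
      funext j
      rcases eq_or_ne j k1 with rfl | hj
      · have harg : (fun (q' : Fin Q) (n : {n : Fin N // n ∈ S.M k1}) => vex w (q', n.1))
            = (fun q' n => vex w' (q', n.1)) := by
          funext q' n
          simp only [hvex]
          rw [dif_neg (hnotF q' n.1 n.2), dif_neg (hnotF q' n.1 n.2)]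
        rw [harg]
      · exact congrFun hww ⟨j, hj⟩
    -- rows agree, by strong induction on the position of the row
    have rows : ∀ m : ℕ, ∀ q : Fin Q, (σ q : ℕ) = m →
        ∀ n : Fin N, vex w (q, n) = vex w' (q, n) := by
      intro m
      induction m using Nat.strong_induction_on with
      | _ m ih =>
        intro q hq n
        have hloc : (fun (q' : Fin Q) (nn : {n : Fin N // n ∈ S.M (k q)}) => vex w (q', nn.1))
            = (fun q' nn => vex w' (q', nn.1)) := by
          funext q' nn
          by_cases hmem : ((q', nn.1) : Fin Q × Fin N) ∈ F
          · have hlt : σ q' < σ q := by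
              have h2 := (Finset.mem_filter.1 hmem).2
              refine h2 q ?_
              simp only [DnSet, Finset.mem_filter, Finset.mem_univ, true_and]
              exact nn.2
            exact ih ((σ q' : ℕ)) (by rw [← hq]; exact hlt) q' rfl nn.1
          · simp only [hvex]
            rw [dif_neg hmem, dif_neg hmem]
        have hrow : (fun n => vex w (q, n)) = (fun n => vex w' (q, n)) := by
          rw [← S.correct (vex w) (k q) q (hk q), ← S.correct (vex w') (k q) q (hk q),
            hmsgs, hloc]
        exact congrFun hrow n
    funext pb
    have h2 := rows (σ pb.1.1) pb.1.1 rfl pb.1.2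
    simp only [hvex, dif_pos pb.2] at h2
    exact h2
  -- cardinality comparison
  have hcard := Fintype.card_le_of_injective G hinj
  have hsrc : Fintype.card (↥F → Fin T → Bool) = 2 ^ (T * F.card) := by
    rw [Fintype.card_fun, Fintype.card_fun, Fintype.card_bool, Fintype.card_fin,
      Fintype.card_coe, ← pow_mul, mul_comm]
  have htgt : Fintype.card ((j : {j : Fin K // j ≠ k1}) → Fin (S.len j.1) → Bool)
      = 2 ^ (∑ j ∈ Finset.univ.erase k1, S.len j) := by
    rw [Fintype.card_pi]
    have h1 : ∀ j : {j : Fin K // j ≠ k1},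
        Fintype.card (Fin (S.len j.1) → Bool) = 2 ^ (S.len j.1) := by
      intro j
      rw [Fintype.card_fun, Fintype.card_bool, Fintype.card_fin]
    rw [Finset.prod_congr rfl (fun j _ => h1 j), Finset.prod_pow_eq_pow_sum]
    congr 1
    exact (Finset.sum_subtype (p := fun j => j ≠ k1) (Finset.univ.erase k1)
      (fun x => by simp [Finset.mem_erase]) S.len).symm
  have hexp : T * F.card ≤ ∑ j ∈ Finset.univ.erase k1, S.len j := by
    rw [hsrc, htgt] at hcard
    exact (Nat.pow_le_pow_iff_right (by norm_num)).1 hcard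
  have hFcard : F.card = ∑ n : Fin N, iCount S k σ n := by
    rw [Finset.card_eq_sum_card_fiberwise
      (f := fun p : Fin Q × Fin N => p.2) (t := Finset.univ) (fun p _ => Finset.mem_univ p.2)]
    apply Finset.sum_congr rfl
    intro n _
    show (F.filter (fun p => p.2 = n)).card
        = (Finset.univ.filter (fun x : Fin Q => ∀ y ∈ DnSet S k n, σ x < σ y)).card
    refine Finset.card_bij' (fun p _ => p.1) (fun q _ => (q, n)) ?_ ?_ ?_ ?_
    · intro p hp
      have h1 := Finset.mem_filter.1 hp
      have h2 := (Finset.mem_filter.1 h1.1).2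
      simp only [Finset.mem_filter, Finset.mem_univ, true_and]
      intro y hy
      refine h2 y ?_
      rw [h1.2]
      exact hy
    · intro q hq
      have h2 := (Finset.mem_filter.1 hq).2
      simp only [hF, Finset.mem_filter, Finset.mem_univ, true_and]
      exact ⟨h2, trivial⟩
    · intro p hp
      have h1 := Finset.mem_filter.1 hp
      exact Prod.ext rfl h1.2.symm
    · intro q hq
      rfl
  calc T * ∑ n : Fin N, iCount S k σ n + S.len k1
      = T * F.card + S.len k1 := by rw [hFcard]
    _ ≤ (∑ j ∈ Finset.univ.erase k1, S.len j) + S.len k1 := by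
        exact Nat.add_le_add_right hexp _
    _ = ∑ j : Fin K, S.len j := Finset.sum_erase_add _ _ (Finset.mem_univ k1)


lemma perm_count {Q : ℕ} (s : Finset (Fin Q)) (x : Fin Q) (hx : x ∉ s) :
    (s.card + 1) * (univ.filter (fun σ : Equiv.Perm (Fin Q) => ∀ y ∈ s, σ x < σ y)).card
      = Fintype.card (Equiv.Perm (Fin Q)) := by
  classical
  set t := insert x s with ht
  have htne : t.Nonempty := insert_nonempty _ _
  have himg : ∀ σ : Equiv.Perm (Fin Q), (t.image σ).Nonempty := fun σ => htne.image σ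
  set mo : Equiv.Perm (Fin Q) → Fin Q := fun σ => σ.symm ((t.image σ).min' (himg σ)) with hmo
  have hmem : ∀ σ, mo σ ∈ t := by
    intro σ
    have h := Finset.min'_mem (t.image σ) (himg σ)
    rcases Finset.mem_image.1 h with ⟨z, hz, hze⟩
    have : mo σ = z := by rw [hmo]; simp only [← hze, Equiv.symm_apply_apply]
    rwa [this]
  have hchar : ∀ (σ : Equiv.Perm (Fin Q)) (z : Fin Q), z ∈ t →
      (mo σ = z ↔ ∀ y ∈ t, y ≠ z → σ z < σ y) := by
    intro σ z hz
    constructor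
    · intro h y hy hyz
      have h1 : σ z = (t.image σ).min' (himg σ) := by
        rw [← h, hmo]; simp
      have h2 : (t.image σ).min' (himg σ) ≤ σ y := Finset.min'_le _ _ (mem_image_of_mem σ hy)
      have h3 : σ y ≠ σ z := fun e => hyz (σ.injective e)
      exact lt_of_le_of_ne (h1 ▸ h2) h3.symm
    · intro h
      have h1 : (t.image σ).min' (himg σ) = σ z := by
        apply le_antisymm
        · exact Finset.min'_le _ _ (mem_image_of_mem σ hz)
        · apply Finset.le_min'
          intro y hy
          rcases Finset.mem_image.1 hy with ⟨w, hw, rfl⟩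
          rcases eq_or_ne w z with rfl | hwz
          · exact le_rfl
          · exact (h w hw hwz).le
      show σ.symm _ = z
      rw [h1]
      exact σ.symm_apply_apply z
  -- fiberwise count
  have hfib : Fintype.card (Equiv.Perm (Fin Q)) = ∑ z ∈ t, (univ.filter (fun σ => mo σ = z)).card := by
    rw [← Finset.card_univ]
    exact Finset.card_eq_sum_card_fiberwise (fun σ _ => hmem σ)
  -- all fibers have the same cardinality as fiber of x
  have hxmem : x ∈ t := mem_insert_self x s
  have hsame : ∀ z ∈ t, (univ.filter (fun σ => mo σ = z)).card
      = (univ.filter (fun σ => mo σ = x)).card := by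
    intro z hz
    rcases eq_or_ne z x with rfl | hzx
    · rfl
    · apply Finset.card_bij' (fun σ _ => σ * Equiv.swap x z) (fun σ _ => σ * Equiv.swap x z)
      · intro σ hσ
        simp only [mem_filter, mem_univ, true_and] at hσ ⊢
        rw [hchar _ z hz] at hσ
        rw [hchar _ x hxmem]
        intro y hy hyx
        rcases eq_or_ne y z with rfl | hyz
        · have := hσ x hxmem hzx.symm
          simpa [Equiv.swap_apply_left, Equiv.swap_apply_right] using this
        · have := hσ y hy hyz
          have hyneq : Equiv.swap x z y = y := Equiv.swap_apply_of_ne_of_ne hyx hyz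
          simpa [Equiv.swap_apply_left, hyneq] using this
      · intro σ hσ
        simp only [mem_filter, mem_univ, true_and] at hσ ⊢
        rw [hchar _ x hxmem] at hσ
        rw [hchar _ z hz]
        intro y hy hyz
        rcases eq_or_ne y x with rfl | hyx
        · have := hσ z hz hzx
          simpa [Equiv.swap_apply_left, Equiv.swap_apply_right] using this
        · have := hσ y hy hyx
          have hyneq : Equiv.swap x z y = y := Equiv.swap_apply_of_ne_of_ne hyx hyz
          simpa [Equiv.swap_apply_right, hyneq] using this
      · intro σ _
        simp [mul_assoc]
      · intro σ _
        simp [mul_assoc]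
  -- fiber of x is exactly the filter in the statement
  have hfx : (univ.filter (fun σ => mo σ = x)) = (univ.filter (fun σ : Equiv.Perm (Fin Q) => ∀ y ∈ s, σ x < σ y)) := by
    apply Finset.filter_congr
    intro σ _
    rw [hchar σ x hxmem]
    constructor
    · intro h y hy
      exact h y (mem_insert_of_mem hy) (fun e => hx (e ▸ hy))
    · intro h y hy hyx
      rcases mem_insert.1 hy with rfl | hys
      · exact absurd rfl hyx
      · exact h y hys
  have hcardt : t.card = s.card + 1 := Finset.card_insert_of_notMem hx
  rw [hfib, Finset.sum_congr rfl hsame, Finset.sum_const, hcardt, ← hfx]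
  simp [mul_comm]

set_option maxHeartbeats 2000000 in
lemma perm_sum {Q : ℕ} (s : Finset (Fin Q)) :
    (s.card + 1) * ∑ σ : Equiv.Perm (Fin Q),
        (univ.filter (fun x : Fin Q => ∀ y ∈ s, σ x < σ y)).card
      = (Q - s.card) * Fintype.card (Equiv.Perm (Fin Q)) := by
  have step1 : ∀ σ : Equiv.Perm (Fin Q),
      (univ.filter (fun x : Fin Q => ∀ y ∈ s, σ x < σ y)).card
        = ∑ x : Fin Q, if (∀ y ∈ s, σ x < σ y) then 1 else 0 := by
    intro σ; rw [Finset.card_filter]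
  have swap : ∑ σ : Equiv.Perm (Fin Q), ∑ x : Fin Q, (if (∀ y ∈ s, σ x < σ y) then 1 else 0)
      = ∑ x : Fin Q, ∑ σ : Equiv.Perm (Fin Q), (if (∀ y ∈ s, σ x < σ y) then 1 else 0) :=
    Finset.sum_comm
  have inner : ∀ x : Fin Q,
      ∑ σ : Equiv.Perm (Fin Q), (if (∀ y ∈ s, σ x < σ y) then 1 else 0)
        = (univ.filter (fun σ : Equiv.Perm (Fin Q) => ∀ y ∈ s, σ x < σ y)).card := by
    intro x; rw [Finset.card_filter]
  have zero_mem : ∀ x ∈ s,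
      (univ.filter (fun σ : Equiv.Perm (Fin Q) => ∀ y ∈ s, σ x < σ y)).card = 0 := by
    intro x hx
    rw [Finset.card_eq_zero]
    ext σ
    simp only [mem_filter, mem_univ, true_and, Finset.notMem_empty, iff_false, not_forall]
    exact ⟨x, hx, lt_irrefl _⟩
  calc (s.card + 1) * ∑ σ : Equiv.Perm (Fin Q),
        (univ.filter (fun x : Fin Q => ∀ y ∈ s, σ x < σ y)).card
      = (s.card + 1) * ∑ x : Fin Q,
          (univ.filter (fun σ : Equiv.Perm (Fin Q) => ∀ y ∈ s, σ x < σ y)).card := by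
        rw [Finset.sum_congr rfl (fun σ _ => step1 σ), swap,
          Finset.sum_congr rfl (fun x _ => inner x)]
    _ = ∑ x : Fin Q, (s.card + 1) *
          (univ.filter (fun σ : Equiv.Perm (Fin Q) => ∀ y ∈ s, σ x < σ y)).card := by
        rw [Finset.mul_sum]
    _ = ∑ x ∈ sᶜ, (s.card + 1) *
          (univ.filter (fun σ : Equiv.Perm (Fin Q) => ∀ y ∈ s, σ x < σ y)).card := by
        symm
        apply Finset.sum_subset (Finset.subset_univ _)
        intro x _ hxc
        have hxs : x ∈ s := by simpa using hxc
        rw [zero_mem x hxs, mul_zero]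
    _ = ∑ _x ∈ sᶜ, Fintype.card (Equiv.Perm (Fin Q)) := by
        apply Finset.sum_congr rfl
        intro x hxc
        exact perm_count s x (by simpa using hxc)
    _ = (Q - s.card) * Fintype.card (Equiv.Perm (Fin Q)) := by
        rw [Finset.sum_const, smul_eq_mul, Finset.card_compl, Fintype.card_fin]

lemma sum_perm_ge {Q : ℕ} (hQ : 0 < Q) (g : Fin Q → ℕ) :
    ∑ q, g q ≤ ∑ σ : Equiv.Perm (Fin Q), g (σ.symm ⟨0, hQ⟩) := by
  classical
  rw [← Finset.sum_fiberwise_of_maps_to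
    (fun (σ : Equiv.Perm (Fin Q)) _ => Finset.mem_univ (σ.symm ⟨0, hQ⟩)) (fun σ => g (σ.symm ⟨0, hQ⟩))]
  apply Finset.sum_le_sum
  intro q _
  have hne : (univ.filter (fun σ : Equiv.Perm (Fin Q) => σ.symm ⟨0, hQ⟩ = q)).Nonempty := by
    refine ⟨Equiv.swap q ⟨0, hQ⟩, ?_⟩
    simp [Equiv.symm_swap, Equiv.swap_apply_right]
  calc g q = 1 * g q := (one_mul _).symm
    _ ≤ (univ.filter (fun σ : Equiv.Perm (Fin Q) => σ.symm ⟨0, hQ⟩ = q)).card * g q := by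
        apply Nat.mul_le_mul_right
        exact Nat.one_le_iff_ne_zero.mpr (Finset.card_ne_zero_of_mem hne.choose_spec)
    _ = ∑ σ ∈ univ.filter (fun σ : Equiv.Perm (Fin Q) => σ.symm ⟨0, hQ⟩ = q), g (σ.symm ⟨0, hQ⟩) := by
        rw [Finset.sum_congr rfl (fun σ hσ => by
          rw [(Finset.mem_filter.1 hσ).2]), Finset.sum_const, smul_eq_mul]

lemma sum_DnSet_card {K N Q T : ℕ} (S : Scheme K N Q T) (k : Fin Q → Fin K) :
    ∑ n : Fin N, (DnSet S k n).card = ∑ q : Fin Q, (S.M (k q)).card := by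
  simp only [DnSet, Finset.card_filter]
  rw [Finset.sum_comm]
  apply Finset.sum_congr rfl
  intro q _
  rw [← Finset.card_filter]
  congr 1
  ext n
  simp

set_option maxHeartbeats 1600000 in
/-- any scheme with singleton Reduce assignment attaining the
lower bound `min_r f(r)` with equality, where `r* = max argmin f` satisfies
`0 < r* < Q`, must use at least `Q + ⌈Q/r*⌉` servers. -/
theorem min_servers_sequential (Q : ℕ) (hQ : 0 < Q) (cm cs : ℝ) (hcm : 0 < cm)
    (hcs : 0 < cs) (f : ℕ → ℝ)
    (hf : ∀ r : ℕ, f r = cm * (r : ℝ) / Q + cs * ((Q : ℝ) - r) / ((Q : ℝ) * (r + 1)))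
    (rstar : ℕ) (hmem : rstar ∈ Finset.range (Q + 1))
    (hmin : ∀ r ∈ Finset.range (Q + 1), f rstar ≤ f r)
    (hmax : ∀ r ∈ Finset.range (Q + 1), f r = f rstar → r ≤ rstar)
    (h0 : 0 < rstar) (h1 : rstar < Q)
    (K N T : ℕ) (hK : 0 < K) (hN : 0 < N) (hT : 0 < T)
    (S : Scheme K N Q T) (hS : SingletonReduce S)
    (hach : cm * peakLoad S + cs * commLoad S = f rstar) :
    Q + ⌈(Q : ℚ) / (rstar : ℚ)⌉₊ ≤ K := by
  classical
  obtain ⟨hdisj, hcov, hone⟩ := hS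
  choose k hk using hcov
  have hkinj : ∀ q q' : Fin Q, k q = k q' → q = q' := by
    intro q q' h
    by_contra hne
    have h1 : q ∈ S.W (k q) := hk q
    have h2 : q' ∈ S.W (k q) := h ▸ hk q'
    have hsub : ({q, q'} : Finset (Fin Q)) ⊆ S.W (k q) := by
      intro z hz
      rcases Finset.mem_insert.1 hz with rfl | hz
      · exact h1
      · rwa [Finset.mem_singleton.1 hz]
    have hcard2 : 2 ≤ (S.W (k q)).card := by
      have hc := Finset.card_le_card hsub
      rwa [Finset.card_insert_of_notMem (by simpa using hne), Finset.card_singleton] at hc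
    have := hone (k q)
    omega
  set A : ℕ := Finset.univ.sup (fun j : Fin K => (S.M j).card) with hA
  set d : Fin N → ℕ := fun n => (DnSet S k n).card with hd
  set c : ℕ := Fintype.card (Equiv.Perm (Fin Q)) with hc
  have hcpos : 0 < c := Fintype.card_pos
  set Ltot : ℕ := ∑ j : Fin K, S.len j with hLtot
  set sred : ℕ := ∑ q : Fin Q, S.len (k q) with hsred
  -- natural-number master inequality obtained by summing the chain bound over σ
  have master : T * (∑ σ : Equiv.Perm (Fin Q), ∑ n : Fin N, iCount S k σ n) + sred
      ≤ c * Ltot := by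
    have h1 : ∀ σ : Equiv.Perm (Fin Q),
        T * ∑ n : Fin N, iCount S k σ n + S.len (k (σ.symm ⟨0, hQ⟩)) ≤ Ltot :=
      fun σ => chain_bound S hQ k hk σ
    have h2 := Finset.sum_le_sum (fun σ (_ : σ ∈ (Finset.univ : Finset (Equiv.Perm (Fin Q)))) => h1 σ)
    rw [Finset.sum_add_distrib, ← Finset.mul_sum, Finset.sum_const, Finset.card_univ,
      smul_eq_mul] at h2
    have h3 : sred ≤ ∑ σ : Equiv.Perm (Fin Q), S.len (k (σ.symm ⟨0, hQ⟩)) :=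
      sum_perm_ge hQ (fun q => S.len (k q))
    rw [← hc] at h2
    omega
  have hidn : ∀ n : Fin N,
      (d n + 1) * (∑ σ : Equiv.Perm (Fin Q), iCount S k σ n) = (Q - d n) * c := by
    intro n
    simpa [iCount, hd, hc] using perm_sum (DnSet S k n)
  have hdQ : ∀ n, d n ≤ Q := by
    intro n
    have := Finset.card_le_card (Finset.subset_univ (DnSet S k n))
    simpa [hd] using this
  have hdA : ∑ n : Fin N, d n ≤ Q * A := by
    calc ∑ n : Fin N, d n = ∑ q : Fin Q, (S.M (k q)).card := sum_DnSet_card S k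
      _ ≤ ∑ _q : Fin Q, A :=
          Finset.sum_le_sum (fun q _ =>
            Finset.le_sup (f := fun j : Fin K => (S.M j).card) (Finset.mem_univ (k q)))
      _ = Q * A := by rw [Finset.sum_const, Finset.card_univ, Fintype.card_fin, smul_eq_mul]
  -- move to the reals
  have hQR : (0:ℝ) < Q := by exact_mod_cast hQ
  have hNR : (0:ℝ) < N := by exact_mod_cast hN
  have hTR : (0:ℝ) < T := by exact_mod_cast hT
  have hcR : (0:ℝ) < c := by exact_mod_cast hcpos
  set Φ : ℝ := ∑ n : Fin N, ((Q:ℝ) - (d n : ℝ)) / ((d n : ℝ) + 1) with hΦ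
  set Sd : ℝ := ∑ n : Fin N, (d n : ℝ) with hSd
  have hXn : ∀ n : Fin N, (∑ σ : Equiv.Perm (Fin Q), (iCount S k σ n : ℝ))
      = (c : ℝ) * (((Q:ℝ) - (d n : ℝ)) / ((d n : ℝ) + 1)) := by
    intro n
    have h2 := congrArg (fun x : ℕ => (x:ℝ)) (hidn n)
    push_cast [Nat.cast_sub (hdQ n)] at h2
    have hne : ((d n : ℝ) + 1) ≠ 0 := by positivity
    field_simp
    linear_combination h2
  have masterR : (T:ℝ) * ((c:ℝ) * Φ) + (sred:ℝ) ≤ (c:ℝ) * (Ltot:ℝ) := by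
    have h2 : ((T * (∑ σ : Equiv.Perm (Fin Q), ∑ n : Fin N, iCount S k σ n) + sred : ℕ) : ℝ)
        ≤ ((c * Ltot : ℕ) : ℝ) := Nat.cast_le.2 master
    push_cast at h2
    have hswap : (∑ σ : Equiv.Perm (Fin Q), ∑ n : Fin N, (iCount S k σ n : ℝ))
        = ∑ n : Fin N, ∑ σ : Equiv.Perm (Fin Q), (iCount S k σ n : ℝ) := Finset.sum_comm
    rw [hswap, Finset.sum_congr rfl (fun n _ => hXn n), ← Finset.mul_sum, ← hΦ] at h2
    exact h2
  have hLlow : (T:ℝ) * Φ + (sred:ℝ) / c ≤ (Ltot:ℝ) := by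
    have h' : (c:ℝ) * ((T:ℝ) * Φ + (sred:ℝ)/c) = (T:ℝ) * ((c:ℝ) * Φ) + (sred:ℝ) := by
      field_simp
    have h2 : (c:ℝ) * ((T:ℝ) * Φ + (sred:ℝ)/c) ≤ (c:ℝ) * (Ltot:ℝ) := by
      rw [h']; exact masterR
    exact le_of_mul_le_mul_left h2 hcR
  have hpeak : peakLoad S = (A:ℝ)/(N:ℝ) := by
    simp only [peakLoad, hA]
  have hcomm : ((T:ℝ) * Φ + (sred:ℝ)/c) / ((Q:ℝ)*N*T) ≤ commLoad S := by
    have hcommeq : commLoad S = (Ltot:ℝ) / ((Q:ℝ)*N*T) := by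
      simp only [commLoad, hLtot]
      push_cast
      rfl
    rw [hcommeq]
    gcongr
  -- the per-file f-values
  have hsum_f : ∑ n : Fin N, f (d n) = (cm/Q) * Sd + (cs/Q) * Φ := by
    rw [Finset.sum_congr rfl (fun n _ => hf (d n)), Finset.sum_add_distrib, hSd, hΦ,
      Finset.mul_sum, Finset.mul_sum]
    congr 1
    · exact Finset.sum_congr rfl (fun n _ => by ring)
    · refine Finset.sum_congr rfl (fun n _ => ?_)
      have hne : ((d n : ℝ) + 1) ≠ 0 := by positivity
      field_simp
  -- slack terms
  set E1 : ℝ := cm * (((Q:ℝ) * A - Sd) / ((Q:ℝ) * N)) with hE1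
  set E2 : ℝ := (∑ n : Fin N, (f (d n) - f rstar)) / N with hE2
  set E3 : ℝ := cs * ((sred:ℝ) / ((c:ℝ) * Q * N * T)) with hE3
  have hE1nonneg : 0 ≤ E1 := by
    have hnum : (0:ℝ) ≤ (Q:ℝ) * A - Sd := by
      have : ((∑ n : Fin N, d n : ℕ) : ℝ) ≤ ((Q * A : ℕ) : ℝ) := Nat.cast_le.2 hdA
      push_cast at this
      rw [hSd]
      linarith
    rw [hE1]
    exact mul_nonneg hcm.le (div_nonneg hnum (by positivity))
  have hfge : ∀ n : Fin N, 0 ≤ f (d n) - f rstar := by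
    intro n
    have h := hmin (d n) (Finset.mem_range.2 (by have := hdQ n; omega))
    linarith
  have hE2nonneg : 0 ≤ E2 := by
    rw [hE2]
    exact div_nonneg (Finset.sum_nonneg (fun n _ => hfge n)) (le_of_lt hNR)
  have hE3nonneg : 0 ≤ E3 := by
    rw [hE3]
    exact mul_nonneg (le_of_lt hcs) (by positivity)
  have hQ0 : (Q:ℝ) ≠ 0 := ne_of_gt hQR
  have hN0 : (N:ℝ) ≠ 0 := ne_of_gt hNR
  have hT0 : (T:ℝ) ≠ 0 := ne_of_gt hTR
  have hc0 : (c:ℝ) ≠ 0 := ne_of_gt hcR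
  -- key identity
  have hiden : f rstar + (E1 + E2 + E3)
      = cm * ((A:ℝ)/N) + cs * (((T:ℝ) * Φ + (sred:ℝ)/c) / ((Q:ℝ)*N*T)) := by
    rw [hE1, hE2, hE3, Finset.sum_sub_distrib, hsum_f, Finset.sum_const, Finset.card_univ,
      Fintype.card_fin, nsmul_eq_mul]
    field_simp
    ring
  have hkey : E1 + E2 + E3 ≤ 0 := by
    have hge : f rstar + (E1 + E2 + E3) ≤ cm * peakLoad S + cs * commLoad S := by
      rw [hiden, hpeak]
      have h2 := mul_le_mul_of_nonneg_left hcomm (le_of_lt hcs)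
      linarith
    rw [hach] at hge
    linarith
  have hE1z : E1 = 0 := by linarith
  have hE2z : E2 = 0 := by linarith
  have hE3z : E3 = 0 := by linarith
  -- consequences of the vanishing slack
  have hSdeq : Sd = (Q:ℝ) * A := by
    rw [hE1] at hE1z
    rcases mul_eq_zero.1 hE1z with h | h
    · exact absurd h (ne_of_gt hcm)
    · rcases div_eq_zero_iff.1 h with h' | h'
      · linarith
      · exact absurd h' (by positivity)
  have hdmax : ∀ n : Fin N, d n ≤ rstar := by
    have hsum0 : ∑ n : Fin N, (f (d n) - f rstar) = 0 := by
      rw [hE2] at hE2z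
      rcases div_eq_zero_iff.1 hE2z with h' | h'
      · exact h'
      · exact absurd h' hN0
    have hzero := (Finset.sum_eq_zero_iff_of_nonneg (fun n _ => hfge n)).1 hsum0
    intro n
    have h := hzero n (Finset.mem_univ n)
    exact hmax (d n) (Finset.mem_range.2 (by have := hdQ n; omega)) (by linarith)
  have hsred0 : sred = 0 := by
    rw [hE3] at hE3z
    rcases mul_eq_zero.1 hE3z with h | h
    · exact absurd h (ne_of_gt hcs)
    · rcases div_eq_zero_iff.1 h with h' | h'
      · exact_mod_cast h'
      · exact absurd h' (by positivity)
  have hlen0 : ∀ q : Fin Q, S.len (k q) = 0 := by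
    have hsum : ∑ q : Fin Q, S.len (k q) = 0 := by rw [← hsred]; exact hsred0
    intro q
    exact Finset.sum_eq_zero_iff.1 hsum q (Finset.mem_univ q)
  have hQA : Q * A ≤ N * rstar := by
    have hsdnat : ∑ n : Fin N, d n = Q * A := by
      have hr : (∑ n : Fin N, (d n : ℝ)) = (Q:ℝ) * A := by rw [← hSd]; exact hSdeq
      exact_mod_cast hr
    calc Q * A = ∑ n : Fin N, d n := hsdnat.symm
      _ ≤ ∑ _n : Fin N, rstar := Finset.sum_le_sum (fun n _ => hdmax n)
      _ = N * rstar := by rw [Finset.sum_const, Finset.card_univ, Fintype.card_fin, smul_eq_mul]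
  -- every file is mapped by some helper (non-reducer)
  have hhelp : ∀ n : Fin N, ∃ j : Fin K, (∀ q : Fin Q, j ≠ k q) ∧ n ∈ S.M j := by
    intro n
    by_contra hcon
    push_neg at hcon
    obtain ⟨q0, hq0⟩ : ∃ q0 : Fin Q, q0 ∉ DnSet S k n := by
      by_contra hall
      push_neg at hall
      have he : DnSet S k n = Finset.univ := Finset.eq_univ_iff_forall.2 hall
      have hdn : d n = Q := by simp only [hd, he, Finset.card_univ, Fintype.card_fin]
      have := hdmax n
      omega
    have hq0n : n ∉ S.M (k q0) := by
      intro hmem2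
      exact hq0 (by simp [DnSet, hmem2])
    set v0 : Fin Q × Fin N → Fin T → Bool := fun _ _ => false with hv0
    set v1 : Fin Q × Fin N → Fin T → Bool := fun p _ => decide (p = (q0, n)) with hv1
    have hmeq : (fun j => S.enc j (fun q' nn => v0 (q', nn.1)))
        = (fun j => S.enc j (fun q' nn => v1 (q', nn.1))) := by
      funext j
      by_cases hcase : ∀ q : Fin Q, j ≠ k q
      · have hjn : n ∉ S.M j := hcon j hcase
        have harg : (fun (q' : Fin Q) (nn : {m : Fin N // m ∈ S.M j}) => v0 (q', nn.1))
            = (fun q' nn => v1 (q', nn.1)) := by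
          funext q' nn
          have hnne : nn.1 ≠ n := fun e => hjn (e ▸ nn.2)
          simp [hv0, hv1, Prod.ext_iff, hnne]
        rw [harg]
      · push_neg at hcase
        obtain ⟨q1, hq1⟩ := hcase
        have hl : S.len j = 0 := by rw [hq1]; exact hlen0 q1
        funext i
        exact absurd i.isLt (by omega)
    have hdec0 := S.correct v0 (k q0) q0 (hk q0)
    have hdec1 := S.correct v1 (k q0) q0 (hk q0)
    have hlocal : (fun (q' : Fin Q) (nn : {m : Fin N // m ∈ S.M (k q0)}) => v0 (q', nn.1))
        = (fun q' nn => v1 (q', nn.1)) := by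
      funext q' nn
      have hnne : nn.1 ≠ n := fun e => hq0n (e ▸ nn.2)
      simp [hv0, hv1, Prod.ext_iff, hnne]
    have hrows : (fun m => v0 (q0, m)) = (fun m => v1 (q0, m)) := by
      rw [← hdec0, ← hdec1, hmeq, hlocal]
    have hfalse := congrFun (congrFun hrows n) ⟨0, hT⟩
    simp [hv0, hv1] at hfalse
  -- final counting
  set Rset : Finset (Fin K) := Finset.univ.image k with hR
  have hRcard : Rset.card = Q := by
    rw [hR, Finset.card_image_of_injective _ (fun a b h => hkinj a b h),
      Finset.card_univ, Fintype.card_fin]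
  have hQK : Q ≤ K := by
    have h := Finset.card_le_card (Finset.subset_univ Rset)
    rwa [hRcard, Finset.card_univ, Fintype.card_fin] at h
  set Hset : Finset (Fin K) := Finset.univ \ Rset with hH
  have hHcard : Hset.card = K - Q := by
    rw [hH, Finset.card_sdiff_of_subset (Finset.subset_univ _), Finset.card_univ, Fintype.card_fin, hRcard]
  have hNle : N ≤ (K - Q) * A := by
    have hsub : (Finset.univ : Finset (Fin N)) ⊆ Hset.biUnion (fun j => S.M j) := by
      intro n _
      obtain ⟨j, hj1, hj2⟩ := hhelp n
      refine Finset.mem_biUnion.2 ⟨j, ?_, hj2⟩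
      rw [hH]
      simp only [Finset.mem_sdiff, Finset.mem_univ, true_and, hR, Finset.mem_image]
      rintro ⟨q, -, rfl⟩
      exact hj1 q rfl
    calc N = (Finset.univ : Finset (Fin N)).card := by rw [Finset.card_univ, Fintype.card_fin]
      _ ≤ (Hset.biUnion (fun j => S.M j)).card := Finset.card_le_card hsub
      _ ≤ ∑ j ∈ Hset, (S.M j).card := Finset.card_biUnion_le
      _ ≤ ∑ _j ∈ Hset, A := Finset.sum_le_sum (fun j _ =>
            Finset.le_sup (f := fun j : Fin K => (S.M j).card) (Finset.mem_univ j))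
      _ = (K - Q) * A := by rw [Finset.sum_const, smul_eq_mul, hHcard]
  have hApos : 0 < A := by
    rcases Nat.eq_zero_or_pos A with h | h
    · rw [h, Nat.mul_zero] at hNle; omega
    · exact h
  have hfinal : Q ≤ (K - Q) * rstar := by
    have h2 : Q * A ≤ ((K - Q) * rstar) * A := by
      calc Q * A ≤ N * rstar := hQA
        _ ≤ ((K - Q) * A) * rstar := Nat.mul_le_mul_right _ hNle
        _ = ((K - Q) * rstar) * A := by ring
    exact Nat.le_of_mul_le_mul_right h2 hApos
  have hceil : ⌈(Q : ℚ) / (rstar : ℚ)⌉₊ ≤ K - Q := by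
    rw [Nat.ceil_le, div_le_iff₀ (by exact_mod_cast h0)]
    exact_mod_cast hfinal
  omega
end

section
/- Consider any (K,N,Q,T)-scheme with singleton Reduce assignment, and let r̄ = (1/N)·∑_{k : W k ≠ ∅} |M k|. Then 0 ≤ r̄ ≤ Q, the communication load satisfies L ≥ ĝ(r̄), and consequently for any reals c_m, c_s > 0, max{c_m·p, c_s·L} ≥ min_{x ∈ [0,Q]} max{c_m·x/Q, c_s·ĝ(x)}. -/
/-- `ĝ`: the piecewise-linear interpolation at the integers of
`g(x) = (Q−x)/(Q·(x+1))`; on `[0,Q]` this is the lower convex envelope of the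
points `{(r, g(r)) : r ∈ {0,…,Q}}` (note the formula also gives `ĝ(Q) = 0`). -/
noncomputable def gHat (Q : ℕ) (x : ℝ) : ℝ :=
  ((⌊x⌋ : ℝ) + 1 - x) * (((Q : ℝ) - (⌊x⌋ : ℝ)) / ((Q : ℝ) * ((⌊x⌋ : ℝ) + 1))) +
  (x - (⌊x⌋ : ℝ)) * (((Q : ℝ) - ((⌊x⌋ : ℝ) + 1)) / ((Q : ℝ) * ((⌊x⌋ : ℝ) + 2)))

/-! ### auxiliary combinatorics -/

def cnt {Q : ℕ} (D : Finset (Fin Q)) (σ : Equiv.Perm (Fin Q)) : ℕ :=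
  (Finset.univ.filter (fun i : Fin Q => ∀ j ≤ i, σ j ∉ D)).card

section PermCount
variable {Q : ℕ}





lemma cnt_eq (D : Finset (Fin Q)) (σ : Equiv.Perm (Fin Q)) :
    cnt D σ =
      (Finset.univ.filter (fun u : Fin Q => u ∉ D ∧ ∀ x ∈ D, σ.symm u < σ.symm x)).card := by
  unfold cnt
  apply Finset.card_bij (fun i _ => σ i)
  · intro i hi
    simp only [Finset.mem_filter, Finset.mem_univ, true_and] at hi ⊢
    refine ⟨hi i le_rfl, fun x hx => ?_⟩
    by_contra hlt
    push_neg at hlt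
    have := hi (σ.symm x) (by simpa using hlt)
    simp at this
    exact this hx
  · intro a ha b hb h
    exact σ.injective h
  · intro u hu
    simp only [Finset.mem_filter, Finset.mem_univ, true_and] at hu
    refine ⟨σ.symm u, ?_, by simp⟩
    simp only [Finset.mem_filter, Finset.mem_univ, true_and]
    intro j hj hmem
    have := hu.2 (σ j) hmem
    simp at this
    exact absurd hj (not_le.mpr this)


/-- permutations for which `y` comes strictly first among `S` -/
def MinSet (S : Finset (Fin Q)) (y : Fin Q) : Finset (Equiv.Perm (Fin Q)) :=
  Finset.univ.filter (fun σ => ∀ x ∈ S, x ≠ y → σ.symm y < σ.symm x)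

lemma minset_card_eq (S : Finset (Fin Q)) {y y' : Fin Q} (hy : y ∈ S) (hy' : y' ∈ S) :
    (MinSet S y).card = (MinSet S y').card := by
  refine Finset.card_bij' (fun σ _ => σ.trans (Equiv.swap y y'))
    (fun σ _ => σ.trans (Equiv.swap y y')) ?_ ?_ ?_ ?_
  · intro σ hσ
    simp only [MinSet, Finset.mem_filter, Finset.mem_univ, true_and] at hσ ⊢
    intro x hx hxy'
    simp only [Equiv.symm_trans_apply, Equiv.symm_swap]
    rcases eq_or_ne x y with rfl | hxy
    · simp [Equiv.swap_apply_left, Equiv.swap_apply_right]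
      exact hσ y' hy' (Ne.symm hxy')
    · rw [Equiv.swap_apply_of_ne_of_ne hxy hxy', Equiv.swap_apply_right]
      exact hσ x hx hxy
  · intro σ hσ
    simp only [MinSet, Finset.mem_filter, Finset.mem_univ, true_and] at hσ ⊢
    intro x hx hxy
    simp only [Equiv.symm_trans_apply, Equiv.symm_swap]
    rcases eq_or_ne x y' with rfl | hxy'
    · rw [Equiv.swap_apply_right, Equiv.swap_apply_left]
      exact hσ y hy (Ne.symm hxy)
    · rw [Equiv.swap_apply_of_ne_of_ne hxy hxy', Equiv.swap_apply_left]
      exact hσ x hx hxy'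
  · exact fun σ _ => Equiv.ext (fun i => by simp [Equiv.swap_apply_self])
  · exact fun σ _ => Equiv.ext (fun i => by simp [Equiv.swap_apply_self])

lemma minset_partition (S : Finset (Fin Q)) (hS : S.Nonempty) :
    ∑ y ∈ S, (MinSet S y).card = Q.factorial := by
  classical
  -- argmin function
  have him : ∀ σ : Equiv.Perm (Fin Q), (S.image σ.symm).Nonempty := fun σ => hS.image _
  set amin : Equiv.Perm (Fin Q) → Fin Q := fun σ => σ ((S.image σ.symm).min' (him σ)) with hamin
  have hmem : ∀ σ, amin σ ∈ S := by
    intro σ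
    obtain ⟨x, hx, he⟩ := Finset.mem_image.mp ((S.image σ.symm).min'_mem (him σ))
    simpa [hamin, ← he] using hx
  have hmin : ∀ σ, ∀ x ∈ S, x ≠ amin σ → σ.symm (amin σ) < σ.symm x := by
    intro σ x hx hne
    have h1 : σ.symm (amin σ) ≤ σ.symm x := by
      simpa [hamin] using (S.image σ.symm).min'_le (σ.symm x) (Finset.mem_image_of_mem _ hx)
    exact lt_of_le_of_ne h1 (fun h => hne (by simpa using (σ.symm.injective h).symm))
  have key : ∀ y ∈ S, MinSet S y = Finset.univ.filter (fun σ => amin σ = y) := by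
    intro y hy
    ext σ
    simp only [MinSet, Finset.mem_filter, Finset.mem_univ, true_and]
    constructor
    · intro h
      by_contra hne
      exact absurd (hmin σ y hy (Ne.symm hne)) (not_lt.mpr (le_of_lt (h (amin σ) (hmem σ) hne)))
    · intro h x hx hxy
      rw [← h]
      exact hmin σ x hx (h ▸ hxy)
  calc ∑ y ∈ S, (MinSet S y).card
      = ∑ y ∈ S, (Finset.univ.filter (fun σ => amin σ = y)).card := by
        exact Finset.sum_congr rfl (fun y hy => by rw [key y hy])
    _ = Finset.univ.card := (Finset.card_eq_sum_card_fiberwise (fun σ _ => hmem σ)).symm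
    _ = Q.factorial := by simp [Fintype.card_perm, Fintype.card_fin]

lemma perm_sum_s6 (D : Finset (Fin Q)) :
    (D.card + 1) * ∑ σ : Equiv.Perm (Fin Q), cnt D σ = (Q - D.card) * Q.factorial := by
  classical
  have step1 : ∑ σ : Equiv.Perm (Fin Q), cnt D σ =
      ∑ u ∈ Finset.univ.filter (fun u : Fin Q => u ∉ D), (MinSet (insert u D) u).card := by
    calc ∑ σ : Equiv.Perm (Fin Q), cnt D σ
        = ∑ σ : Equiv.Perm (Fin Q), ∑ u : Fin Q,
            (if u ∉ D ∧ ∀ x ∈ D, σ.symm u < σ.symm x then 1 else 0) := by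
          refine Finset.sum_congr rfl (fun σ _ => ?_)
          rw [cnt_eq, Finset.card_filter]
      _ = ∑ u : Fin Q, ∑ σ : Equiv.Perm (Fin Q),
            (if u ∉ D ∧ ∀ x ∈ D, σ.symm u < σ.symm x then 1 else 0) := Finset.sum_comm
      _ = ∑ u ∈ Finset.univ.filter (fun u : Fin Q => u ∉ D), (MinSet (insert u D) u).card := by
          rw [Finset.sum_filter]
          refine Finset.sum_congr rfl (fun u _ => ?_)
          by_cases hu : u ∈ D
          · simp [hu]
          · simp only [hu, not_false_iff, if_true, true_and, MinSet, Finset.card_filter]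
            refine Finset.sum_congr rfl (fun σ _ => ?_)
            congr 1
            simp only [eq_iff_iff]
            constructor
            · intro h x hx hne
              rcases Finset.mem_insert.mp hx with rfl | hxD
              · exact absurd rfl hne
              · exact h x hxD
            · intro h x hx
              exact h x (Finset.mem_insert_of_mem hx) (fun he => hu (he ▸ hx))
  have step2 : ∀ u : Fin Q, u ∉ D →
      (D.card + 1) * (MinSet (insert u D) u).card = Q.factorial := by
    intro u hu
    have hpart := minset_partition (insert u D) ⟨u, Finset.mem_insert_self u D⟩
    have hall : ∀ y ∈ insert u D, (MinSet (insert u D) y).card = (MinSet (insert u D) u).card :=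
      fun y hy => minset_card_eq _ hy (Finset.mem_insert_self u D)
    rw [Finset.sum_congr rfl hall, Finset.sum_const, smul_eq_mul,
      Finset.card_insert_of_notMem hu] at hpart
    exact hpart
  rw [step1, Finset.mul_sum, Finset.sum_congr rfl (fun u hu => step2 u (Finset.mem_filter.mp hu).2),
    Finset.sum_const, smul_eq_mul]
  congr 1
  rw [Finset.filter_not, Finset.card_sdiff_of_subset (Finset.filter_subset _ _)]
  congr 1
  · simp
  · simp [Finset.filter_mem_eq_inter]

end PermCount


lemma chord {Qr d m : ℝ} (hQ : 0 < Qr) (hd : 0 ≤ d) (hm : 0 ≤ m)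
    (h : 0 ≤ (d - m) * (d - m - 1)) :
    (m + 1 - d) * ((Qr - m) / (Qr * (m + 1))) + (d - m) * ((Qr - (m + 1)) / (Qr * (m + 2)))
      ≤ (Qr - d) / (Qr * (d + 1)) := by
  have h1 : (0:ℝ) < m + 1 := by linarith
  have h2 : (0:ℝ) < m + 2 := by linarith
  have h3 : (0:ℝ) < d + 1 := by linarith
  have key : (Qr - d) / (Qr * (d + 1)) -
      ((m + 1 - d) * ((Qr - m) / (Qr * (m + 1))) + (d - m) * ((Qr - (m + 1)) / (Qr * (m + 2))))
      = (Qr + 1) * ((d - m) * (d - m - 1)) / (Qr * (m + 1) * (m + 2) * (d + 1)) := by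
    field_simp
    ring
  have hpos : 0 ≤ (Qr + 1) * ((d - m) * (d - m - 1)) / (Qr * (m + 1) * (m + 2) * (d + 1)) := by
    apply div_nonneg
    · exact mul_nonneg (by linarith) h
    · positivity
  linarith [key ▸ hpos]

lemma core {K N Q T : ℕ} (S : Scheme K N Q T) (e : Fin Q → Fin K)
    (he : ∀ q, q ∈ S.W (e q)) (σ : Equiv.Perm (Fin Q)) :
    (∑ n : Fin N, cnt (Finset.univ.filter (fun q : Fin Q => n ∈ S.M (e q))) σ) * T
      ≤ ∑ k : Fin K, S.len k := by
  classical
  set Kn : Finset (Fin Q × Fin N) :=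
    Finset.univ.filter (fun p : Fin Q × Fin N => ∃ j, j ≤ σ.symm p.1 ∧ p.2 ∈ S.M (e (σ j)))
    with hKn
  set Φ : (Fin Q × Fin N → Fin T → Bool) →
      ((j : Fin K) → Fin (S.len j) → Bool) × ({p // p ∈ Kn} → Fin T → Bool) :=
    fun v => (fun j => S.enc j (fun q' n => v (q', n.1)), fun p => v p.1) with hΦ
  have hinj : Function.Injective Φ := by
    intro v₁ v₂ h
    have hmsg : (fun j => S.enc j (fun q' n => v₁ (q', n.1))) =
        (fun j => S.enc j (fun q' n => v₂ (q', n.1))) := congrArg Prod.fst h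
    have hside : ∀ p : Fin Q × Fin N, p ∈ Kn → v₁ p = v₂ p := by
      intro p hp
      exact congrFun (congrArg Prod.snd h) ⟨p, hp⟩
    have main : ∀ m : ℕ, ∀ i : Fin Q, (i : ℕ) = m →
        ∀ n : Fin N, v₁ (σ i, n) = v₂ (σ i, n) := by
      intro m
      induction m using Nat.strong_induction_on with
      | _ m IH =>
        intro i him
        have hloc : (fun (q' : Fin Q) (n : {n // n ∈ S.M (e (σ i))}) => v₁ (q', n.1)) =
            (fun q' n => v₂ (q', n.1)) := by
          funext q' n
          rcases lt_or_ge (σ.symm q') i with hlt | hle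
          · have := IH ((σ.symm q' : Fin Q) : ℕ) (by rw [← him]; exact hlt) (σ.symm q') rfl n.1
            simpa using this
          · apply hside (q', n.1)
            simp only [hKn, Finset.mem_filter, Finset.mem_univ, true_and]
            exact ⟨i, by simpa using hle, n.2⟩
        have h1 := S.correct v₁ (e (σ i)) (σ i) (he (σ i))
        have h2 := S.correct v₂ (e (σ i)) (σ i) (he (σ i))
        intro n
        calc v₁ (σ i, n) = S.dec (e (σ i)) (σ i) (he (σ i))
              (fun j => S.enc j (fun q' n => v₁ (q', n.1)))
              (fun q' n => v₁ (q', n.1)) n := (congrFun h1 n).symm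
          _ = S.dec (e (σ i)) (σ i) (he (σ i))
              (fun j => S.enc j (fun q' n => v₂ (q', n.1)))
              (fun q' n => v₂ (q', n.1)) n := by rw [hmsg, hloc]
          _ = v₂ (σ i, n) := congrFun h2 n
    funext p
    obtain ⟨q, n⟩ := p
    have := main (σ.symm q) (σ.symm q) rfl n
    simpa using this
  -- cardinality comparison
  have hcard := Fintype.card_le_of_injective Φ hinj
  have hdom : Fintype.card (Fin Q × Fin N → Fin T → Bool) = 2 ^ (Q * N * T) := by
    rw [Fintype.card_fun, Fintype.card_fun, Fintype.card_bool, Fintype.card_fin,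
      Fintype.card_prod, Fintype.card_fin, Fintype.card_fin, ← pow_mul]
    congr 1
    ring
  have hcod : Fintype.card (((j : Fin K) → Fin (S.len j) → Bool) × ({p // p ∈ Kn} → Fin T → Bool))
      = 2 ^ ((∑ k : Fin K, S.len k) + Kn.card * T) := by
    rw [Fintype.card_prod, Fintype.card_pi, Fintype.card_fun, Fintype.card_fun,
      Fintype.card_bool, Fintype.card_fin, Fintype.card_coe]
    simp only [Fintype.card_fun, Fintype.card_bool, Fintype.card_fin]
    rw [Finset.prod_pow_eq_pow_sum, ← pow_mul, ← pow_add]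
    congr 1
    ring
  rw [hdom, hcod] at hcard
  have hexp : Q * N * T ≤ (∑ k : Fin K, S.len k) + Kn.card * T :=
    (Nat.pow_le_pow_iff_right (by norm_num)).mp hcard
  set NK : Finset (Fin Q × Fin N) :=
    Finset.univ.filter (fun p : Fin Q × Fin N => ¬ ∃ j, j ≤ σ.symm p.1 ∧ p.2 ∈ S.M (e (σ j)))
    with hNKdef
  have hKN : Kn.card + NK.card = Q * N := by
    rw [hKn, hNKdef]
    rw [Finset.card_filter_add_card_filter_not]
    simp [Finset.card_univ]
  have hNK : NK.card = ∑ n : Fin N,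
      cnt (Finset.univ.filter (fun q : Fin Q => n ∈ S.M (e q))) σ := by
    calc NK.card = ∑ q : Fin Q, ∑ n : Fin N,
          (if ¬ ∃ j, j ≤ σ.symm q ∧ n ∈ S.M (e (σ j)) then 1 else 0) := by
          rw [hNKdef, Finset.card_filter, Fintype.sum_prod_type]
      _ = ∑ i : Fin Q, ∑ n : Fin N,
          (if ¬ ∃ j, j ≤ i ∧ n ∈ S.M (e (σ j)) then 1 else 0) := by
          rw [← Equiv.sum_comp σ (fun q => ∑ n : Fin N,
            (if ¬ ∃ j, j ≤ σ.symm q ∧ n ∈ S.M (e (σ j)) then 1 else 0))]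
          simp only [Equiv.symm_apply_apply]
      _ = ∑ n : Fin N, ∑ i : Fin Q,
          (if ¬ ∃ j, j ≤ i ∧ n ∈ S.M (e (σ j)) then 1 else 0) := Finset.sum_comm
      _ = ∑ n : Fin N, cnt (Finset.univ.filter (fun q : Fin Q => n ∈ S.M (e q))) σ := by
          refine Finset.sum_congr rfl fun n _ => ?_
          rw [cnt, Finset.card_filter]
          refine Finset.sum_congr rfl fun i _ => ?_
          refine if_congr ?_ rfl rfl
          simp only [Finset.mem_filter, Finset.mem_univ, true_and, not_exists, not_and]
  have h3 : Kn.card * T + NK.card * T ≤ Kn.card * T + ∑ k : Fin K, S.len k := by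
    calc Kn.card * T + NK.card * T = Q * N * T := by rw [← add_mul, hKN]
      _ ≤ (∑ k : Fin K, S.len k) + Kn.card * T := hexp
      _ = Kn.card * T + ∑ k : Fin K, S.len k := add_comm _ _
  rw [← hNK]
  exact le_of_add_le_add_left h3

set_option maxHeartbeats 2000000 in
/-- converse bound for the parallel implementation.  With
`r̄` the average number of files mapped per solver (normalized by `N`),
`L ≥ ĝ(r̄)`, and hence `max{c_m·p, c_s·L}` is at least the minimum over
`x ∈ [0,Q]` of `max{c_m·x/Q, c_s·ĝ(x)}`. -/
theorem parallel_lower_bound (K N Q T : ℕ) (hK : 0 < K) (hN : 0 < N) (hQ : 0 < Q)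
    (hT : 0 < T) (S : Scheme K N Q T) (hS : SingletonReduce S)
    (rbar : ℝ)
    (hrbar : rbar = (1 / (N : ℝ)) *
      ∑ k ∈ Finset.univ.filter (fun k : Fin K => S.W k ≠ ∅), ((S.M k).card : ℝ)) :
    0 ≤ rbar ∧ rbar ≤ (Q : ℝ) ∧ commLoad S ≥ gHat Q rbar ∧
    ∀ cm cs : ℝ, 0 < cm → 0 < cs →
      max (cm * peakLoad S) (cs * commLoad S) ≥
        sInf ((fun x : ℝ => max (cm * x / Q) (cs * gHat Q x)) '' Set.Icc (0 : ℝ) (Q : ℝ)) := by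
  classical
  obtain ⟨hdisj, hcov, hcard1⟩ := hS
  set e : Fin Q → Fin K := fun q => (hcov q).choose with he_def
  have he : ∀ q, q ∈ S.W (e q) := fun q => (hcov q).choose_spec
  have einj : Function.Injective e := by
    intro q q' h
    have h1 := he q
    rw [h] at h1
    exact Finset.card_le_one.mp (hcard1 (e q')) q h1 q' (he q')
  have hF : Finset.univ.filter (fun k : Fin K => S.W k ≠ ∅) = Finset.univ.image e := by
    ext k
    simp only [Finset.mem_filter, Finset.mem_univ, true_and, Finset.mem_image]
    constructor
    · intro hk
      obtain ⟨q, hq⟩ := Finset.nonempty_iff_ne_empty.mpr hk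
      refine ⟨q, ?_⟩
      by_contra hne
      exact Finset.disjoint_left.mp (hdisj _ _ hne) (he q) hq
    · rintro ⟨q, rfl⟩
      exact Finset.nonempty_iff_ne_empty.mp ⟨q, he q⟩
  set dd : Fin N → ℕ :=
    fun n => (Finset.univ.filter (fun q : Fin Q => n ∈ S.M (e q))).card with hdd_def
  have hdQ : ∀ n, dd n ≤ Q := fun n =>
    le_trans (Finset.card_filter_le _ _) (by simp)
  have hnat : ∑ q : Fin Q, (S.M (e q)).card = ∑ n : Fin N, dd n := by
    have h1 : ∀ q : Fin Q, (S.M (e q)).card =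
        ∑ n : Fin N, if n ∈ S.M (e q) then 1 else 0 := by
      intro q
      rw [← Finset.card_filter]
      congr 1
      exact (Finset.filter_univ_mem _).symm
    rw [Finset.sum_congr rfl (fun q _ => h1 q), Finset.sum_comm]
    exact Finset.sum_congr rfl (fun n _ => (Finset.card_filter _ _).symm)
  have hrbar' : rbar = (1 / (N : ℝ)) * ∑ n : Fin N, (dd n : ℝ) := by
    rw [hrbar, hF, Finset.sum_image (fun q _ q' _ h => einj h)]
    congr 1
    exact_mod_cast congrArg (Nat.cast : ℕ → ℝ) hnat
  have hN' : (0:ℝ) < N := by exact_mod_cast hN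
  have hQ' : (0:ℝ) < Q := by exact_mod_cast hQ
  have hT' : (0:ℝ) < T := by exact_mod_cast hT
  -- Part 1
  have hr0 : 0 ≤ rbar := by
    rw [hrbar']
    apply mul_nonneg (by positivity)
    exact Finset.sum_nonneg (fun n _ => by positivity)
  -- Part 2
  have hrQ : rbar ≤ (Q:ℝ) := by
    rw [hrbar']
    have hsb : ∑ n : Fin N, (dd n:ℝ) ≤ ∑ _n : Fin N, (Q:ℝ) :=
      Finset.sum_le_sum (fun n _ => by exact_mod_cast hdQ n)
    calc (1/(N:ℝ)) * ∑ n : Fin N, (dd n:ℝ) ≤ (1/(N:ℝ)) * ((N:ℝ) * Q) := by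
          apply mul_le_mul_of_nonneg_left _ (by positivity)
          simpa [Finset.sum_const, Finset.card_univ] using hsb
      _ = (Q:ℝ) := by field_simp
  -- Part 3: the converse bound
  have hfac : (0:ℝ) < Q.factorial := by exact_mod_cast Q.factorial_pos
  have hsum1 : (∑ σ : Equiv.Perm (Fin Q), ∑ n : Fin N,
      cnt (Finset.univ.filter (fun q : Fin Q => n ∈ S.M (e q))) σ) * T
      ≤ Q.factorial * ∑ k : Fin K, S.len k := by
    rw [Finset.sum_mul]
    calc ∑ σ : Equiv.Perm (Fin Q), (∑ n : Fin N,
          cnt (Finset.univ.filter (fun q : Fin Q => n ∈ S.M (e q))) σ) * T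
        ≤ ∑ _σ : Equiv.Perm (Fin Q), ∑ k : Fin K, S.len k :=
          Finset.sum_le_sum (fun σ _ => core S e he σ)
      _ = Q.factorial * ∑ k : Fin K, S.len k := by
          rw [Finset.sum_const, Finset.card_univ, Fintype.card_perm, Fintype.card_fin,
            smul_eq_mul]
  rw [Finset.sum_comm] at hsum1
  have hsn : ∀ n : Fin N, (∑ σ : Equiv.Perm (Fin Q),
      (cnt (Finset.univ.filter (fun q : Fin Q => n ∈ S.M (e q))) σ : ℝ))
      = ((Q:ℝ) - dd n) * Q.factorial / ((dd n : ℝ) + 1) := by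
    intro n
    have hp := perm_sum_s6 (Finset.univ.filter (fun q : Fin Q => n ∈ S.M (e q)))
    have hp' : ((dd n : ℝ) + 1) * ∑ σ : Equiv.Perm (Fin Q),
        (cnt (Finset.univ.filter (fun q : Fin Q => n ∈ S.M (e q))) σ : ℝ)
        = ((Q:ℝ) - dd n) * Q.factorial := by
      have hc := congrArg (Nat.cast : ℕ → ℝ) hp
      push_cast [Nat.cast_sub (hdQ n)] at hc
      rw [← Nat.cast_sub (hdQ n)]
      exact hc
    rw [eq_div_iff (by positivity)]
    linarith [hp']
  have hc' : (∑ n : Fin N, ((Q:ℝ) - dd n) * Q.factorial / ((dd n:ℝ) + 1)) * T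
      ≤ (Q.factorial : ℝ) * ∑ k : Fin K, (S.len k : ℝ) := by
    have hcast : (∑ n : Fin N, ∑ σ : Equiv.Perm (Fin Q),
        (cnt (Finset.univ.filter (fun q : Fin Q => n ∈ S.M (e q))) σ : ℝ)) * (T:ℝ)
        ≤ (Q.factorial : ℝ) * ∑ k : Fin K, (S.len k : ℝ) := by
      exact_mod_cast hsum1
    rwa [Finset.sum_congr rfl (fun n _ => hsn n)] at hcast
  have hG : (T:ℝ) * (∑ n : Fin N, ((Q:ℝ) - dd n) / ((dd n:ℝ) + 1))
      ≤ ∑ k : Fin K, (S.len k : ℝ) := by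
    have heq : (∑ n : Fin N, ((Q:ℝ) - dd n) * Q.factorial / ((dd n:ℝ)+1)) * T
        = (Q.factorial:ℝ) * ((T:ℝ) * ∑ n : Fin N, ((Q:ℝ) - dd n)/((dd n:ℝ)+1)) := by
      rw [Finset.mul_sum, Finset.mul_sum, Finset.sum_mul]
      refine Finset.sum_congr rfl (fun n _ => ?_)
      have hb : ((dd n:ℝ) + 1) ≠ 0 := by positivity
      field_simp
    rw [heq] at hc'
    exact le_of_mul_le_mul_left hc' hfac
  have hcomm : (1/(N:ℝ)) * ∑ n : Fin N, ((Q:ℝ) - dd n)/((Q:ℝ) * ((dd n:ℝ)+1))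
      ≤ commLoad S := by
    rw [commLoad, le_div_iff₀ (by positivity)]
    have heq2 : (1/(N:ℝ)) * (∑ n : Fin N, ((Q:ℝ)-dd n)/((Q:ℝ)*((dd n:ℝ)+1))) * ((Q:ℝ)*N*T)
        = (T:ℝ) * ∑ n : Fin N, ((Q:ℝ)-dd n)/((dd n:ℝ)+1) := by
      rw [Finset.mul_sum, Finset.mul_sum, Finset.sum_mul]
      refine Finset.sum_congr rfl (fun n _ => ?_)
      have hb : ((dd n:ℝ) + 1) ≠ 0 := by positivity
      field_simp
    rw [heq2]
    exact hG
  set mr : ℝ := ((⌊rbar⌋ : ℤ) : ℝ) with hmr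
  have hm0 : (0:ℝ) ≤ mr := by
    rw [hmr]
    exact_mod_cast Int.floor_nonneg.mpr hr0
  have hprod : ∀ n : Fin N, 0 ≤ ((dd n:ℝ) - mr) * ((dd n:ℝ) - mr - 1) := by
    intro n
    rcases le_or_gt ((dd n : ℤ)) ⌊rbar⌋ with hle | hlt
    · have h1 : (dd n : ℝ) - mr ≤ 0 := by
        rw [hmr, sub_nonpos]
        exact_mod_cast hle
      have h2 : (dd n : ℝ) - mr - 1 ≤ 0 := by linarith
      nlinarith [h1, h2]
    · have h1 : (1:ℝ) ≤ (dd n:ℝ) - mr := by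
        have h2 : ⌊rbar⌋ + 1 ≤ (dd n:ℤ) := hlt
        have h3 : ((⌊rbar⌋:ℤ):ℝ) + 1 ≤ (dd n:ℝ) := by exact_mod_cast h2
        rw [hmr]
        linarith
      exact mul_nonneg (by linarith) (by linarith)
  have hch : ∀ n : Fin N,
      (mr + 1 - dd n) * (((Q:ℝ) - mr)/((Q:ℝ)*(mr+1)))
        + ((dd n:ℝ) - mr) * (((Q:ℝ) - (mr+1))/((Q:ℝ)*(mr+2)))
      ≤ ((Q:ℝ) - dd n)/((Q:ℝ)*((dd n:ℝ)+1)) :=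
    fun n => chord hQ' (by positivity) hm0 (hprod n)
  have hSd : ∑ n : Fin N, (dd n:ℝ) = N * rbar := by
    rw [hrbar']
    field_simp
  have hlin : (1/(N:ℝ)) * ∑ n : Fin N,
      ((mr + 1 - dd n) * (((Q:ℝ) - mr)/((Q:ℝ)*(mr+1)))
        + ((dd n:ℝ) - mr) * (((Q:ℝ) - (mr+1))/((Q:ℝ)*(mr+2))))
      = gHat Q rbar := by
    set A := ((Q:ℝ) - mr)/((Q:ℝ)*(mr+1)) with hA
    set B := ((Q:ℝ) - (mr+1))/((Q:ℝ)*(mr+2)) with hB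
    have hterm : ∀ n ∈ (Finset.univ : Finset (Fin N)),
        (mr + 1 - (dd n:ℝ)) * A + ((dd n:ℝ) - mr) * B
        = ((mr+1)*A - mr*B) + (dd n:ℝ) * (B - A) := fun n _ => by ring
    rw [Finset.sum_congr rfl hterm, Finset.sum_add_distrib, Finset.sum_const,
      ← Finset.sum_mul, Finset.card_univ, Fintype.card_fin, hSd]
    rw [gHat, ← hmr, ← hA, ← hB]
    have hNne : (N:ℝ) ≠ 0 := ne_of_gt hN'
    field_simp
    ring
  have part3 : gHat Q rbar ≤ commLoad S := by
    calc gHat Q rbar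
        = (1/(N:ℝ)) * ∑ n : Fin N,
          ((mr + 1 - dd n) * (((Q:ℝ) - mr)/((Q:ℝ)*(mr+1)))
            + ((dd n:ℝ) - mr) * (((Q:ℝ) - (mr+1))/((Q:ℝ)*(mr+2)))) := hlin.symm
      _ ≤ (1/(N:ℝ)) * ∑ n : Fin N, ((Q:ℝ) - dd n)/((Q:ℝ)*((dd n:ℝ)+1)) :=
          mul_le_mul_of_nonneg_left (Finset.sum_le_sum (fun n _ => hch n)) (by positivity)
      _ ≤ commLoad S := hcomm
  refine ⟨hr0, hrQ, part3, ?_⟩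
  -- Part 4
  intro cm cs hcm hcs
  have hpeak : rbar ≤ (Q:ℝ) * peakLoad S := by
    rw [hrbar, hF, Finset.sum_image (fun q _ q' _ h => einj h), peakLoad]
    have hsb : ∑ q : Fin Q, ((S.M (e q)).card : ℝ)
        ≤ ∑ _q : Fin Q, ((Finset.univ.sup (fun k : Fin K => (S.M k).card) : ℕ) : ℝ) :=
      Finset.sum_le_sum (fun q _ => by
        exact_mod_cast Finset.le_sup (f := fun k : Fin K => (S.M k).card) (Finset.mem_univ (e q)))
    rw [Finset.sum_const, Finset.card_univ, Fintype.card_fin, nsmul_eq_mul] at hsb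
    calc (1/(N:ℝ)) * ∑ q : Fin Q, ((S.M (e q)).card:ℝ)
        ≤ (1/(N:ℝ)) * ((Q:ℝ) * ((Finset.univ.sup (fun k : Fin K => (S.M k).card) : ℕ) : ℝ)) :=
          mul_le_mul_of_nonneg_left hsb (by positivity)
      _ = (Q:ℝ) * (((Finset.univ.sup (fun k : Fin K => (S.M k).card) : ℕ) : ℝ)/(N:ℝ)) := by
          field_simp
  have hbdd : BddBelow ((fun x : ℝ => max (cm * x / Q) (cs * gHat Q x)) ''
      Set.Icc (0 : ℝ) (Q : ℝ)) := by
    refine ⟨0, ?_⟩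
    rintro y ⟨x, hx, rfl⟩
    exact le_trans (div_nonneg (mul_nonneg hcm.le hx.1) hQ'.le) (le_max_left _ _)
  have hmem : max (cm * rbar / Q) (cs * gHat Q rbar) ∈
      (fun x : ℝ => max (cm * x / Q) (cs * gHat Q x)) '' Set.Icc (0 : ℝ) (Q : ℝ) :=
    ⟨rbar, ⟨hr0, hrQ⟩, rfl⟩
  refine le_trans (csInf_le hbdd hmem) ?_
  apply max_le_max
  · rw [mul_div_assoc]
    refine mul_le_mul_of_nonneg_left ?_ hcm.le
    rw [div_le_iff₀ hQ']
    calc rbar ≤ (Q:ℝ) * peakLoad S := hpeak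
      _ = peakLoad S * Q := mul_comm _ _
  · exact mul_le_mul_of_nonneg_left part3 hcs.le
end
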